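/- arXiv:2303.15902 — 10 statements merged into one kernel-verified Lean document; each statement's English description precedes it below -/
import Mathlib

section
/- Let f ∈ C¹([1,∞)) with f > 0, f' > 0 on [1,∞), and lim_{r→∞} f(r) = +∞. Then for any α, ε > 0, limsup_{r→∞} f(r)^ε · ∫_r^∞ (f(s)/f'(s))^α ds = +∞. -/
open Filter MeasureTheory Set
open scoped ENNReal

private lemma aux_ftc_log 
(f f' : ℝ → ℝ)
    (hderiv : ∀ x ∈ Ici (1:ℝ), HasDerivAt f (f' x) x)
    (hf'cont : ContinuousOn f' (Ici (1:ℝ)))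
    (hfpos : ∀ x ∈ Ici (1:ℝ), 0 < f x)
    (r t : ℝ) (hr : 1 ≤ r) (hrt : r ≤ t) :
    ∫ s in r..t, f' s / f s = Real.log (f t) - Real.log (f r) := by
  have hsub : uIcc r t ⊆ Ici (1:ℝ) := by
    rw [uIcc_of_le hrt]
    exact fun x hx => le_trans hr hx.1
  have hcf : ContinuousOn f (Ici (1:ℝ)) := fun x hx =>
    ((hderiv x hx).continuousAt).continuousWithinAt
  have hint : IntervalIntegrable (fun s => f' s / f s) volume r t := by
    apply ContinuousOn.intervalIntegrable
    exact ((hf'cont.mono hsub).div (hcf.mono hsub)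
      (fun x hx => (hfpos x (hsub hx)).ne'))
  have := intervalIntegral.integral_eq_sub_of_hasDerivAt (f := fun y => Real.log (f y))
    (f' := fun s => f' s / f s) (a := r) (b := t) ?_ hint
  · exact this
  · intro x hx
    have h1 := (Real.hasDerivAt_log (hfpos x (hsub hx)).ne').comp x (hderiv x (hsub hx))
    simpa [div_eq_inv_mul, Function.comp_def] using h1

private lemma aux_holder_key (f f' : ℝ → ℝ)
    (hderiv : ∀ x ∈ Ici (1:ℝ), HasDerivAt f (f' x) x)
    (hf'cont : ContinuousOn f' (Ici (1:ℝ)))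
    (hfpos : ∀ x ∈ Ici (1:ℝ), 0 < f x)
    (hf'pos : ∀ x ∈ Ici (1:ℝ), 0 < f' x)
    (α : ℝ) (hα : 0 < α) (r t : ℝ) (hr : 1 ≤ r) (hrt : r ≤ t) :
    ENNReal.ofReal ((t - r) ^ (1+α)) ≤
      (∫⁻ s in Ioc r t, ENNReal.ofReal ((f s / f' s) ^ α)) *
        ENNReal.ofReal ((Real.log (f t) - Real.log (f r)) ^ α) := by
  have hftc : ∫ s in r..t, f' s / f s = Real.log (f t) - Real.log (f r) :=
    aux_ftc_log f f' hderiv hf'cont hfpos r t hr hrt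
  have hsub : Ioc r t ⊆ Ici (1:ℝ) := fun x hx => le_trans hr hx.1.le
  have hcf : ContinuousOn f (Ici (1:ℝ)) := fun x hx =>
    ((hderiv x hx).continuousAt).continuousWithinAt
  set c : ℝ := α / (1 + α) with hc
  have h1α : (0:ℝ) < 1 + α := by linarith
  have hc0 : 0 ≤ c := by positivity
  set p : ℝ := 1 + α with hp
  set q : ℝ := (1 + α) / α with hq
  have hpq : p.HolderConjugate q := by
    rw [Real.holderConjugate_iff]
    constructor
    · linarith
    · show p⁻¹ + q⁻¹ = 1
      rw [← one_div, ← one_div]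
      rw [hp, hq, one_div_div, ← add_div, add_comm]
      exact div_self (by positivity)
  set F : ℝ → ℝ≥0∞ := fun s => ENNReal.ofReal ((f s / f' s) ^ c) with hF
  set G : ℝ → ℝ≥0∞ := fun s => ENNReal.ofReal ((f' s / f s) ^ c) with hG
  set μ : Measure ℝ := volume.restrict (Ioc r t) with hμ
  have hmeasF : AEMeasurable F μ := by
    have h1 : ContinuousOn (fun s => f s / f' s) (Ioc r t) :=
      (hcf.mono hsub).div (hf'cont.mono hsub) (fun x hx => (hf'pos x (hsub hx)).ne')
    have h2 : ContinuousOn (fun s => (f s / f' s) ^ c) (Ioc r t) :=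
      h1.rpow_const (fun x hx => Or.inr hc0)
    exact (ENNReal.continuous_ofReal.comp_continuousOn h2).aemeasurable measurableSet_Ioc
  have hmeasG : AEMeasurable G μ := by
    have h1 : ContinuousOn (fun s => f' s / f s) (Ioc r t) :=
      (hf'cont.mono hsub).div (hcf.mono hsub) (fun x hx => (hfpos x (hsub hx)).ne')
    have h2 : ContinuousOn (fun s => (f' s / f s) ^ c) (Ioc r t) :=
      h1.rpow_const (fun x hx => Or.inr hc0)
    exact (ENNReal.continuous_ofReal.comp_continuousOn h2).aemeasurable measurableSet_Ioc
  have holder := ENNReal.lintegral_mul_le_Lp_mul_Lq μ hpq hmeasF hmeasG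
  -- LHS of holder equals ofReal (t - r)
  have hFG : ∫⁻ a, (F * G) a ∂μ = ENNReal.ofReal (t - r) := by
    have heq : ∀ s ∈ Ioc r t, (F * G) s = 1 := by
      intro s hs
      have hfs := hfpos s (hsub hs)
      have hf's := hf'pos s (hsub hs)
      have : (f s / f' s) ^ c * (f' s / f s) ^ c = 1 := by
        rw [← Real.mul_rpow (by positivity) (by positivity)]
        rw [div_mul_div_comm]
        rw [mul_comm (f s)]
        rw [div_self (by positivity)]
        exact Real.one_rpow c
      simp only [Pi.mul_apply, hF, hG]
      rw [← ENNReal.ofReal_mul (by positivity), this, ENNReal.ofReal_one]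
    rw [hμ, setLIntegral_congr_fun measurableSet_Ioc
      heq]
    simp [Real.volume_Ioc]
  -- ∫ F^p
  have hFp : ∫⁻ a, F a ^ p ∂μ = ∫⁻ s in Ioc r t, ENNReal.ofReal ((f s / f' s) ^ α) := by
    rw [hμ]
    apply setLIntegral_congr_fun measurableSet_Ioc
    intro s hs
    have hfs := hfpos s (hsub hs)
    have hf's := hf'pos s (hsub hs)
    have hb : (0:ℝ) ≤ f s / f' s := by positivity
    rw [hF]
    beta_reduce
    rw [ENNReal.ofReal_rpow_of_nonneg (Real.rpow_nonneg hb c) (by linarith : (0:ℝ) ≤ p)]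
    rw [← Real.rpow_mul hb]
    congr 2
    rw [hc]
    field_simp
  -- ∫ G^q
  have hαne : α ≠ 0 := hα.ne'
  have h1αne : (1:ℝ) + α ≠ 0 := by positivity
  have hLnn : 0 ≤ Real.log (f t) - Real.log (f r) := by
    rw [← hftc]
    apply intervalIntegral.integral_nonneg hrt
    intro x hx
    have hx1 : x ∈ Ici (1:ℝ) := le_trans hr hx.1
    have := hfpos x hx1
    have := hf'pos x hx1
    positivity
  have hGq : ∫⁻ a, G a ^ q ∂μ = ENNReal.ofReal (Real.log (f t) - Real.log (f r)) := by
    have hq0 : (0:ℝ) ≤ q := by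
      rw [hq]; positivity
    have step1 : ∫⁻ a, G a ^ q ∂μ = ∫⁻ s in Ioc r t, ENNReal.ofReal (f' s / f s) := by
      rw [hμ]
      apply setLIntegral_congr_fun measurableSet_Ioc ?_
      intro s hs
      have hfs := hfpos s (hsub hs)
      have hf's := hf'pos s (hsub hs)
      have hb : (0:ℝ) ≤ f' s / f s := by positivity
      rw [hG]
      beta_reduce
      rw [ENNReal.ofReal_rpow_of_nonneg (Real.rpow_nonneg hb c) hq0]
      rw [← Real.rpow_mul hb]
      have hcq : c * q = 1 := by
        rw [hc, hp, hq]; field_simp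
      rw [hcq, Real.rpow_one]
    rw [step1]
    have hsub2 : Icc r t ⊆ Ici (1:ℝ) := fun x hx => le_trans hr hx.1
    have hcont : ContinuousOn (fun s => f' s / f s) (Icc r t) :=
      (hf'cont.mono hsub2).div (hcf.mono hsub2) (fun x hx => (hfpos x (hsub2 hx)).ne')
    have hint : IntegrableOn (fun s => f' s / f s) (Ioc r t) volume :=
      (hcont.integrableOn_Icc).mono_set Ioc_subset_Icc_self
    rw [← MeasureTheory.ofReal_integral_eq_lintegral_ofReal hint ?_]
    · rw [← hftc, intervalIntegral.integral_of_le hrt]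
    · filter_upwards [ae_restrict_mem measurableSet_Ioc] with s hs
      have hfs := hfpos s (hsub hs)
      have hf's := hf'pos s (hsub hs)
      positivity
  -- combine
  have hp0 : (0:ℝ) ≤ p := by linarith
  calc ENNReal.ofReal ((t - r) ^ (1+α)) = (ENNReal.ofReal (t - r)) ^ p := by
        rw [ENNReal.ofReal_rpow_of_nonneg (by linarith) hp0, hp]
    _ ≤ ((∫⁻ a, F a ^ p ∂μ) ^ (1/p) * (∫⁻ a, G a ^ q ∂μ) ^ (1/q)) ^ p := by
        apply ENNReal.rpow_le_rpow _ hp0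
        rw [← hFG]; exact holder
    _ = (∫⁻ a, F a ^ p ∂μ) * (∫⁻ a, G a ^ q ∂μ) ^ α := by
        rw [ENNReal.mul_rpow_of_nonneg _ _ hp0, ← ENNReal.rpow_mul, ← ENNReal.rpow_mul]
        have e1 : 1/p * p = 1 := by field_simp
        have e2 : 1/q * p = α := by rw [hq, hp]; field_simp
        rw [e1, e2, ENNReal.rpow_one]
    _ = (∫⁻ s in Ioc r t, ENNReal.ofReal ((f s / f' s) ^ α)) *
        ENNReal.ofReal ((Real.log (f t) - Real.log (f r)) ^ α) := by
        rw [hFp, hGq, ENNReal.ofReal_rpow_of_nonneg hLnn hα.le]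


/-- If `f ∈ C¹([1,∞))` with `f > 0`, `f' > 0` and `f → ∞`, then for any `α, ε > 0`,
`limsup_{r→∞} f(r)^ε ∫_r^∞ (f/f')^α ds = +∞`. -/
theorem limsup_rpow_mul_integral_eq_top
    (f f' : ℝ → ℝ)
    (hderiv : ∀ x ∈ Ici (1:ℝ), HasDerivAt f (f' x) x)
    (hf'cont : ContinuousOn f' (Ici (1:ℝ)))
    (hfpos : ∀ x ∈ Ici (1:ℝ), 0 < f x)
    (hf'pos : ∀ x ∈ Ici (1:ℝ), 0 < f' x)
    (htop : Tendsto f atTop atTop)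
    (α ε : ℝ) (hα : 0 < α) (hε : 0 < ε) :
    Filter.limsup
      (fun r : ℝ =>
        ENNReal.ofReal (f r ^ ε) *
          ∫⁻ s in Ioi r, ENNReal.ofReal ((f s / f' s) ^ α))
      atTop = ⊤ := by
  have hkey : ∀ r t : ℝ, 1 ≤ r → r ≤ t →
      ENNReal.ofReal ((t - r) ^ (1+α)) ≤
        (∫⁻ s in Ioc r t, ENNReal.ofReal ((f s / f' s) ^ α)) *
          ENNReal.ofReal ((Real.log (f t) - Real.log (f r)) ^ α) :=
    fun r t hr hrt => aux_holder_key f f' hderiv hf'cont hfpos hf'pos α hα r t hr hrt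
  by_contra hcon
  have hcf : ContinuousOn f (Ici (1:ℝ)) := fun x hx =>
    ((hderiv x hx).continuousAt).continuousWithinAt
  have hmono : MonotoneOn f (Ici (1:ℝ)) := by
    apply (strictMonoOn_of_deriv_pos (convex_Ici 1) hcf ?_).monotoneOn
    intro x hx
    rw [interior_Ici] at hx
    rw [(hderiv x (mem_Ici.mpr (le_of_lt hx))).deriv]
    exact hf'pos x (mem_Ici.mpr (le_of_lt hx))
  have hlt : Filter.limsup
      (fun r : ℝ =>
        ENNReal.ofReal (f r ^ ε) *
          ∫⁻ s in Ioi r, ENNReal.ofReal ((f s / f' s) ^ α)) atTop < ⊤ :=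
    lt_top_iff_ne_top.mpr hcon
  obtain ⟨b, hb1, hb2⟩ := exists_between hlt
  have hev := Filter.eventually_lt_of_limsup_lt hb1
  rw [Filter.eventually_atTop] at hev
  obtain ⟨R0, hR0⟩ := hev
  set R : ℝ := max R0 1 with hRdef
  have hR1 : (1:ℝ) ≤ R := le_max_right _ _
  set C : ℝ := b.toReal + 1 with hCdef
  have hC1 : (1:ℝ) ≤ C := by
    have : 0 ≤ b.toReal := ENNReal.toReal_nonneg
    linarith
  have hC0 : (0:ℝ) < C := by linarith
  have hbC : b ≤ ENNReal.ofReal C := by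
    rw [← ENNReal.ofReal_toReal hb2.ne]
    exact ENNReal.ofReal_le_ofReal (by linarith)
  set I : ℝ → ℝ≥0∞ := fun r => ∫⁻ s in Ioi r, ENNReal.ofReal ((f s / f' s) ^ α) with hIdef
  have hIbound : ∀ r, R ≤ r → ENNReal.ofReal (f r ^ ε) * I r ≤ ENNReal.ofReal C := by
    intro r hr
    exact le_trans (hR0 r (le_trans (le_max_left _ _) hr)).le hbC
  have hfRpos : ∀ r, R ≤ r → 0 < f r := fun r hr => hfpos r (le_trans hR1 hr)
  have hIne : ∀ r, R ≤ r → I r ≠ ⊤ := by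
    intro r hr hItop
    have h1 : ENNReal.ofReal (f r ^ ε) ≠ 0 := by
      simp only [ne_eq, ENNReal.ofReal_eq_zero, not_le]
      exact Real.rpow_pos_of_pos (hfRpos r hr) ε
    have h2 := hIbound r hr
    rw [hItop, ENNReal.mul_top h1] at h2
    exact (lt_irrefl ⊤ (lt_of_le_of_lt h2 ENNReal.ofReal_lt_top)).elim
  have hIreal : ∀ r, R ≤ r → f r ^ ε * (I r).toReal ≤ C := by
    intro r hr
    have h := ENNReal.toReal_mono ENNReal.ofReal_ne_top (hIbound r hr)
    rw [ENNReal.toReal_mul, ENNReal.toReal_ofReal (Real.rpow_nonneg (hfRpos r hr).le ε),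
      ENNReal.toReal_ofReal hC0.le] at h
    exact h
  set hh : ℝ → ℝ := fun r => (ε/α) * Real.log (f r) with hhdef
  set β : ℝ := (1+α)/α with hβdef
  have hβ0 : 0 < β := by rw [hβdef]; positivity
  have hεα : 0 < ε/α := by positivity
  set c₀ : ℝ := (ε/α) / C ^ (1/α) with hc₀def
  have hCrpos : (0:ℝ) < C ^ (1/α) := Real.rpow_pos_of_pos hC0 _
  have hc₀ : 0 < c₀ := by rw [hc₀def]; positivity
  have key : ∀ r t : ℝ, R ≤ r → r ≤ t →
      hh r + c₀ * (t - r)^β * Real.exp (hh r) ≤ hh t := by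
    intro r t hr hrt
    have hr1 : (1:ℝ) ≤ r := le_trans hR1 hr
    have ht1 : (1:ℝ) ≤ t := le_trans hr1 hrt
    have htr : (0:ℝ) ≤ t - r := by linarith
    have hL : 0 ≤ Real.log (f t) - Real.log (f r) := by
      have h1 := hmono hr1 ht1 hrt
      have h2 := Real.log_le_log (hfpos r hr1) h1
      linarith
    have h1 := hkey r t hr1 hrt
    have h2 : (∫⁻ s in Ioc r t, ENNReal.ofReal ((f s / f' s) ^ α)) ≤ I r :=
      lintegral_mono_set Ioc_subset_Ioi_self
    have h3 : ENNReal.ofReal ((t - r) ^ (1+α)) ≤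
        ENNReal.ofReal ((I r).toReal * (Real.log (f t) - Real.log (f r)) ^ α) := by
      refine le_trans h1 ?_
      rw [ENNReal.ofReal_mul ENNReal.toReal_nonneg, ENNReal.ofReal_toReal (hIne r hr)]
      exact mul_le_mul_left h2 _
    have h4 : (t - r) ^ (1+α) ≤ (I r).toReal * (Real.log (f t) - Real.log (f r)) ^ α := by
      have hnn : 0 ≤ (I r).toReal * (Real.log (f t) - Real.log (f r)) ^ α :=
        mul_nonneg ENNReal.toReal_nonneg (Real.rpow_nonneg hL _)
      exact (ENNReal.ofReal_le_ofReal_iff hnn).mp h3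
    have hfre : 0 < f r ^ ε := Real.rpow_pos_of_pos (hfRpos r hr) ε
    have h5 : (I r).toReal ≤ C / f r ^ ε := by
      rw [le_div_iff₀ hfre, mul_comm]
      exact hIreal r hr
    have h6 : (t - r) ^ (1+α) ≤ (C / f r ^ ε) * (Real.log (f t) - Real.log (f r)) ^ α :=
      le_trans h4 (mul_le_mul_of_nonneg_right h5 (Real.rpow_nonneg hL _))
    have h7 : f r ^ ε / C * (t - r) ^ (1+α) ≤ (Real.log (f t) - Real.log (f r)) ^ α := by
      have hpos : 0 < f r ^ ε / C := by positivity
      calc f r ^ ε / C * (t - r) ^ (1+α)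
          ≤ f r ^ ε / C * ((C / f r ^ ε) * (Real.log (f t) - Real.log (f r)) ^ α) :=
            mul_le_mul_of_nonneg_left h6 hpos.le
        _ = (Real.log (f t) - Real.log (f r)) ^ α := by
            field_simp
    have hXnn : 0 ≤ f r ^ ε / C * (t - r) ^ (1+α) := by positivity
    have h8 : (f r ^ ε / C * (t - r) ^ (1+α)) ^ (1/α) ≤ Real.log (f t) - Real.log (f r) := by
      have h := Real.rpow_le_rpow hXnn h7 (by positivity : (0:ℝ) ≤ 1/α)
      rwa [← Real.rpow_mul hL, mul_one_div, div_self hα.ne', Real.rpow_one] at h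
    have h9 : (f r ^ ε / C * (t - r) ^ (1+α)) ^ (1/α)
        = Real.exp ((ε/α) * Real.log (f r)) / C ^ (1/α) * (t - r) ^ β := by
      rw [Real.mul_rpow (by positivity) (Real.rpow_nonneg htr _),
        Real.div_rpow (Real.rpow_nonneg (hfpos r hr1).le _) hC0.le,
        ← Real.rpow_mul htr, ← Real.rpow_mul (hfpos r hr1).le,
        mul_one_div, mul_one_div, Real.rpow_def_of_pos (hfpos r hr1),
        mul_comm (Real.log (f r)), hβdef]
    rw [h9] at h8
    have h10 := mul_le_mul_of_nonneg_left h8 hεα.le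
    have h11 : ε/α/C^(1/α) * (t-r)^β * Real.exp (ε/α * Real.log (f r))
        = ε/α * (Real.exp (ε/α * Real.log (f r)) / C^(1/α) * (t-r)^β) := by ring
    simp only [hhdef, hc₀def]
    linarith [h10, h11]
  -- the iteration
  set step : ℝ → ℝ := fun x => (1 / (c₀ * Real.exp (hh x))) ^ (1/β) with hstepdef
  have hstep_pos : ∀ x, 0 < step x := by
    intro x
    apply Real.rpow_pos_of_pos
    positivity
  have hstep_eq : ∀ x, c₀ * (step x)^β * Real.exp (hh x) = 1 := by
    intro x
    have hb0 : (0:ℝ) < 1 / (c₀ * Real.exp (hh x)) := by positivity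
    rw [hstepdef]
    simp only
    rw [← Real.rpow_mul hb0.le, one_div_mul_cancel hβ0.ne', Real.rpow_one]
    field_simp
  have key2 : ∀ x, R ≤ x → hh x + 1 ≤ hh (x + step x) := by
    intro x hx
    have h := key x (x + step x) hx (by linarith [hstep_pos x])
    rwa [add_sub_cancel_left, hstep_eq x] at h
  set seq : ℕ → ℝ := fun n => Nat.rec R (fun _ y => y + step y) n with hseqdef
  have hseqS : ∀ n, seq (n+1) = seq n + step (seq n) := fun n => rfl
  have hseqR : ∀ n, R ≤ seq n := by
    intro n
    induction n with
    | zero => exact le_refl R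
    | succ n ih =>
      rw [hseqS]
      have := hstep_pos (seq n)
      linarith
  have hseqh : ∀ n : ℕ, hh R + n ≤ hh (seq n) := by
    intro n
    induction n with
    | zero =>
      have h0 : seq 0 = R := rfl
      rw [h0]
      simp
    | succ n ih =>
      have h := key2 (seq n) (hseqR n)
      rw [← hseqS] at h
      push_cast
      linarith
  set qq : ℝ := Real.exp (-(1/β)) with hqqdef
  have hqq0 : 0 < qq := Real.exp_pos _
  have hqq1 : qq < 1 := by
    rw [hqqdef]
    apply Real.exp_lt_one_iff.mpr
    simp only [neg_lt, neg_zero]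
    positivity
  set D : ℝ := (1 / (c₀ * Real.exp (hh R))) ^ (1/β) with hDdef
  have hD0 : 0 < D := Real.rpow_pos_of_pos (by positivity) _
  have hstep_le : ∀ n : ℕ, step (seq n) ≤ D * qq^n := by
    intro n
    have h1 : (0:ℝ) < c₀ * Real.exp (hh R + n) := by positivity
    have hmono' : 1 / (c₀ * Real.exp (hh (seq n))) ≤ 1 / (c₀ * Real.exp (hh R + n)) := by
      apply one_div_le_one_div_of_le h1
      have h2 := Real.exp_le_exp.mpr (hseqh n)
      nlinarith [hc₀]
    have h2 : step (seq n) ≤ (1 / (c₀ * Real.exp (hh R + n))) ^ (1/β) := by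
      rw [hstepdef]
      exact Real.rpow_le_rpow (by positivity) hmono' (by positivity)
    refine le_trans h2 ?_
    have heq : 1 / (c₀ * Real.exp (hh R + n)) = (1 / (c₀ * Real.exp (hh R))) * Real.exp (-(n:ℝ)) := by
      rw [Real.exp_add, Real.exp_neg]
      field_simp
    rw [heq, Real.mul_rpow (by positivity) (Real.exp_nonneg _)]
    have h3 : (Real.exp (-(n:ℝ))) ^ ((1:ℝ)/β) = qq ^ n := by
      rw [Real.rpow_def_of_pos (Real.exp_pos _), Real.log_exp, hqqdef,
        ← Real.exp_nat_mul]
      congr 1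
      ring
    rw [h3, hDdef]
  set T : ℝ := R + D / (1 - qq) with hTdef
  have hseqle : ∀ n : ℕ, seq n ≤ T - D * qq^n / (1 - qq) := by
    intro n
    induction n with
    | zero =>
      have h0 : seq 0 = R := rfl
      rw [h0, hTdef, pow_zero]
      have : D * 1 / (1 - qq) = D / (1 - qq) := by ring
      rw [this]
      linarith
    | succ n ih =>
      rw [hseqS]
      have h1 := hstep_le n
      have hne : (1:ℝ) - qq ≠ 0 := ne_of_gt (by linarith)
      have h2 : D * qq^n / (1-qq) - D * qq^(n+1) / (1-qq) = D * qq^n := by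
        field_simp
        ring
      linarith
  have hseqT : ∀ n, seq n ≤ T := by
    intro n
    have h1 := hseqle n
    have hnn : 0 ≤ D * qq^n / (1-qq) :=
      div_nonneg (by positivity) (by linarith)
    exact le_trans h1 (sub_le_self T hnn)
  have hhmono : ∀ a b2 : ℝ, 1 ≤ a → a ≤ b2 → hh a ≤ hh b2 := by
    intro a b2 ha hab
    have h1 := hmono ha (le_trans ha hab) hab
    have h2 := Real.log_le_log (hfpos a ha) h1
    simp only [hhdef]
    nlinarith [hεα]
  set N : ℕ := ⌈hh T - hh R⌉₊ + 1 with hNdef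
  have h1 := hseqh N
  have h2 := hhmono (seq N) T (le_trans hR1 (hseqR N)) (hseqT N)
  have h3 : (hh T - hh R) ≤ (⌈hh T - hh R⌉₊ : ℝ) := Nat.le_ceil _
  have h4 : (N:ℝ) = (⌈hh T - hh R⌉₊ : ℝ) + 1 := by
    rw [hNdef]
    push_cast
    ring
  linarith
end

section
/- Let g : [T,∞) → ℝ be C¹ with g' > 0, and suppose g is surjective onto [1,∞) (equivalently g(T)=1 and g(t) → ∞). If there exist constants C > 0, α > 0, ε > 0 such that t^{α+ε} ∫_t^∞ (g'(τ))^{α+1} dτ ≤ C for all t ≥ T, then by Hölder's inequality ∫_t^{2t} g'(τ) dτ ≤ C^{1/(α+1)} t^{-ε/(α+1)} for all t ≥ T, and consequently ∫_T^∞ g'(τ) dτ < ∞, contradicting surjectivity of g onto [1,∞). Hence no such constant C exists. -/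
open Filter MeasureTheory Set

/-- If `g : [T,∞) → [1,∞)` is a C¹ increasing surjection onto `[1,∞)`, then there is no
constant `C > 0` with `t^(α+ε) ∫_t^∞ (g'(τ))^(α+1) dτ ≤ C` for all `t ≥ T`. -/
theorem no_uniform_bound_for_surjective_antiderivative
    (T : ℝ) (hT : 1 ≤ T) (g g' : ℝ → ℝ)
    (hderiv : ∀ x ∈ Ici T, HasDerivAt g (g' x) x)
    (hg'cont : ContinuousOn g' (Ici T))
    (hg'pos : ∀ x ∈ Ici T, 0 < g' x)
    (hsurj : g '' (Ici T) = Ici (1:ℝ))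
    (α ε : ℝ) (hα : 0 < α) (hε : 0 < ε) :
    ¬ ∃ C : ℝ, 0 < C ∧ ∀ t ≥ T,
        ENNReal.ofReal (t ^ (α + ε)) *
            ∫⁻ τ in Ioi t, ENNReal.ofReal (g' τ ^ (α + 1)) ≤
          ENNReal.ofReal C := by
  rintro ⟨C, hC, hbound⟩
  have hT0 : (0:ℝ) < T := lt_of_lt_of_le one_pos hT
  set p : ℝ := α + 1 with hp_def
  have hp1 : 1 < p := by simp [hp_def]; linarith
  have hp0 : 0 < p := by linarith
  -- FTC
  have ftc : ∀ x y, T ≤ x → x ≤ y → g y - g x = ∫ τ in x..y, g' τ := by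
    intro x y hx hxy
    have hsub : Set.uIcc x y ⊆ Ici T := by
      rw [uIcc_of_le hxy]
      exact fun z hz => le_trans hx hz.1
    exact (intervalIntegral.integral_eq_sub_of_hasDerivAt
      (fun z hz => hderiv z (hsub hz)) ((hg'cont.mono hsub).intervalIntegrable)).symm
  have hmono : ∀ x y, T ≤ x → x ≤ y → g x ≤ g y := by
    intro x y hx hxy
    have h := ftc x y hx hxy
    have h2 : 0 ≤ ∫ τ in x..y, g' τ :=
      intervalIntegral.integral_nonneg hxy (fun u hu => (hg'pos u (le_trans hx hu.1)).le)
    linarith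
  -- key estimate from Hölder
  have key : ∀ t, T ≤ t → g (2*t) - g t ≤ C ^ (1/p) * t ^ (-(ε/p)) := by
    intro t ht
    have ht0 : (0:ℝ) < t := lt_of_lt_of_le hT0 ht
    have h2t : t ≤ 2 * t := by linarith
    have hIoc_sub : Ioc t (2*t) ⊆ Ici T := fun z hz => le_trans ht hz.1.le
    have heq : g (2*t) - g t
        = (∫⁻ τ in Ioc t (2*t), ENNReal.ofReal (g' τ)).toReal := by
      rw [ftc t (2*t) ht h2t, intervalIntegral.integral_of_le h2t]
      exact integral_eq_lintegral_of_nonneg_ae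
        ((ae_restrict_iff' measurableSet_Ioc).2
          (Filter.Eventually.of_forall (fun x hx => (hg'pos x (hIoc_sub hx)).le)))
        ((hg'cont.mono hIoc_sub).aestronglyMeasurable measurableSet_Ioc)
    set q : ℝ := p / α with hq_def
    have hq0 : 0 < q := div_pos hp0 hα
    have hpq : p.HolderConjugate q := by
      rw [Real.holderConjugate_iff]
      refine ⟨hp1, ?_⟩
      rw [hq_def, hp_def]
      field_simp
      ring
    have hf_aem : AEMeasurable (fun τ => ENNReal.ofReal (g' τ))
        (volume.restrict (Ioc t (2*t))) :=
      ENNReal.measurable_ofReal.comp_aemeasurable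
        ((hg'cont.mono hIoc_sub).aemeasurable measurableSet_Ioc)
    have holder := ENNReal.lintegral_mul_le_Lp_mul_Lq (volume.restrict (Ioc t (2*t)))
      hpq hf_aem aemeasurable_const (g := fun _ => (1:ENNReal))
    simp only [Pi.mul_apply, mul_one, ENNReal.one_rpow, lintegral_one,
      Measure.restrict_apply_univ] at holder
    rw [Real.volume_Ioc] at holder
    have h2tt : 2 * t - t = t := by ring
    rw [h2tt] at holder
    -- identify the p-integral with ofReal of the power
    have hcongr : ∫⁻ τ in Ioc t (2*t), ENNReal.ofReal (g' τ) ^ p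
        = ∫⁻ τ in Ioc t (2*t), ENNReal.ofReal (g' τ ^ p) := by
      refine setLIntegral_congr_fun measurableSet_Ioc
        (fun x hx => ?_)
      exact ENNReal.ofReal_rpow_of_pos (hg'pos x (hIoc_sub hx))
    rw [hcongr] at holder
    have hIle : ∫⁻ τ in Ioc t (2*t), ENNReal.ofReal (g' τ ^ p)
        ≤ ∫⁻ τ in Ioi t, ENNReal.ofReal (g' τ ^ p) :=
      lintegral_mono_set Ioc_subset_Ioi_self
    have htpow : (0:ℝ) < t ^ (α + ε) := Real.rpow_pos_of_pos ht0 _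
    have hI2 : ∫⁻ τ in Ioi t, ENNReal.ofReal (g' τ ^ p)
        ≤ ENNReal.ofReal (C / t ^ (α + ε)) := by
      rw [ENNReal.ofReal_div_of_pos htpow,
        ENNReal.le_div_iff_mul_le (Or.inl (ENNReal.ofReal_pos.2 htpow).ne')
          (Or.inl ENNReal.ofReal_ne_top), mul_comm]
      exact hbound t ht
    have hL : ∫⁻ τ in Ioc t (2*t), ENNReal.ofReal (g' τ)
        ≤ ENNReal.ofReal (C ^ (1/p) * t ^ (-(ε/p))) := by
      calc ∫⁻ τ in Ioc t (2*t), ENNReal.ofReal (g' τ)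
          ≤ (∫⁻ τ in Ioc t (2*t), ENNReal.ofReal (g' τ ^ p)) ^ (1/p)
              * (ENNReal.ofReal t) ^ (1/q) := holder
        _ ≤ (ENNReal.ofReal (C / t ^ (α + ε))) ^ (1/p) * (ENNReal.ofReal t) ^ (1/q) := by
            gcongr
            exact le_trans hIle hI2
        _ = ENNReal.ofReal ((C / t ^ (α + ε)) ^ (1/p) * t ^ (1/q)) := by
            rw [ENNReal.ofReal_rpow_of_pos (div_pos hC htpow),
              ENNReal.ofReal_rpow_of_pos ht0,
              ← ENNReal.ofReal_mul (by positivity)]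
        _ = ENNReal.ofReal (C ^ (1/p) * t ^ (-(ε/p))) := by
            congr 1
            rw [Real.div_rpow hC.le htpow.le, ← Real.rpow_mul ht0.le,
              div_mul_eq_mul_div, mul_div_assoc, ← Real.rpow_sub ht0]
            congr 1
            rw [hq_def, one_div_div]
            field_simp
            congr 1
            ring
    rw [heq]
    exact ENNReal.toReal_le_of_le_ofReal (by positivity) hL
  -- dyadic summation
  set δ : ℝ := ε / p with hδ_def
  have hδ : 0 < δ := div_pos hε hp0
  set r : ℝ := 2 ^ (-δ) with hr_def
  have hr0 : 0 < r := Real.rpow_pos_of_pos two_pos _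
  have hr1 : r < 1 := Real.rpow_lt_one_of_one_lt_of_neg one_lt_two (neg_neg_of_pos hδ)
  set K : ℝ := C ^ (1/p) * T ^ (-δ) with hK_def
  have hK : 0 ≤ K := by positivity
  have hKr : ∀ n : ℕ, C ^ (1/p) * ((2:ℝ)^n * T) ^ (-δ) = K * r ^ n := by
    intro n
    rw [Real.mul_rpow (by positivity) hT0.le, hK_def, hr_def,
      ← Real.rpow_natCast ((2:ℝ) ^ (-δ)) n,
      ← Real.rpow_natCast (2:ℝ) n,
      ← Real.rpow_mul (by norm_num : (0:ℝ) ≤ 2),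
      ← Real.rpow_mul (by norm_num : (0:ℝ) ≤ 2),
      mul_comm ((n:ℝ)) (-δ)]
    ring
  have step : ∀ n : ℕ, g (2^n * T) ≤ g T + K * ∑ k ∈ Finset.range n, r ^ k := by
    intro n
    induction n with
    | zero => simp
    | succ n ih =>
      have h1 : (1:ℝ) ≤ 2^n := one_le_pow₀ one_le_two
      have hTn : T ≤ 2^n * T := le_mul_of_one_le_left hT0.le h1
      have h2 := key (2^n * T) hTn
      have heq2 : (2:ℝ)^(n+1) * T = 2 * (2^n * T) := by ring
      rw [heq2, Finset.sum_range_succ, mul_add]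
      have := hKr n
      nlinarith [h2, ih]
  have hsum : ∀ n : ℕ, ∑ k ∈ Finset.range n, r^k ≤ (1-r)⁻¹ := by
    intro n
    calc ∑ k ∈ Finset.range n, r^k
        ≤ ∑' k : ℕ, r^k := (summable_geometric_of_lt_one hr0.le hr1).sum_le_tsum _
          (fun i _ => pow_nonneg hr0.le i)
      _ = (1-r)⁻¹ := tsum_geometric_of_lt_one hr0.le hr1
  set B : ℝ := g T + K * (1-r)⁻¹ with hB_def
  have bound : ∀ x, T ≤ x → g x ≤ B := by
    intro x hx
    obtain ⟨n, hn⟩ := pow_unbounded_of_one_lt (x / T) one_lt_two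
    rw [div_lt_iff₀ hT0] at hn
    have hxn : x ≤ 2^n * T := hn.le
    have hmx := hmono x (2^n*T) hx hxn
    have hs := hsum n
    have := step n
    have hmul := mul_le_mul_of_nonneg_left hs hK
    rw [hB_def]
    linarith
  -- contradiction with surjectivity
  have hmem : (max B 0 + 1) ∈ Ici (1:ℝ) := by
    simp only [mem_Ici]
    have := le_max_right B 0
    linarith
  rw [← hsurj] at hmem
  obtain ⟨x, hx, hgx⟩ := hmem
  have h1 := bound x hx
  have h2 := le_max_left B 0
  rw [hgx] at h1
  linarith
end

section
/- Let ψ : [0,∞) → ℝ be C¹, positive on (0,∞), with ψ(0)=0, ψ'(0)=1, and define Θ(r) = ψ(r)^{1-n} ∫_0^r ψ(s)^{n-1} ds. Suppose Θ ∉ L¹(0,∞). Let (u,v) be a globally positive radial solution of the system ψ^{n-1}u' (r) = -∫_0^r v^q ψ^{n-1} ds, ψ^{n-1}v'(r) = -∫_0^r u^p ψ^{n-1} ds, with p,q > 0, and suppose u is decreasing with limit ℓ_u ≥ 0 and v is decreasing with limit ℓ_v ≥ 0 at infinity. Then ℓ_u = ℓ_v = 0. -/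
open Filter MeasureTheory Set intervalIntegral

private lemma psi_near_zero (ψ : ℝ → ℝ) (hψ0 : ψ 0 = 0) (hψ'0 : HasDerivAt ψ 1 0) :
    ∃ δ > (0:ℝ), δ ≤ 1 ∧ ∀ r, 0 < r → r ≤ δ → r/2 ≤ ψ r ∧ ψ r ≤ 2*r := by
  have h := hasDerivAt_iff_tendsto_slope.mp hψ'0
  have h2 : ∀ᶠ r in nhdsWithin (0:ℝ) {(0:ℝ)}ᶜ, slope ψ 0 r ∈ Ioo (1/2 : ℝ) 2 :=
    h (Ioo_mem_nhds (by norm_num) (by norm_num))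
  rw [eventually_nhdsWithin_iff, Metric.eventually_nhds_iff] at h2
  obtain ⟨ε, hε, hball⟩ := h2
  refine ⟨min (ε/2) 1, by positivity, min_le_right _ _, ?_⟩
  intro r hr hrδ
  have hrε : dist r 0 < ε := by
    rw [Real.dist_eq, sub_zero, abs_of_pos hr]
    have : r ≤ ε/2 := le_trans hrδ (min_le_left _ _)
    linarith
  have hmem : r ∈ ({(0:ℝ)}ᶜ : Set ℝ) := by simp [hr.ne']
  have hs := hball hrε hmem
  rw [slope_def_field] at hs
  simp only [hψ0, sub_zero] at hs
  obtain ⟨h1, h2⟩ := hs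
  have hdiv : (ψ r - 0) / (r - 0) = ψ r / r := by ring_nf
  constructor
  · have := (lt_div_iff₀ hr).mp h1
    linarith
  · have := (div_lt_iff₀ hr).mp h2
    linarith

private lemma primitive_continuousAt {g : ℝ → ℝ}
    (hg : ∀ b : ℝ, IntegrableOn g (Ioc 0 b)) {r : ℝ} (hr : 0 < r) :
    ContinuousAt (fun x => ∫ s in (0:ℝ)..x, g s) r := by
  have hint : IntegrableOn g (uIcc 0 (r+1)) := by
    rw [uIcc_of_le (by linarith)]
    rw [integrableOn_Icc_iff_integrableOn_Ioc]
    exact hg (r+1)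
  have hcont := continuousOn_primitive_interval (a := (0:ℝ)) (b := r+1) hint
  rw [uIcc_of_le (by linarith)] at hcont
  exact hcont.continuousAt (Icc_mem_nhds hr (by linarith))

private lemma key
    (n : ℕ) (ψ : ℝ → ℝ)
    (hψ0 : ψ 0 = 0) (hψ'0 : HasDerivAt ψ 1 0)
    (hψpos : ∀ r > (0:ℝ), 0 < ψ r)
    (hψcont : ContinuousOn ψ (Ici 0))
    (hΘ : ¬ IntegrableOn
        (fun r => (∫ s in (0:ℝ)..r, ψ s ^ (n-1)) / ψ r ^ (n-1)) (Ioi (0:ℝ)))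
    (p : ℝ) (hp : 0 < p)
    (u v v' : ℝ → ℝ)
    (hu : ∀ r ≥ (0:ℝ), 0 < u r) (hv : ∀ r ≥ (0:ℝ), 0 < v r)
    (hucont : ContinuousOn u (Ioi 0))
    (hvd : ∀ r > (0:ℝ), HasDerivAt v (v' r) r)
    (heqv : ∀ r > (0:ℝ),
      ψ r ^ (n-1) * v' r = - ∫ s in (0:ℝ)..r, u s ^ p * ψ s ^ (n-1))
    (huanti : AntitoneOn u (Ici 0))
    (ℓu : ℝ) (hulim : Tendsto u atTop (nhds ℓu)) :
    ℓu ≤ 0 := by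
  by_contra hℓ
  push_neg at hℓ
  set Θ : ℝ → ℝ := fun r => (∫ s in (0:ℝ)..r, ψ s ^ (n-1)) / ψ r ^ (n-1) with hΘdef
  set g : ℝ → ℝ := fun s => u s ^ p * ψ s ^ (n-1) with hgdef
  have hψnn : ∀ s ≥ (0:ℝ), 0 ≤ ψ s := by
    intro s hs
    rcases eq_or_lt_of_le hs with h | h
    · simp [← h, hψ0]
    · exact (hψpos s h).le
  have hψpow_pos : ∀ r > (0:ℝ), 0 < ψ r ^ (n-1) := fun r hr => pow_pos (hψpos r hr) _
  have hψpowcont : ContinuousOn (fun s => ψ s ^ (n-1)) (Ici 0) := hψcont.pow _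
  have huge : ∀ s ≥ (0:ℝ), ℓu ≤ u s := by
    intro s hs
    refine le_of_tendsto hulim ?_
    filter_upwards [eventually_ge_atTop s] with t ht
    exact huanti hs (le_trans hs ht) ht
  -- continuity of the integrand g on Ioi 0
  have hgcont : ContinuousOn g (Ioi 0) := by
    apply ContinuousOn.mul
    · exact hucont.rpow_const (fun s hs => Or.inl (hu s (le_of_lt hs)).ne')
    · exact (hψpowcont.mono (Ioi_subset_Ici le_rfl))
  -- integrability of g on Ioc 0 b
  have hgint : ∀ b : ℝ, IntegrableOn g (Ioc 0 b) := by
    intro b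
    rcases le_or_gt b 0 with hb | hb
    · rw [Ioc_eq_empty (not_lt.mpr hb)]; exact integrableOn_empty
    · obtain ⟨M, hM⟩ := (isCompact_Icc (a := (0:ℝ)) (b := b)).exists_bound_of_continuousOn
        (hψcont.mono (Icc_subset_Ici_self))
      have hM0 : 0 ≤ M := le_trans (norm_nonneg _) (hM 0 (by constructor <;> [rfl; exact hb.le]))
      refine Integrable.mono' (g := fun _ => u 0 ^ p * M ^ (n-1))
        (integrableOn_const measure_Ioc_lt_top.ne)
        ((hgcont.mono Ioc_subset_Ioi_self).aestronglyMeasurable measurableSet_Ioc) ?_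
      rw [ae_restrict_iff' measurableSet_Ioc]
      refine ae_of_all _ fun s hs => ?_
      have hs0 : (0:ℝ) < s := hs.1
      have hgnn : 0 ≤ g s :=
        mul_nonneg (Real.rpow_nonneg (hu s hs0.le).le _) (pow_nonneg (hψnn s hs0.le) _)
      rw [Real.norm_of_nonneg hgnn]
      apply mul_le_mul
      · exact Real.rpow_le_rpow (hu s hs0.le).le (huanti (mem_Ici.mpr (le_refl (0:ℝ))) hs0.le hs0.le) hp.le
      · calc ψ s ^ (n-1) ≤ ‖ψ s‖ ^ (n-1) := by
              apply pow_le_pow_left₀ (hψnn s hs0.le) (le_abs_self _)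
          _ ≤ M ^ (n-1) := pow_le_pow_left₀ (norm_nonneg _) (hM s ⟨hs0.le, hs.2⟩) _
      · exact pow_nonneg (hψnn s hs0.le) _
      · exact Real.rpow_nonneg (hu 0 le_rfl).le _
  have hgII : ∀ a b : ℝ, 0 ≤ a → a ≤ b → IntervalIntegrable g volume a b := by
    intro a b ha hab
    rw [intervalIntegrable_iff_integrableOn_Ioc_of_le hab]
    exact (hgint b).mono_set (Ioc_subset_Ioc_left ha)
  have hψpowII : ∀ a b : ℝ, 0 ≤ a → a ≤ b → IntervalIntegrable (fun s => ψ s ^ (n-1)) volume a b := by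
    intro a b ha hab
    apply ContinuousOn.intervalIntegrable
    rw [uIcc_of_le hab]
    exact hψpowcont.mono (fun x hx => le_trans ha hx.1)
  -- the numerator of Θ
  set N : ℝ → ℝ := fun r => ∫ s in (0:ℝ)..r, ψ s ^ (n-1) with hNdef
  have hNnn : ∀ r ≥ (0:ℝ), 0 ≤ N r := by
    intro r hr
    apply intervalIntegral.integral_nonneg hr
    exact fun s hs => pow_nonneg (hψnn s hs.1) _
  have hNcont : ∀ r > (0:ℝ), ContinuousAt N r := by
    intro r hr
    apply primitive_continuousAt (fun b => ?_) hr
    rcases le_or_gt b 0 with hb | hb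
    · rw [Ioc_eq_empty (not_lt.mpr hb)]; exact integrableOn_empty
    · rw [← integrableOn_Icc_iff_integrableOn_Ioc]
      exact (hψpowcont.mono Icc_subset_Ici_self).integrableOn_Icc
  have hΘcont : ContinuousOn Θ (Ioi 0) := by
    apply ContinuousOn.div
    · exact fun r hr => (hNcont r hr).continuousWithinAt
    · exact hψpowcont.mono (Ioi_subset_Ici le_rfl)
    · exact fun r hr => (hψpow_pos r hr).ne'
  have hΘnn : ∀ r > (0:ℝ), 0 ≤ Θ r := fun r hr =>
    div_nonneg (hNnn r hr.le) (hψpow_pos r hr).le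
  -- F is the primitive of g, v' = -F/ψ^{n-1}
  set F : ℝ → ℝ := fun r => ∫ s in (0:ℝ)..r, g s with hFdef
  have hv'eq : ∀ r > (0:ℝ), v' r = -(F r / ψ r ^ (n-1)) := by
    intro r hr
    have hne := (hψpow_pos r hr).ne'
    have h := heqv r hr
    field_simp
    linarith [h]
  have hv'cont : ContinuousOn v' (Ioi 0) := by
    apply ContinuousOn.congr (f := fun r => -(F r / ψ r ^ (n-1)))
    · apply ContinuousOn.neg
      apply ContinuousOn.div
      · exact fun r hr => (primitive_continuousAt hgint hr).continuousWithinAt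
      · exact hψpowcont.mono (Ioi_subset_Ici le_rfl)
      · exact fun r hr => (hψpow_pos r hr).ne'
    · exact fun r hr => hv'eq r hr
  -- key pointwise bound
  have hkey : ∀ r > (0:ℝ), ℓu ^ p * Θ r ≤ -v' r := by
    intro r hr
    have hmono : ℓu ^ p * N r ≤ F r := by
      rw [hNdef, ← intervalIntegral.integral_const_mul]
      apply intervalIntegral.integral_mono_on hr.le
        ((hψpowII 0 r le_rfl hr.le).const_mul _) (hgII 0 r le_rfl hr.le)
      intro s hs
      exact mul_le_mul_of_nonneg_right
        (Real.rpow_le_rpow hℓ.le (huge s hs.1) hp.le) (pow_nonneg (hψnn s hs.1) _)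
    rw [hv'eq r hr, neg_neg, hΘdef]
    rw [← mul_div_assoc]
    exact (div_le_div_iff_of_pos_right (hψpow_pos r hr)).mpr hmono
  -- integral bound on [1, R]
  have hbound : ∀ R : ℝ, 1 ≤ R → ∫ r in (1:ℝ)..R, Θ r ≤ v 1 / ℓu ^ p := by
    intro R hR
    have hsub : Icc (1:ℝ) R ⊆ Ioi 0 := fun x hx => lt_of_lt_of_le one_pos hx.1
    have hΘII : IntervalIntegrable Θ volume 1 R := by
      apply ContinuousOn.intervalIntegrable
      rw [uIcc_of_le hR]
      exact hΘcont.mono hsub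
    have hv'II : IntervalIntegrable v' volume 1 R := by
      apply ContinuousOn.intervalIntegrable
      rw [uIcc_of_le hR]
      exact hv'cont.mono hsub
    have hFTC : ∫ r in (1:ℝ)..R, v' r = v R - v 1 := by
      apply integral_eq_sub_of_hasDerivAt
      · intro x hx
        rw [uIcc_of_le hR] at hx
        exact hvd x (hsub hx)
      · exact hv'II
    have hstep : ℓu ^ p * ∫ r in (1:ℝ)..R, Θ r ≤ v 1 - v R := by
      rw [← intervalIntegral.integral_const_mul]
      calc (∫ r in (1:ℝ)..R, ℓu ^ p * Θ r) ≤ ∫ r in (1:ℝ)..R, -v' r := by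
            apply intervalIntegral.integral_mono_on hR (hΘII.const_mul _) hv'II.neg
            intro x hx
            exact hkey x (hsub hx)
        _ = -(∫ r in (1:ℝ)..R, v' r) := intervalIntegral.integral_neg
        _ = v 1 - v R := by rw [hFTC]; ring
    have hℓp : 0 < ℓu ^ p := Real.rpow_pos_of_pos hℓ _
    rw [le_div_iff₀ hℓp]
    have hvR : 0 < v R := hv R (by linarith)
    nlinarith [hstep]
  -- Θ is integrable on Ioi 1
  have hint1 : IntegrableOn Θ (Ioi 1) := by
    apply integrableOn_Ioi_of_intervalIntegral_norm_bounded (v 1 / ℓu ^ p) 1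
      (b := fun i : ℕ => (i:ℝ)) (l := atTop)
    · intro i
      rcases le_or_gt (i:ℝ) 1 with hi | hi
      · rw [Ioc_eq_empty (not_lt.mpr hi)]; exact integrableOn_empty
      · refine IntegrableOn.mono_set ?_ Ioc_subset_Icc_self
        apply ContinuousOn.integrableOn_Icc
        exact hΘcont.mono (fun x hx => lt_of_lt_of_le one_pos hx.1)
    · exact tendsto_natCast_atTop_atTop
    · filter_upwards [eventually_ge_atTop 1] with i hi
      have hi1 : (1:ℝ) ≤ (i:ℝ) := by exact_mod_cast hi
      have : ∫ x in (1:ℝ)..(i:ℝ), ‖Θ x‖ = ∫ x in (1:ℝ)..(i:ℝ), Θ x := by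
        apply intervalIntegral.integral_congr
        intro x hx
        rw [uIcc_of_le hi1] at hx
        exact Real.norm_of_nonneg (hΘnn x (lt_of_lt_of_le one_pos hx.1))
      rw [this]
      exact hbound _ hi1
  -- Θ is integrable near 0
  obtain ⟨δ, hδ0, hδ1, hδ⟩ := psi_near_zero ψ hψ0 hψ'0
  have hΘbdd : ∀ r ∈ Ioc (0:ℝ) δ, Θ r ≤ 4 ^ (n-1) * δ := by
    intro r hr
    have hr0 : 0 < r := hr.1
    have hrδ : r ≤ δ := hr.2
    obtain ⟨hlo, hhi⟩ := hδ r hr0 hrδ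
    have hNle : N r ≤ r * (2*r) ^ (n-1) := by
      have : N r ≤ ∫ s in (0:ℝ)..r, (2*r) ^ (n-1) := by
        apply intervalIntegral.integral_mono_on hr0.le (hψpowII 0 r le_rfl hr0.le)
          intervalIntegrable_const
        intro s hs
        apply pow_le_pow_left₀ (hψnn s hs.1)
        rcases eq_or_lt_of_le hs.1 with h | h
        · rw [← h, hψ0]; linarith
        · have h2 := (hδ s h (le_trans hs.2 hrδ)).2
          have h3 := hs.2
          linarith
      rwa [intervalIntegral.integral_const, smul_eq_mul, sub_zero] at this
    have hDge : (r/2) ^ (n-1) ≤ ψ r ^ (n-1) := pow_le_pow_left₀ (by positivity) hlo _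
    have hd2 : (0:ℝ) < (r/2) ^ (n-1) := by positivity
    calc Θ r ≤ (r * (2*r) ^ (n-1)) / ((r/2) ^ (n-1)) :=
          div_le_div₀ (by positivity) hNle hd2 hDge
      _ = r * 4 ^ (n-1) := by
          rw [mul_div_assoc, ← div_pow]
          congr 2
          field_simp
          ring
      _ ≤ 4 ^ (n-1) * δ := by
          rw [mul_comm]
          apply mul_le_mul_of_nonneg_left hrδ (by positivity)
  have hint0 : IntegrableOn Θ (Ioc 0 δ) := by
    refine Integrable.mono' (g := fun _ => 4 ^ (n-1) * δ)
      (integrableOn_const measure_Ioc_lt_top.ne)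
      ((hΘcont.mono Ioc_subset_Ioi_self).aestronglyMeasurable measurableSet_Ioc) ?_
    rw [ae_restrict_iff' measurableSet_Ioc]
    refine ae_of_all _ fun r hr => ?_
    rw [Real.norm_of_nonneg (hΘnn r hr.1)]
    exact hΘbdd r hr
  have hintmid : IntegrableOn Θ (Ioc δ 1) := by
    refine IntegrableOn.mono_set ?_ Ioc_subset_Icc_self
    apply ContinuousOn.integrableOn_Icc
    exact hΘcont.mono (fun x hx => lt_of_lt_of_le hδ0 hx.1)
  have : IntegrableOn Θ (Ioi 0) := by
    have h01 : IntegrableOn Θ (Ioc 0 1) := by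
      have := hint0.union hintmid
      rwa [Ioc_union_Ioc_eq_Ioc hδ0.le hδ1] at this
    have := h01.union hint1
    rwa [Ioc_union_Ioi_eq_Ioi zero_le_one] at this
  exact hΘ this

open Filter MeasureTheory Set

/-- On a stochastically complete model (`Θ ∉ L¹`), any globally positive decreasing
radial solution of the Lane-Emden system has both limits at infinity equal to zero. -/
theorem limits_zero_of_stochastically_complete
    (n : ℕ) (hn : 3 ≤ n) (ψ : ℝ → ℝ)
    (hψ0 : ψ 0 = 0) (hψ'0 : HasDerivAt ψ 1 0)
    (hψpos : ∀ r > (0:ℝ), 0 < ψ r)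
    (hψcont : ContinuousOn ψ (Ici 0))
    (hΘ : ¬ IntegrableOn
        (fun r => (∫ s in (0:ℝ)..r, ψ s ^ (n-1)) / ψ r ^ (n-1)) (Ioi (0:ℝ)))
    (p q : ℝ) (hp : 0 < p) (hq : 0 < q)
    (u v u' v' : ℝ → ℝ)
    (hu : ∀ r ≥ (0:ℝ), 0 < u r) (hv : ∀ r ≥ (0:ℝ), 0 < v r)
    (hud : ∀ r > (0:ℝ), HasDerivAt u (u' r) r)
    (hvd : ∀ r > (0:ℝ), HasDerivAt v (v' r) r)
    (hequ : ∀ r > (0:ℝ),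
      ψ r ^ (n-1) * u' r = - ∫ s in (0:ℝ)..r, v s ^ q * ψ s ^ (n-1))
    (heqv : ∀ r > (0:ℝ),
      ψ r ^ (n-1) * v' r = - ∫ s in (0:ℝ)..r, u s ^ p * ψ s ^ (n-1))
    (huanti : AntitoneOn u (Ici 0)) (hvanti : AntitoneOn v (Ici 0))
    (ℓu ℓv : ℝ) (hℓu : 0 ≤ ℓu) (hℓv : 0 ≤ ℓv)
    (hulim : Tendsto u atTop (nhds ℓu)) (hvlim : Tendsto v atTop (nhds ℓv)) :
    ℓu = 0 ∧ ℓv = 0 := by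
  have hucont : ContinuousOn u (Ioi 0) :=
    fun r hr => ((hud r hr).continuousAt).continuousWithinAt
  have hvcont : ContinuousOn v (Ioi 0) :=
    fun r hr => ((hvd r hr).continuousAt).continuousWithinAt
  constructor
  · exact le_antisymm
      (key n ψ hψ0 hψ'0 hψpos hψcont hΘ p hp u v v' hu hv hucont hvd heqv huanti ℓu hulim) hℓu
  · exact le_antisymm
      (key n ψ hψ0 hψ'0 hψpos hψcont hΘ q hq v u u' hv hu hvcont hud hequ hvanti ℓv hvlim) hℓv
end

section
/- Let ψ : [0,∞) → ℝ be C¹, positive and nondecreasing on (0,∞) with ψ(0)=0. Let p,q > 0 and let (u₁,v₁), (u₂,v₂) be two positive solutions on (0,b) of the integral system uᵢ(r) = ξᵢ - ∫_0^r ψ(s)^{1-n} (∫_0^s vᵢ^q ψ^{n-1} dt) ds, vᵢ(r) = ηᵢ - ∫_0^r ψ(s)^{1-n} (∫_0^s uᵢ^p ψ^{n-1} dt) ds, with initial data ξ₁ ≥ ξ₂ > 0 and η₂ > η₁ > 0. Then the functions r ↦ u₁(r) - u₂(r) and r ↦ v₂(r) - v₁(r) are strictly increasing on (0,b); in particular u₂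 < u₁ and v₁ < v₂ on (0,b). -/
open Filter MeasureTheory Set
open scoped ENNReal

set_option maxHeartbeats 1000000

lemma primitive_aesm (f : ℝ → ℝ) (r₀ : ℝ) :
    AEStronglyMeasurable (fun r => ∫ t in (0:ℝ)..r, f t) (volume.restrict (Set.Ioc 0 r₀)) := by
  set F : ℝ → ℝ := fun r => ∫ t in (0:ℝ)..r, f t with hFdef
  set S : Set ℝ := {r | 0 ≤ r ∧ IntervalIntegrable f volume 0 r} with hSdef
  have hSord : S.OrdConnected := by
    constructor
    rintro x ⟨hx0, _⟩ y ⟨hy0, hyi⟩ z hz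
    refine ⟨hx0.trans hz.1, hyi.mono_set ?_⟩
    rw [Set.uIcc_of_le (hx0.trans hz.1), Set.uIcc_of_le hy0]
    exact Set.Icc_subset_Icc le_rfl hz.2
  have hSmeas : MeasurableSet S := hSord.measurableSet
  have hcont : ContinuousOn F S := by
    intro r hr
    have hkey : ∀ r' : ℝ, 0 ≤ r' → IntervalIntegrable f volume 0 r' →
        ContinuousOn F (Set.Icc 0 r') := by
      intro r' h0 hi
      have hIcc : IntegrableOn f (Set.uIcc 0 r') volume := by
        rw [Set.uIcc_of_le h0, integrableOn_Icc_iff_integrableOn_Ioc]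
        exact hi.1
      have := intervalIntegral.continuousOn_primitive_interval hIcc
      rwa [Set.uIcc_of_le h0] at this
    by_cases hmax : ∃ r' ∈ S, r < r'
    · obtain ⟨r', ⟨hr'0, hr'i⟩, hrr'⟩ := hmax
      have hmem : r ∈ Set.Icc 0 r' := ⟨hr.1, hrr'.le⟩
      refine (hkey r' hr'0 hr'i r hmem).mono_of_mem_nhdsWithin ?_
      refine Filter.mem_of_superset (inter_mem_nhdsWithin S (Iio_mem_nhds hrr')) ?_
      rintro x ⟨hxS, hx⟩
      exact ⟨hxS.1, le_of_lt hx⟩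
    · push_neg at hmax
      have hsub : S ⊆ Set.Icc 0 r := fun x hx => ⟨hx.1, hmax x hx⟩
      exact ((hkey r hr.1 hr.2).mono hsub) r hr
  have hsplit : Set.Ioc (0:ℝ) r₀ = (Set.Ioc 0 r₀ ∩ S) ∪ (Set.Ioc 0 r₀ \ S) :=
    (Set.inter_union_diff _ _).symm
  rw [hsplit, aestronglyMeasurable_union_iff]
  constructor
  · exact (hcont.aestronglyMeasurable hSmeas).mono_measure
      (Measure.restrict_mono Set.inter_subset_right le_rfl)
  · refine (aestronglyMeasurable_const (b := (0:ℝ))).congr ?_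
    refine Filter.eventuallyEq_of_mem
      (MeasureTheory.self_mem_ae_restrict (measurableSet_Ioc.diff hSmeas)) ?_
    rintro x ⟨hx1, hx2⟩
    have hnx : ¬ IntervalIntegrable f volume 0 x := fun h => hx2 ⟨hx1.1.le, h⟩
    exact (intervalIntegral.integral_undef hnx).symm

lemma indicator_mono_aux {ψ : ℝ → ℝ} (hψpos : ∀ r > (0:ℝ), 0 < ψ r)
    (hψmono : MonotoneOn ψ (Set.Ioi 0)) :
    Monotone ((Set.Ioi (0:ℝ)).indicator ψ) := by
  intro x y hxy
  by_cases hx : (0:ℝ) < x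
  · have hy : (0:ℝ) < y := lt_of_lt_of_le hx hxy
    rw [Set.indicator_of_mem (Set.mem_Ioi.mpr hx), Set.indicator_of_mem (Set.mem_Ioi.mpr hy)]
    exact hψmono hx hy hxy
  · rw [Set.indicator_of_notMem (by simpa using hx)]
    by_cases hy : (0:ℝ) < y
    · rw [Set.indicator_of_mem (Set.mem_Ioi.mpr hy)]
      exact (hψpos y hy).le
    · rw [Set.indicator_of_notMem (by simpa using hy)]

lemma key_integrable
    (n : ℕ) (hn : 3 ≤ n) (ψ : ℝ → ℝ) (hψ0 : ψ 0 = 0)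
    (hψpos : ∀ r > (0:ℝ), 0 < ψ r) (hψmono : MonotoneOn ψ (Set.Ioi 0))
    (y : ℝ → ℝ) (e M : ℝ) (he : 0 < e) (hM : 0 ≤ M) (r : ℝ) (hr : 0 ≤ r)
    (hy : ∀ t, 0 < t → t ≤ r → 0 < y t ∧ y t ≤ M)
    (hmy : AEStronglyMeasurable y (volume.restrict (Set.Ioc 0 r))) :
    IntervalIntegrable (fun t => y t ^ e * ψ t ^ (n-1)) volume 0 r ∧
    IntervalIntegrable (fun s => (∫ t in (0:ℝ)..s, y t ^ e * ψ t ^ (n-1)) / ψ s ^ (n-1))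
      volume 0 r := by
  have hψnn : ∀ t, 0 ≤ t → 0 ≤ ψ t := by
    intro t ht
    rcases eq_or_lt_of_le ht with h | h
    · simp [← h, hψ0]
    · exact (hψpos t h).le
  set Ψ : ℝ → ℝ := (Set.Ioi (0:ℝ)).indicator ψ with hΨdef
  have hΨmeas : Measurable Ψ := (indicator_mono_aux hψpos hψmono).measurable
  -- inner integrand measurable
  have hinner_meas : AEStronglyMeasurable (fun t => y t ^ e * ψ t ^ (n-1))
      (volume.restrict (Set.Ioc 0 r)) := by
    have h1 : AEStronglyMeasurable (fun t => y t ^ e * Ψ t ^ (n-1))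
        (volume.restrict (Set.Ioc 0 r)) := by
      exact ((hmy.aemeasurable.pow_const e).mul
        ((hΨmeas.pow_const (n-1)).aemeasurable)).aestronglyMeasurable
    refine h1.congr ?_
    refine Filter.eventuallyEq_of_mem (MeasureTheory.self_mem_ae_restrict measurableSet_Ioc) ?_
    intro t ht
    simp only [hΨdef, Set.indicator_of_mem (Set.mem_Ioi.mpr ht.1)]
  -- inner integrand bounded
  have hinner_bdd : ∀ t ∈ Set.Ioc (0:ℝ) r, ‖y t ^ e * ψ t ^ (n-1)‖ ≤ M ^ e * ψ r ^ (n-1) := by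
    intro t ht
    have hyt := hy t ht.1 ht.2
    have h1 : 0 < y t ^ e := Real.rpow_pos_of_pos hyt.1 e
    have h2 : y t ^ e ≤ M ^ e := Real.rpow_le_rpow hyt.1.le hyt.2 he.le
    have hψt : 0 ≤ ψ t := hψnn t ht.1.le
    have hψtr : ψ t ≤ ψ r := by
      rcases eq_or_lt_of_le ht.2 with h | h
      · rw [h]
      · exact hψmono (Set.mem_Ioi.mpr ht.1) (Set.mem_Ioi.mpr (ht.1.trans h)) ht.2
    have h3 : ψ t ^ (n-1) ≤ ψ r ^ (n-1) := pow_le_pow_left₀ hψt hψtr _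
    rw [Real.norm_eq_abs, abs_of_nonneg (mul_nonneg h1.le (pow_nonneg hψt _))]
    exact mul_le_mul h2 h3 (pow_nonneg hψt _) (Real.rpow_nonneg hM e)
  have hinner : IntervalIntegrable (fun t => y t ^ e * ψ t ^ (n-1)) volume 0 r := by
    rw [intervalIntegrable_iff_integrableOn_Ioc_of_le hr]
    refine ⟨hinner_meas, HasFiniteIntegral.restrict_of_bounded (C := M ^ e * ψ r ^ (n-1))
      measure_Ioc_lt_top ?_⟩
    exact Filter.eventually_of_mem (MeasureTheory.self_mem_ae_restrict measurableSet_Ioc)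
      hinner_bdd
  refine ⟨hinner, ?_⟩
  -- outer integrand
  have houter_meas : AEStronglyMeasurable
      (fun s => (∫ t in (0:ℝ)..s, y t ^ e * ψ t ^ (n-1)) / ψ s ^ (n-1))
      (volume.restrict (Set.Ioc 0 r)) := by
    have hIcc : IntegrableOn (fun t => y t ^ e * ψ t ^ (n-1)) (Set.uIcc 0 r) volume := by
      rw [Set.uIcc_of_le hr, integrableOn_Icc_iff_integrableOn_Ioc]
      exact hinner.1
    have hN : ContinuousOn (fun s => ∫ t in (0:ℝ)..s, y t ^ e * ψ t ^ (n-1)) (Set.Icc 0 r) := by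
      have := intervalIntegral.continuousOn_primitive_interval hIcc
      rwa [Set.uIcc_of_le hr] at this
    have hNm : AEStronglyMeasurable (fun s => ∫ t in (0:ℝ)..s, y t ^ e * ψ t ^ (n-1))
        (volume.restrict (Set.Ioc 0 r)) :=
      (hN.aestronglyMeasurable measurableSet_Icc).mono_measure
        (Measure.restrict_mono Set.Ioc_subset_Icc_self le_rfl)
    have hD : AEStronglyMeasurable (fun s => ψ s ^ (n-1)) (volume.restrict (Set.Ioc 0 r)) := by
      refine ((hΨmeas.pow_const (n-1)).aestronglyMeasurable).congr ?_
      refine Filter.eventuallyEq_of_mem (MeasureTheory.self_mem_ae_restrict measurableSet_Ioc) ?_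
      intro t ht
      simp only [hΨdef, Set.indicator_of_mem (Set.mem_Ioi.mpr ht.1)]
    exact (hNm.aemeasurable.div hD.aemeasurable).aestronglyMeasurable
  have houter_bdd : ∀ s ∈ Set.Ioc (0:ℝ) r,
      ‖(∫ t in (0:ℝ)..s, y t ^ e * ψ t ^ (n-1)) / ψ s ^ (n-1)‖ ≤ M ^ e * r := by
    intro s hs
    have hψs : 0 < ψ s ^ (n-1) := pow_pos (hψpos s hs.1) _
    have hψ0pow : ψ (0:ℝ) ^ (n-1) = 0 := by
      rw [hψ0]; exact zero_pow (by omega)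
    have hNnn : 0 ≤ ∫ t in (0:ℝ)..s, y t ^ e * ψ t ^ (n-1) := by
      refine intervalIntegral.integral_nonneg hs.1.le ?_
      intro t ht
      rcases eq_or_lt_of_le ht.1 with h | h
      · rw [← h, hψ0pow, mul_zero]
      · exact mul_nonneg (Real.rpow_nonneg (hy t h (ht.2.trans hs.2)).1.le e)
          (pow_nonneg (hψnn t ht.1) _)
    have hNle : (∫ t in (0:ℝ)..s, y t ^ e * ψ t ^ (n-1)) ≤ M ^ e * ψ s ^ (n-1) * s := by
      have hconst : (∫ (_ : ℝ) in (0:ℝ)..s, M ^ e * ψ s ^ (n-1)) = M ^ e * ψ s ^ (n-1) * s := by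
        rw [intervalIntegral.integral_const]
        ring_nf
      rw [← hconst]
      have hsub : Set.uIcc (0:ℝ) s ⊆ Set.uIcc (0:ℝ) r := by
        rw [Set.uIcc_of_le hs.1.le, Set.uIcc_of_le hr]
        exact Set.Icc_subset_Icc le_rfl hs.2
      refine intervalIntegral.integral_mono_on hs.1.le
        (hinner.mono_set hsub) intervalIntegrable_const ?_
      intro t ht
      by_cases h0 : t = 0
      · subst h0
        rw [hψ0pow, mul_zero]
        positivity
      · have ht0 : 0 < t := lt_of_le_of_ne ht.1 (Ne.symm h0)
        have hyt := hy t ht0 (ht.2.trans hs.2)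
        have h2 : y t ^ e ≤ M ^ e := Real.rpow_le_rpow hyt.1.le hyt.2 he.le
        have hψts : ψ t ≤ ψ s := by
          rcases eq_or_lt_of_le ht.2 with h | h
          · rw [h]
          · exact hψmono (Set.mem_Ioi.mpr ht0) (Set.mem_Ioi.mpr hs.1) ht.2
        have h3 : ψ t ^ (n-1) ≤ ψ s ^ (n-1) := pow_le_pow_left₀ (hψnn t ht0.le) hψts _
        exact mul_le_mul h2 h3 (pow_nonneg (hψnn t ht0.le) _) (Real.rpow_nonneg hM e)
    rw [Real.norm_eq_abs, abs_of_nonneg (div_nonneg hNnn hψs.le)]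
    rw [div_le_iff₀ hψs]
    have hfin : M ^ e * ψ s ^ (n-1) * s ≤ M ^ e * ψ s ^ (n-1) * r :=
      mul_le_mul_of_nonneg_left hs.2 (mul_nonneg (Real.rpow_nonneg hM e) hψs.le)
    nlinarith [hNle]
  rw [intervalIntegrable_iff_integrableOn_Ioc_of_le hr]
  refine ⟨houter_meas, HasFiniteIntegral.restrict_of_bounded (C := M ^ e * r)
    measure_Ioc_lt_top ?_⟩
  exact Filter.eventually_of_mem (MeasureTheory.self_mem_ae_restrict measurableSet_Ioc) houter_bdd

/-- Ordering lemma: if `(u₁,v₁)`, `(u₂,v₂)` are positive solutions of the integrated radial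
Lane-Emden system on `(0,b)` with `ξ₁ ≥ ξ₂ > 0` and `η₂ > η₁ > 0`, then `u₁ - u₂` and
`v₂ - v₁` are strictly increasing on `(0,b)`; in particular `u₂ < u₁` and `v₁ < v₂` there. -/
theorem ordering_of_solutions
    (n : ℕ) (hn : 3 ≤ n) (ψ : ℝ → ℝ)
    (hψ0 : ψ 0 = 0) (hψpos : ∀ r > (0:ℝ), 0 < ψ r)
    (hψmono : MonotoneOn ψ (Ioi 0))
    (p q : ℝ) (hp : 0 < p) (hq : 0 < q)
    (b : ℝ≥0∞) (hb : 0 < b)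
    (ξ₁ ξ₂ η₁ η₂ : ℝ) (hξ : ξ₁ ≥ ξ₂) (hξ₂ : 0 < ξ₂) (hη : η₂ > η₁) (hη₁ : 0 < η₁)
    (u₁ v₁ u₂ v₂ : ℝ → ℝ)
    (hpos : ∀ r : ℝ, 0 ≤ r → ENNReal.ofReal r < b →
      0 < u₁ r ∧ 0 < v₁ r ∧ 0 < u₂ r ∧ 0 < v₂ r)
    (heq₁u : ∀ r : ℝ, 0 ≤ r → ENNReal.ofReal r < b →
      u₁ r = ξ₁ - ∫ s in (0:ℝ)..r, (∫ t in (0:ℝ)..s, v₁ t ^ q * ψ t ^ (n-1)) / ψ s ^ (n-1))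
    (heq₁v : ∀ r : ℝ, 0 ≤ r → ENNReal.ofReal r < b →
      v₁ r = η₁ - ∫ s in (0:ℝ)..r, (∫ t in (0:ℝ)..s, u₁ t ^ p * ψ t ^ (n-1)) / ψ s ^ (n-1))
    (heq₂u : ∀ r : ℝ, 0 ≤ r → ENNReal.ofReal r < b →
      u₂ r = ξ₂ - ∫ s in (0:ℝ)..r, (∫ t in (0:ℝ)..s, v₂ t ^ q * ψ t ^ (n-1)) / ψ s ^ (n-1))
    (heq₂v : ∀ r : ℝ, 0 ≤ r → ENNReal.ofReal r < b →
      v₂ r = η₂ - ∫ s in (0:ℝ)..r, (∫ t in (0:ℝ)..s, u₂ t ^ p * ψ t ^ (n-1)) / ψ s ^ (n-1)) :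
    StrictMonoOn (fun r => u₁ r - u₂ r) {r : ℝ | 0 < r ∧ ENNReal.ofReal r < b} ∧
    StrictMonoOn (fun r => v₂ r - v₁ r) {r : ℝ | 0 < r ∧ ENNReal.ofReal r < b} ∧
    (∀ r : ℝ, 0 < r → ENNReal.ofReal r < b → u₂ r < u₁ r ∧ v₁ r < v₂ r) := by
  have hψnn : ∀ t, 0 ≤ t → 0 ≤ ψ t := by
    intro t ht
    rcases eq_or_lt_of_le ht with h | h
    · simp [← h, hψ0]
    · exact (hψpos t h).le
  have hψ0pow : ψ (0:ℝ) ^ (n-1) = 0 := by rw [hψ0]; exact zero_pow (by omega)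
  have hDmono : ∀ {t r : ℝ}, t ≤ r → ENNReal.ofReal r < b → ENNReal.ofReal t < b :=
    fun {t r} htr hr => lt_of_le_of_lt (ENNReal.ofReal_le_ofReal htr) hr
  -- upper bounds
  have hub : ∀ (w y : ℝ → ℝ) (c e : ℝ),
      (∀ r, 0 ≤ r → ENNReal.ofReal r < b →
        w r = c - ∫ s in (0:ℝ)..r, (∫ t in (0:ℝ)..s, y t ^ e * ψ t ^ (n-1)) / ψ s ^ (n-1)) →
      (∀ t, 0 ≤ t → ENNReal.ofReal t < b → 0 < y t) →
      ∀ r, 0 ≤ r → ENNReal.ofReal r < b → w r ≤ c := by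
    intro w y c e heqw hy r hr hrb
    rw [heqw r hr hrb]
    have h1 : 0 ≤ ∫ s in (0:ℝ)..r, (∫ t in (0:ℝ)..s, y t ^ e * ψ t ^ (n-1)) / ψ s ^ (n-1) := by
      refine intervalIntegral.integral_nonneg hr ?_
      intro s hsIcc
      refine div_nonneg ?_ (pow_nonneg (hψnn s hsIcc.1) _)
      refine intervalIntegral.integral_nonneg hsIcc.1 ?_
      intro t ht
      rcases eq_or_lt_of_le ht.1 with h | h
      · rw [← h, hψ0pow, mul_zero]
      · exact mul_nonneg
          (Real.rpow_nonneg (hy t h.le (hDmono (ht.2.trans hsIcc.2) hrb)).le e)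
          (pow_nonneg (hψnn t ht.1) _)
    linarith
  have hu₁ub : ∀ r, 0 ≤ r → ENNReal.ofReal r < b → u₁ r ≤ ξ₁ :=
    hub u₁ v₁ ξ₁ q heq₁u (fun t ht htb => (hpos t ht htb).2.1)
  have hv₁ub : ∀ r, 0 ≤ r → ENNReal.ofReal r < b → v₁ r ≤ η₁ :=
    hub v₁ u₁ η₁ p heq₁v (fun t ht htb => (hpos t ht htb).1)
  have hu₂ub : ∀ r, 0 ≤ r → ENNReal.ofReal r < b → u₂ r ≤ ξ₂ :=
    hub u₂ v₂ ξ₂ q heq₂u (fun t ht htb => (hpos t ht htb).2.2.2)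
  have hv₂ub : ∀ r, 0 ≤ r → ENNReal.ofReal r < b → v₂ r ≤ η₂ :=
    hub v₂ u₂ η₂ p heq₂v (fun t ht htb => (hpos t ht htb).2.2.1)
  -- measurability
  have hmeas : ∀ (w : ℝ → ℝ) (c : ℝ) (f : ℝ → ℝ),
      (∀ r, 0 ≤ r → ENNReal.ofReal r < b → w r = c - ∫ s in (0:ℝ)..r, f s) →
      ∀ r₀, 0 ≤ r₀ → ENNReal.ofReal r₀ < b →
        AEStronglyMeasurable w (volume.restrict (Set.Ioc 0 r₀)) := by
    intro w c f heqw r₀ h0 hb0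
    refine ((aestronglyMeasurable_const (b := c)).sub (primitive_aesm f r₀)).congr ?_
    refine Filter.eventuallyEq_of_mem (MeasureTheory.self_mem_ae_restrict measurableSet_Ioc) ?_
    intro x hx
    exact (heqw x hx.1.le (hDmono hx.2 hb0)).symm
  have hmu₁ := hmeas u₁ ξ₁ _ heq₁u
  have hmv₁ := hmeas v₁ η₁ _ heq₁v
  have hmu₂ := hmeas u₂ ξ₂ _ heq₂u
  have hmv₂ := hmeas v₂ η₂ _ heq₂v
  -- integrability of inner and outer integrands
  have hkv₁ : ∀ r, 0 ≤ r → ENNReal.ofReal r < b →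
      IntervalIntegrable (fun t => v₁ t ^ q * ψ t ^ (n-1)) volume 0 r ∧
      IntervalIntegrable
        (fun s => (∫ t in (0:ℝ)..s, v₁ t ^ q * ψ t ^ (n-1)) / ψ s ^ (n-1)) volume 0 r := by
    intro r hr hrb
    refine key_integrable n hn ψ hψ0 hψpos hψmono v₁ q η₁ hq hη₁.le r hr
      (fun t ht htr => ⟨(hpos t ht.le (hDmono htr hrb)).2.1,
        hv₁ub t ht.le (hDmono htr hrb)⟩) (hmv₁ r hr hrb)
  have hkv₂ : ∀ r, 0 ≤ r → ENNReal.ofReal r < b →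
      IntervalIntegrable (fun t => v₂ t ^ q * ψ t ^ (n-1)) volume 0 r ∧
      IntervalIntegrable
        (fun s => (∫ t in (0:ℝ)..s, v₂ t ^ q * ψ t ^ (n-1)) / ψ s ^ (n-1)) volume 0 r := by
    intro r hr hrb
    refine key_integrable n hn ψ hψ0 hψpos hψmono v₂ q η₂ hq (hη₁.trans hη).le r hr
      (fun t ht htr => ⟨(hpos t ht.le (hDmono htr hrb)).2.2.2,
        hv₂ub t ht.le (hDmono htr hrb)⟩) (hmv₂ r hr hrb)
  have hku₁ : ∀ r, 0 ≤ r → ENNReal.ofReal r < b →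
      IntervalIntegrable (fun t => u₁ t ^ p * ψ t ^ (n-1)) volume 0 r ∧
      IntervalIntegrable
        (fun s => (∫ t in (0:ℝ)..s, u₁ t ^ p * ψ t ^ (n-1)) / ψ s ^ (n-1)) volume 0 r := by
    intro r hr hrb
    refine key_integrable n hn ψ hψ0 hψpos hψmono u₁ p ξ₁ hp (hξ₂.trans_le hξ).le r hr
      (fun t ht htr => ⟨(hpos t ht.le (hDmono htr hrb)).1,
        hu₁ub t ht.le (hDmono htr hrb)⟩) (hmu₁ r hr hrb)
  have hku₂ : ∀ r, 0 ≤ r → ENNReal.ofReal r < b →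
      IntervalIntegrable (fun t => u₂ t ^ p * ψ t ^ (n-1)) volume 0 r ∧
      IntervalIntegrable
        (fun s => (∫ t in (0:ℝ)..s, u₂ t ^ p * ψ t ^ (n-1)) / ψ s ^ (n-1)) volume 0 r := by
    intro r hr hrb
    refine key_integrable n hn ψ hψ0 hψpos hψmono u₂ p ξ₂ hp hξ₂.le r hr
      (fun t ht htr => ⟨(hpos t ht.le (hDmono htr hrb)).2.2.1,
        hu₂ub t ht.le (hDmono htr hrb)⟩) (hmu₂ r hr hrb)
  -- comparison of inner integrals (weak)
  have hinner_mono : ∀ (y₁ y₂ : ℝ → ℝ) (e : ℝ),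
      ∀ s, 0 ≤ s →
      IntervalIntegrable (fun t => y₁ t ^ e * ψ t ^ (n-1)) volume 0 s →
      IntervalIntegrable (fun t => y₂ t ^ e * ψ t ^ (n-1)) volume 0 s →
      (∀ t, 0 < t → t < s → 0 ≤ y₁ t ∧ y₁ t ^ e ≤ y₂ t ^ e) →
      (∫ t in (0:ℝ)..s, y₁ t ^ e * ψ t ^ (n-1)) ≤
        ∫ t in (0:ℝ)..s, y₂ t ^ e * ψ t ^ (n-1) := by
    intro y₁ y₂ e s hs h1 h2 hcmp
    refine intervalIntegral.integral_mono_ae_restrict hs h1 h2 ?_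
    have hne : ∀ᵐ (t:ℝ) ∂(volume.restrict (Set.Icc 0 s)), t ≠ s := by
      refine Filter.Eventually.filter_mono (MeasureTheory.ae_mono Measure.restrict_le_self) ?_
      rw [MeasureTheory.ae_iff]
      have hset : {t : ℝ | ¬ t ≠ s} = {s} := by ext t; simp
      rw [hset]
      exact measure_singleton s
    filter_upwards [hne, MeasureTheory.ae_restrict_mem measurableSet_Icc] with t hts htmem
    rcases eq_or_lt_of_le htmem.1 with h | h
    · simp [← h, hψ0pow]
    · have htlt : t < s := lt_of_le_of_ne htmem.2 hts
      have := hcmp t h htlt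
      exact mul_le_mul_of_nonneg_right this.2 (pow_nonneg (hψnn t h.le) _)
  -- strict comparison of inner integrals
  have hinner_lt : ∀ (y₁ y₂ : ℝ → ℝ) (e : ℝ), 0 < e →
      ∀ s, 0 < s →
      IntervalIntegrable (fun t => y₁ t ^ e * ψ t ^ (n-1)) volume 0 s →
      IntervalIntegrable (fun t => y₂ t ^ e * ψ t ^ (n-1)) volume 0 s →
      (∀ t, 0 < t → t < s → 0 < y₁ t ∧ y₁ t < y₂ t) →
      0 < (∫ t in (0:ℝ)..s, y₂ t ^ e * ψ t ^ (n-1)) -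
        ∫ t in (0:ℝ)..s, y₁ t ^ e * ψ t ^ (n-1) := by
    intro y₁ y₂ e he s hs h1 h2 hcmp
    rw [← intervalIntegral.integral_sub h2 h1]
    refine intervalIntegral.intervalIntegral_pos_of_pos_on (h2.sub h1) ?_ hs
    intro t ht
    have hc := hcmp t ht.1 ht.2
    have hrp : y₁ t ^ e < y₂ t ^ e := Real.rpow_lt_rpow hc.1.le hc.2 he
    have hψt : 0 < ψ t ^ (n-1) := pow_pos (hψpos t ht.1) _
    nlinarith
  -- difference formulas
  have hwformula : ∀ r, 0 ≤ r → ENNReal.ofReal r < b →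
      u₁ r - u₂ r = (ξ₁ - ξ₂) + ∫ s in (0:ℝ)..r,
        ((∫ t in (0:ℝ)..s, v₂ t ^ q * ψ t ^ (n-1)) / ψ s ^ (n-1) -
         (∫ t in (0:ℝ)..s, v₁ t ^ q * ψ t ^ (n-1)) / ψ s ^ (n-1)) := by
    intro r hr hrb
    rw [heq₁u r hr hrb, heq₂u r hr hrb,
      intervalIntegral.integral_sub (hkv₂ r hr hrb).2 (hkv₁ r hr hrb).2]
    ring
  have hzformula : ∀ r, 0 ≤ r → ENNReal.ofReal r < b →
      v₂ r - v₁ r = (η₂ - η₁) + ∫ s in (0:ℝ)..r,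
        ((∫ t in (0:ℝ)..s, u₁ t ^ p * ψ t ^ (n-1)) / ψ s ^ (n-1) -
         (∫ t in (0:ℝ)..s, u₂ t ^ p * ψ t ^ (n-1)) / ψ s ^ (n-1)) := by
    intro r hr hrb
    rw [heq₁v r hr hrb, heq₂v r hr hrb,
      intervalIntegral.integral_sub (hku₁ r hr hrb).2 (hku₂ r hr hrb).2]
    ring
  -- step 1 : v₁ < v₂ everywhere on the domain
  have hv : ∀ r, 0 ≤ r → ENNReal.ofReal r < b → v₁ r < v₂ r := by
    by_contra hcon
    push_neg at hcon
    obtain ⟨c, hc0, hcb, hcv⟩ := hcon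
    set B : Set ℝ := {r | 0 ≤ r ∧ ENNReal.ofReal r < b ∧ v₂ r ≤ v₁ r} with hBdef
    have hBne : B.Nonempty := ⟨c, hc0, hcb, hcv⟩
    have hBbdd : BddBelow B := ⟨0, fun x hx => hx.1⟩
    set R : ℝ := sInf B with hRdef
    have hR0 : 0 ≤ R := le_csInf hBne (fun x hx => hx.1)
    have hRc : R ≤ c := csInf_le hBbdd ⟨hc0, hcb, hcv⟩
    have hRb : ENNReal.ofReal R < b := hDmono hRc hcb
    have hbelow : ∀ t, 0 ≤ t → t < R → v₁ t < v₂ t := by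
      intro t ht htR
      by_contra hle
      push_neg at hle
      have htB : t ∈ B := ⟨ht, hDmono (htR.le.trans hRc) hcb, hle⟩
      exact absurd (csInf_le hBbdd htB) (not_le.mpr htR)
    -- u ordering on [0, R]
    have huR : ∀ ρ, 0 ≤ ρ → ρ ≤ R → u₂ ρ ≤ u₁ ρ := by
      intro ρ hρ0 hρR
      have hρb : ENNReal.ofReal ρ < b := hDmono (hρR.trans hRc) hcb
      rw [← sub_nonneg, hwformula ρ hρ0 hρb]
      have hint : 0 ≤ ∫ s in (0:ℝ)..ρ,
          ((∫ t in (0:ℝ)..s, v₂ t ^ q * ψ t ^ (n-1)) / ψ s ^ (n-1) -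
           (∫ t in (0:ℝ)..s, v₁ t ^ q * ψ t ^ (n-1)) / ψ s ^ (n-1)) := by
        refine intervalIntegral.integral_nonneg hρ0 ?_
        intro s hsIcc
        have hsb : ENNReal.ofReal s < b := hDmono (hsIcc.2.trans (hρR.trans hRc)) hcb
        have hGle := hinner_mono v₁ v₂ q s hsIcc.1 (hkv₁ s hsIcc.1 hsb).1 (hkv₂ s hsIcc.1 hsb).1
          (fun t ht hts => by
            have htb : ENNReal.ofReal t < b := hDmono (hts.le.trans (hsIcc.2.trans (hρR.trans hRc))) hcb
            have hv12 := hbelow t ht.le (lt_of_lt_of_le hts (hsIcc.2.trans hρR))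
            exact ⟨(hpos t ht.le htb).2.1.le,
              Real.rpow_le_rpow (hpos t ht.le htb).2.1.le hv12.le hq.le⟩)
        have := div_nonneg (sub_nonneg.mpr hGle) (pow_nonneg (hψnn s hsIcc.1) (n-1))
        rw [sub_div] at this
        linarith
      linarith
    -- strict v ordering at R
    have hzR : 0 < v₂ R - v₁ R := by
      rw [hzformula R hR0 hRb]
      have hint : 0 ≤ ∫ s in (0:ℝ)..R,
          ((∫ t in (0:ℝ)..s, u₁ t ^ p * ψ t ^ (n-1)) / ψ s ^ (n-1) -
           (∫ t in (0:ℝ)..s, u₂ t ^ p * ψ t ^ (n-1)) / ψ s ^ (n-1)) := by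
        refine intervalIntegral.integral_nonneg hR0 ?_
        intro s hsIcc
        have hsb : ENNReal.ofReal s < b := hDmono (hsIcc.2.trans hRc) hcb
        have hGle := hinner_mono u₂ u₁ p s hsIcc.1 (hku₂ s hsIcc.1 hsb).1 (hku₁ s hsIcc.1 hsb).1
          (fun t ht hts => by
            have htb : ENNReal.ofReal t < b := hDmono (hts.le.trans (hsIcc.2.trans hRc)) hcb
            have hu21 := huR t ht.le (hts.le.trans hsIcc.2)
            exact ⟨(hpos t ht.le htb).2.2.1.le,
              Real.rpow_le_rpow (hpos t ht.le htb).2.2.1.le hu21 hp.le⟩)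
        have := div_nonneg (sub_nonneg.mpr hGle) (pow_nonneg (hψnn s hsIcc.1) (n-1))
        rw [sub_div] at this
        linarith
      linarith
    have hRnotB : R ∉ B := by
      intro hRB
      have := hRB.2.2
      linarith
    rcases eq_or_lt_of_le hRc with heqRc | hltRc
    · exact hRnotB (heqRc ▸ (⟨hc0, hcb, hcv⟩ : c ∈ B))
    · -- continuity of v₂ - v₁ on Icc 0 c
      have hIIz : IntervalIntegrable
          (fun s => (∫ t in (0:ℝ)..s, u₁ t ^ p * ψ t ^ (n-1)) / ψ s ^ (n-1) -
            (∫ t in (0:ℝ)..s, u₂ t ^ p * ψ t ^ (n-1)) / ψ s ^ (n-1)) volume 0 c :=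
        (hku₁ c hc0 hcb).2.sub (hku₂ c hc0 hcb).2
      have hIO : IntegrableOn
          (fun s => (∫ t in (0:ℝ)..s, u₁ t ^ p * ψ t ^ (n-1)) / ψ s ^ (n-1) -
            (∫ t in (0:ℝ)..s, u₂ t ^ p * ψ t ^ (n-1)) / ψ s ^ (n-1)) (Set.uIcc 0 c) volume := by
        rw [Set.uIcc_of_le hc0, integrableOn_Icc_iff_integrableOn_Ioc]
        exact hIIz.1
      have hprim := intervalIntegral.continuousOn_primitive_interval hIO
      rw [Set.uIcc_of_le hc0] at hprim
      have hzcont : ContinuousOn (fun r => v₂ r - v₁ r) (Set.Icc 0 c) := by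
        refine ((continuousOn_const (c := η₂ - η₁)).add hprim).congr ?_
        intro r hr
        exact hzformula r hr.1 (hDmono hr.2 hcb)
      have hcwa := hzcont R ⟨hR0, hRc⟩
      have hev : (fun r => v₂ r - v₁ r) ⁻¹' (Set.Ioi 0) ∈ nhdsWithin R (Set.Icc 0 c) :=
        hcwa (Ioi_mem_nhds hzR)
      rw [Metric.mem_nhdsWithin_iff] at hev
      obtain ⟨ε, hε, hball⟩ := hev
      have hδ : 0 < min ε (c - R) := lt_min hε (by linarith)
      obtain ⟨x, hxB, hxlt⟩ := exists_lt_of_csInf_lt hBne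
        (show sInf B < R + min ε (c - R) by rw [← hRdef]; linarith)
      have hxR : R ≤ x := csInf_le hBbdd hxB
      have hxc : x ≤ c := by
        have := min_le_right ε (c - R)
        linarith
      have hxball : x ∈ Metric.ball R ε := by
        rw [Metric.mem_ball, Real.dist_eq, abs_of_nonneg (by linarith)]
        have := min_le_left ε (c - R)
        linarith
      have hxpos : 0 < v₂ x - v₁ x := hball ⟨hxball, hxB.1, hxc⟩
      have := hxB.2.2
      linarith
  -- step 2 : u₂ ≤ u₁ everywhere
  have hGv_le : ∀ s, 0 ≤ s → ENNReal.ofReal s < b →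
      (∫ t in (0:ℝ)..s, v₁ t ^ q * ψ t ^ (n-1)) ≤
        ∫ t in (0:ℝ)..s, v₂ t ^ q * ψ t ^ (n-1) := by
    intro s hs hsb
    refine hinner_mono v₁ v₂ q s hs (hkv₁ s hs hsb).1 (hkv₂ s hs hsb).1 ?_
    intro t ht hts
    have htb : ENNReal.ofReal t < b := hDmono hts.le hsb
    exact ⟨(hpos t ht.le htb).2.1.le,
      Real.rpow_le_rpow (hpos t ht.le htb).2.1.le (hv t ht.le htb).le hq.le⟩
  have hu_le : ∀ r, 0 ≤ r → ENNReal.ofReal r < b → u₂ r ≤ u₁ r := by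
    intro r hr hrb
    rw [← sub_nonneg, hwformula r hr hrb]
    have hint : 0 ≤ ∫ s in (0:ℝ)..r,
        ((∫ t in (0:ℝ)..s, v₂ t ^ q * ψ t ^ (n-1)) / ψ s ^ (n-1) -
         (∫ t in (0:ℝ)..s, v₁ t ^ q * ψ t ^ (n-1)) / ψ s ^ (n-1)) := by
      refine intervalIntegral.integral_nonneg hr ?_
      intro s hsIcc
      have hsb : ENNReal.ofReal s < b := hDmono hsIcc.2 hrb
      have hGle := hGv_le s hsIcc.1 hsb
      have := div_nonneg (sub_nonneg.mpr hGle) (pow_nonneg (hψnn s hsIcc.1) (n-1))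
      rw [sub_div] at this
      linarith
    linarith
  -- strict difference of inner v-integrals
  have hGv_lt : ∀ s, 0 < s → ENNReal.ofReal s < b →
      0 < (∫ t in (0:ℝ)..s, v₂ t ^ q * ψ t ^ (n-1)) -
        ∫ t in (0:ℝ)..s, v₁ t ^ q * ψ t ^ (n-1) := by
    intro s hs hsb
    refine hinner_lt v₁ v₂ q hq s hs (hkv₁ s hs.le hsb).1 (hkv₂ s hs.le hsb).1 ?_
    intro t ht hts
    have htb : ENNReal.ofReal t < b := hDmono hts.le hsb
    exact ⟨(hpos t ht.le htb).2.1, hv t ht.le htb⟩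
  -- strict u ordering
  have hu_lt : ∀ r, 0 < r → ENNReal.ofReal r < b → u₂ r < u₁ r := by
    intro r hr hrb
    rw [← sub_pos, hwformula r hr.le hrb]
    have hint : 0 < ∫ s in (0:ℝ)..r,
        ((∫ t in (0:ℝ)..s, v₂ t ^ q * ψ t ^ (n-1)) / ψ s ^ (n-1) -
         (∫ t in (0:ℝ)..s, v₁ t ^ q * ψ t ^ (n-1)) / ψ s ^ (n-1)) := by
      refine intervalIntegral.intervalIntegral_pos_of_pos_on
        ((hkv₂ r hr.le hrb).2.sub (hkv₁ r hr.le hrb).2) ?_ hr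
      intro s hs
      have hsb : ENNReal.ofReal s < b := hDmono hs.2.le hrb
      have hG := hGv_lt s hs.1 hsb
      have hψs : 0 < ψ s ^ (n-1) := pow_pos (hψpos s hs.1) _
      have := div_pos hG hψs
      rw [sub_div] at this
      linarith
    linarith
  -- strict difference of inner u-integrals
  have hHu_lt : ∀ s, 0 < s → ENNReal.ofReal s < b →
      0 < (∫ t in (0:ℝ)..s, u₁ t ^ p * ψ t ^ (n-1)) -
        ∫ t in (0:ℝ)..s, u₂ t ^ p * ψ t ^ (n-1) := by
    intro s hs hsb
    refine hinner_lt u₂ u₁ p hp s hs (hku₂ s hs.le hsb).1 (hku₁ s hs.le hsb).1 ?_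
    intro t ht hts
    have htb : ENNReal.ofReal t < b := hDmono hts.le hsb
    exact ⟨(hpos t ht.le htb).2.2.1, hu_lt t ht htb⟩
  -- conclusion
  refine ⟨?_, ?_, fun r hr hrb => ⟨hu_lt r hr hrb, hv r hr.le hrb⟩⟩
  · intro r₁ h₁ r₂ h₂ h₁₂
    simp only [Set.mem_setOf_eq] at h₁ h₂
    have hw₁ := hwformula r₁ h₁.1.le h₁.2
    have hw₂ := hwformula r₂ h₂.1.le h₂.2
    have hII₂ : IntervalIntegrable
        (fun s => (∫ t in (0:ℝ)..s, v₂ t ^ q * ψ t ^ (n-1)) / ψ s ^ (n-1) -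
          (∫ t in (0:ℝ)..s, v₁ t ^ q * ψ t ^ (n-1)) / ψ s ^ (n-1)) volume 0 r₂ :=
      (hkv₂ r₂ h₂.1.le h₂.2).2.sub (hkv₁ r₂ h₂.1.le h₂.2).2
    have hII₁ : IntervalIntegrable
        (fun s => (∫ t in (0:ℝ)..s, v₂ t ^ q * ψ t ^ (n-1)) / ψ s ^ (n-1) -
          (∫ t in (0:ℝ)..s, v₁ t ^ q * ψ t ^ (n-1)) / ψ s ^ (n-1)) volume 0 r₁ :=
      hII₂.mono_set (by
        rw [Set.uIcc_of_le h₁.1.le, Set.uIcc_of_le h₂.1.le]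
        exact Set.Icc_subset_Icc le_rfl h₁₂.le)
    have hsplit := intervalIntegral.integral_interval_sub_left hII₂ hII₁
    have hmid : 0 < ∫ s in r₁..r₂,
        ((∫ t in (0:ℝ)..s, v₂ t ^ q * ψ t ^ (n-1)) / ψ s ^ (n-1) -
         (∫ t in (0:ℝ)..s, v₁ t ^ q * ψ t ^ (n-1)) / ψ s ^ (n-1)) := by
      refine intervalIntegral.intervalIntegral_pos_of_pos_on
        (hII₂.mono_set (by
          rw [Set.uIcc_of_le h₁₂.le, Set.uIcc_of_le h₂.1.le]
          exact Set.Icc_subset_Icc h₁.1.le le_rfl)) ?_ h₁₂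
      intro s hs
      have hs0 : 0 < s := h₁.1.trans hs.1
      have hsb : ENNReal.ofReal s < b := hDmono hs.2.le h₂.2
      have hG := hGv_lt s hs0 hsb
      have hψs : 0 < ψ s ^ (n-1) := pow_pos (hψpos s hs0) _
      have := div_pos hG hψs
      rw [sub_div] at this
      linarith
    simp only
    linarith [hsplit, hmid, hw₁, hw₂]
  · intro r₁ h₁ r₂ h₂ h₁₂
    simp only [Set.mem_setOf_eq] at h₁ h₂
    have hw₁ := hzformula r₁ h₁.1.le h₁.2
    have hw₂ := hzformula r₂ h₂.1.le h₂.2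
    have hII₂ : IntervalIntegrable
        (fun s => (∫ t in (0:ℝ)..s, u₁ t ^ p * ψ t ^ (n-1)) / ψ s ^ (n-1) -
          (∫ t in (0:ℝ)..s, u₂ t ^ p * ψ t ^ (n-1)) / ψ s ^ (n-1)) volume 0 r₂ :=
      (hku₁ r₂ h₂.1.le h₂.2).2.sub (hku₂ r₂ h₂.1.le h₂.2).2
    have hII₁ : IntervalIntegrable
        (fun s => (∫ t in (0:ℝ)..s, u₁ t ^ p * ψ t ^ (n-1)) / ψ s ^ (n-1) -
          (∫ t in (0:ℝ)..s, u₂ t ^ p * ψ t ^ (n-1)) / ψ s ^ (n-1)) volume 0 r₁ :=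
      hII₂.mono_set (by
        rw [Set.uIcc_of_le h₁.1.le, Set.uIcc_of_le h₂.1.le]
        exact Set.Icc_subset_Icc le_rfl h₁₂.le)
    have hsplit := intervalIntegral.integral_interval_sub_left hII₂ hII₁
    have hmid : 0 < ∫ s in r₁..r₂,
        ((∫ t in (0:ℝ)..s, u₁ t ^ p * ψ t ^ (n-1)) / ψ s ^ (n-1) -
         (∫ t in (0:ℝ)..s, u₂ t ^ p * ψ t ^ (n-1)) / ψ s ^ (n-1)) := by
      refine intervalIntegral.intervalIntegral_pos_of_pos_on
        (hII₂.mono_set (by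
          rw [Set.uIcc_of_le h₁₂.le, Set.uIcc_of_le h₂.1.le]
          exact Set.Icc_subset_Icc h₁.1.le le_rfl)) ?_ h₁₂
      intro s hs
      have hs0 : 0 < s := h₁.1.trans hs.1
      have hsb : ENNReal.ofReal s < b := hDmono hs.2.le h₂.2
      have hG := hHu_lt s hs0 hsb
      have hψs : 0 < ψ s ^ (n-1) := pow_pos (hψpos s hs0) _
      have := div_pos hG hψs
      rw [sub_div] at this
      linarith
    simp only
    linarith [hsplit, hmid, hw₁, hw₂]
end

section
/- Let ψ be as above and let (u,v) solve the radial Lane-Emden system on (0,T) with u'(0)=v'(0)=0. Define the Pohozaev function P(r) = (∫_0^r ψ^{n-1} ds)·F(r) + ψ^{n-1}(r)·(u(r)v'(r)/(p+1) + u'(r)v(r)/(q+1)), where F(r) = u'v' + |u|^{p+1}/(p+1) + |v|^{q+1}/(q+1). Then P'(r) = K(r)u'(r)v'(r), where K(r) = (1/(p+1) + 1/(q+1) - (n-2)/n)·ψ^{n-1}(r) - (2(n-1)/n)·(∫_0^r ψ^n ψ''/(ψ')² ds)·(ψ'(r)/ψ(r)). -/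
open Filter MeasureTheory Set
open scoped ENNReal

section helper

lemma abs_rpow_hasDerivAt {p : ℝ} (hp : 0 < p) (x : ℝ) :
    HasDerivAt (fun y : ℝ => |y| ^ (p + 1)) ((p + 1) * |x| ^ (p - 1) * x) x := by
  rcases lt_trichotomy x 0 with hx | rfl | hx
  · have hnx : (0:ℝ) < -x := by linarith
    have h1 : HasDerivAt (fun y : ℝ => (-y) ^ (p + 1)) ((p + 1) * (-x) ^ (p + 1 - 1) * (-1)) x :=
      (Real.hasDerivAt_rpow_const (x := -x) (p := p + 1) (Or.inl hnx.ne')).comp x (hasDerivAt_neg x)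
    have h2 : (fun y : ℝ => |y| ^ (p + 1)) =ᶠ[nhds x] (fun y : ℝ => (-y) ^ (p + 1)) := by
      filter_upwards [eventually_lt_nhds hx] with y hy
      rw [abs_of_neg hy]
    refine (h1.congr_of_eventuallyEq h2).congr_deriv ?_
    rw [abs_of_neg hx]
    have h3 : (-x) ^ (p + 1 - 1) = (-x) ^ (p - 1) * (-x) := by
      rw [← Real.rpow_add_one hnx.ne']; ring_nf
    rw [h3]; ring
  · simp only [abs_zero, mul_zero]
    have hf0 : |(0:ℝ)| ^ (p + 1) = 0 := by
      simp [Real.zero_rpow (by linarith : p + 1 ≠ 0)]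
    rw [hasDerivAt_iff_tendsto_slope]
    have hb : Tendsto (fun y : ℝ => |y| ^ p) (nhds 0) (nhds 0) := by
      have hc : ContinuousAt (fun y : ℝ => |y| ^ p) 0 :=
        ContinuousAt.comp (x := (0:ℝ)) (g := fun z : ℝ => z ^ p)
          (by simpa using Real.continuousAt_rpow_const 0 p (Or.inr hp.le))
          continuous_abs.continuousAt
      simpa [Real.zero_rpow hp.ne'] using hc.tendsto
    apply squeeze_zero_norm' (a := fun y : ℝ => |y| ^ p)
    · filter_upwards [self_mem_nhdsWithin] with y (hy : y ≠ 0)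
      have hs : slope (fun y : ℝ => |y| ^ (p + 1)) 0 y = |y| ^ (p + 1) / y := by
        simp [slope, Real.zero_rpow (show p + 1 ≠ 0 by linarith)]
        ring
      rw [Real.norm_eq_abs, hs, Real.rpow_add_one (abs_ne_zero.2 hy),
        abs_div, abs_mul, abs_abs, abs_of_nonneg (Real.rpow_nonneg (abs_nonneg y) p),
        mul_div_assoc, div_self (abs_ne_zero.2 hy), mul_one]
    · exact hb.mono_left nhdsWithin_le_nhds
  · have h1 : HasDerivAt (fun y : ℝ => y ^ (p + 1)) ((p + 1) * x ^ (p + 1 - 1)) x :=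
      Real.hasDerivAt_rpow_const (Or.inl hx.ne')
    have h2 : (fun y : ℝ => |y| ^ (p + 1)) =ᶠ[nhds x] (fun y : ℝ => y ^ (p + 1)) := by
      filter_upwards [eventually_gt_nhds hx] with y hy
      rw [abs_of_pos hy]
    refine (h1.congr_of_eventuallyEq h2).congr_deriv ?_
    rw [abs_of_pos hx]
    have h3 : x ^ (p + 1 - 1) = x ^ (p - 1) * x := by
      rw [← Real.rpow_add_one hx.ne']; ring_nf
    rw [h3]; ring

lemma abs_rpow_split {p : ℝ} (hp : 0 < p) (x : ℝ) :
    |x| ^ (p + 1) = |x| ^ (p - 1) * x * x := by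
  rcases eq_or_ne x 0 with rfl | hx
  · simp [Real.zero_rpow (by linarith : p + 1 ≠ 0)]
  · have h : |x| ^ (p + 1) = |x| ^ (p - 1) * |x| ^ (2:ℝ) := by
      rw [← Real.rpow_add (abs_pos.2 hx)]; ring_nf
    rw [h, show ((2:ℝ)) = ((2:ℕ):ℝ) by norm_num, Real.rpow_natCast, sq_abs]
    ring

lemma key_identity (n : ℕ) (hn : 3 ≤ n) (ψ ψ' ψ'' : ℝ → ℝ) (hψ0 : ψ 0 = 0)
    (hψ'0 : HasDerivAt ψ 1 0) (hψcont : ContinuousOn ψ (Ici 0))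
    (hψpos : ∀ r > (0:ℝ), 0 < ψ r) (hψ'pos : ∀ r > (0:ℝ), 0 < ψ' r)
    (hψd : ∀ r > (0:ℝ), HasDerivAt ψ (ψ' r) r)
    (hψd' : ∀ r > (0:ℝ), HasDerivAt ψ' (ψ'' r) r)
    (hint : ∀ r > (0:ℝ), IntervalIntegrable
      (fun s => ψ s ^ n * ψ'' s / (ψ' s) ^ 2) volume 0 r)
    (r : ℝ) (hr : 0 < r) :
    (∫ t in (0:ℝ)..r, ψ t ^ (n-1)) =
      ψ r ^ n / (n * ψ' r) + (1/(n:ℝ)) * ∫ s in (0:ℝ)..r, ψ s ^ n * ψ'' s / (ψ' s) ^ 2 := by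
  obtain ⟨m, rfl⟩ : ∃ m, n = m + 3 := ⟨n - 3, by omega⟩
  set n : ℕ := m + 3 with hnn
  have hn0 : (0:ℝ) < (n:ℝ) := by positivity
  set g : ℝ → ℝ := fun s => ψ s ^ n / (n * ψ' s) with hg
  set h : ℝ → ℝ := fun s => ψ s ^ (n-1) - (1/(n:ℝ)) * (ψ s ^ n * ψ'' s / (ψ' s)^2) with hh
  have hgderiv : ∀ s > (0:ℝ), HasDerivAt g (h s) s := by
    intro s hs
    have h1 := (hψd s hs).pow n
    have h2 := ((hψd' s hs).const_mul (n:ℝ))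
    have hψ's := hψ'pos s hs
    have hd := h1.div h2 (by positivity)
    refine hd.congr_deriv ?_
    have e1 : n - 1 = m + 2 := rfl
    simp only [hh, e1, Pi.pow_apply]
    field_simp
  have hsub : uIcc (0:ℝ) r ⊆ Ici 0 := by
    rw [uIcc_of_le hr.le]; exact Icc_subset_Ici_self
  have hint1 : IntervalIntegrable (fun s => ψ s ^ (n-1)) volume 0 r :=
    ((hψcont.mono hsub).pow _).intervalIntegrable
  have hint2 : IntervalIntegrable (fun s => (1/(n:ℝ)) * (ψ s ^ n * ψ'' s / (ψ' s)^2)) volume 0 r :=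
    (hint r hr).const_mul _
  have hinth : IntervalIntegrable h volume 0 r := hint1.sub hint2
  have key : ∀ ε ∈ Ioo (0:ℝ) r, (∫ s in ε..r, h s) = g r - g ε := by
    intro ε hε
    apply intervalIntegral.integral_eq_sub_of_hasDerivAt
    · intro x hx
      rw [uIcc_of_le hε.2.le] at hx
      exact hgderiv x (lt_of_lt_of_le hε.1 hx.1)
    · exact hinth.mono_set (by
        rw [uIcc_of_le hε.2.le, uIcc_of_le hr.le]
        exact Icc_subset_Icc hε.1.le le_rfl)
  -- primitive tends to 0
  have ht0 : Tendsto (fun ε => ∫ s in (0:ℝ)..ε, h s) (nhdsWithin 0 (Ioi 0)) (nhds 0) := by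
    have hc := intervalIntegral.continuousOn_primitive_interval' hinth left_mem_uIcc
    have hc0 := hc 0 left_mem_uIcc
    have h2 : Tendsto (fun ε => ∫ s in (0:ℝ)..ε, h s) (nhdsWithin 0 (uIcc 0 r)) (nhds 0) := by
      have := hc0.tendsto
      simpa using this
    refine h2.mono_left ?_
    rw [uIcc_of_le hr.le, ← nhdsWithin_Ioc_eq_nhdsGT hr]
    exact nhdsWithin_mono _ Ioc_subset_Icc_self
  -- g tends to L
  set J : ℝ := ∫ s in (0:ℝ)..r, h s with hJ
  set L : ℝ := g r - J with hL
  clear_value L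
  have hgL : Tendsto g (nhdsWithin 0 (Ioi 0)) (nhds L) := by
    have hev : ∀ᶠ ε in nhdsWithin (0:ℝ) (Ioi 0),
        g ε = g r - J + ∫ s in (0:ℝ)..ε, h s := by
      filter_upwards [Ioo_mem_nhdsGT_of_mem (Set.left_mem_Ico.2 hr)] with ε hε
      have hsplit : J - (∫ s in (0:ℝ)..ε, h s) = ∫ s in ε..r, h s :=
        intervalIntegral.integral_interval_sub_left hinth
          (hinth.mono_set (by
            rw [uIcc_of_le hε.1.le, uIcc_of_le hr.le]
            exact Icc_subset_Icc le_rfl hε.2.le))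
      have := key ε hε
      linarith [hsplit, this]
    have : Tendsto (fun ε => g r - J + ∫ s in (0:ℝ)..ε, h s)
        (nhdsWithin 0 (Ioi 0)) (nhds (g r - J + 0)) :=
      (tendsto_const_nhds.add ht0)
    rw [add_zero] at this
    rw [hL]
    exact (Filter.tendsto_congr' hev).2 this
  -- L ≥ 0
  have hL0 : 0 ≤ L := by
    refine ge_of_tendsto hgL ?_
    filter_upwards [self_mem_nhdsWithin] with ε (hε : ε ∈ Ioi (0:ℝ))
    have := hψpos ε hε
    have := hψ'pos ε hε
    positivity
  -- L ≤ 0 by contradiction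
  have hL1 : L ≤ 0 := by
    by_contra hc
    push_neg at hc
    set C : ℝ := 2 ^ (n+1) / ((n:ℝ) * L) with hC
    have hCpos : 0 < C := by rw [hC]; positivity
    clear_value C
    have ev1 : ∀ᶠ ε in nhdsWithin (0:ℝ) (Ioi 0), L/2 ≤ g ε :=
      hgL.eventually (eventually_ge_nhds (by linarith))
    have hslope : Tendsto (fun ε => ψ ε / ε) (nhdsWithin (0:ℝ) (Ioi 0)) (nhds 1) := by
      have h1 := hasDerivAt_iff_tendsto_slope.1 hψ'0
      have h2 : Tendsto (slope ψ 0) (nhdsWithin (0:ℝ) (Ioi 0)) (nhds 1) :=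
        h1.mono_left (nhdsWithin_mono _ (fun x hx => ne_of_gt hx))
      refine (Filter.tendsto_congr' ?_).1 h2
      filter_upwards [self_mem_nhdsWithin] with ε (hε : ε ∈ Ioi (0:ℝ))
      simp [slope, hψ0, div_eq_inv_mul]
    have ev2 : ∀ᶠ ε in nhdsWithin (0:ℝ) (Ioi 0), ψ ε ≤ 2 * ε ∧ ε/2 ≤ ψ ε := by
      have e1 := hslope.eventually (eventually_le_nhds (show (1:ℝ) < 2 by norm_num))
      have e2 := hslope.eventually (eventually_ge_nhds (show (1:ℝ)/2 < 1 by norm_num))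
      filter_upwards [e1, e2, self_mem_nhdsWithin] with ε h1 h2 (hε : ε ∈ Ioi (0:ℝ))
      have hε0 : (0:ℝ) < ε := hε
      constructor
      · calc ψ ε = (ψ ε / ε) * ε := by field_simp
          _ ≤ 2 * ε := by nlinarith
      · calc ε/2 = (1/2) * ε := by ring
          _ ≤ (ψ ε / ε) * ε := by nlinarith
          _ = ψ ε := by field_simp
    have ev3 : ∀ᶠ ε in nhdsWithin (0:ℝ) (Ioi 0),
        ψ' ε ≤ C * ε ^ n ∧ ε/2 ≤ ψ ε := by
      filter_upwards [ev1, ev2, self_mem_nhdsWithin] with ε h1 h2 (hε : ε ∈ Ioi (0:ℝ))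
      have hε0 : (0:ℝ) < ε := hε
      refine ⟨?_, h2.2⟩
      have hψ'ε := hψ'pos ε hε0
      have hψε := hψpos ε hε0
      -- L/2 ≤ ψ^n/(n ψ') ⇒ ψ' ≤ 2 ψ^n/(n L)
      have hgε : L/2 ≤ ψ ε ^ n / ((n:ℝ) * ψ' ε) := h1
      have h3 : ψ' ε ≤ 2 * ψ ε ^ n / ((n:ℝ) * L) := by
        rw [le_div_iff₀ (by positivity)] at hgε
        rw [le_div_iff₀ (by positivity)]
        linarith [hgε]
      have h4 : ψ ε ^ n ≤ (2*ε) ^ n := pow_le_pow_left₀ hψε.le h2.1 n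
      calc ψ' ε ≤ 2 * ψ ε ^ n / ((n:ℝ) * L) := h3
        _ ≤ 2 * (2*ε) ^ n / ((n:ℝ) * L) := by gcongr
        _ = C * ε ^ n := by rw [hC, mul_pow]; ring
    obtain ⟨δ, hδ, hδsub⟩ := mem_nhdsGT_iff_exists_Ioc_subset.1 ev3
    have hδ0 : (0:ℝ) < δ := hδ
    -- choose b
    have hbev : ∀ᶠ b in nhdsWithin (0:ℝ) (Ioi 0),
        C * b ^ n < 1/2 ∧ b ≤ δ ∧ 0 < b := by
      have ht : Tendsto (fun b : ℝ => C * b ^ n) (nhds 0) (nhds 0) := by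
        have hcp : Continuous fun x : ℝ => C * x ^ n :=
          continuous_const.mul (continuous_pow n)
        have := hcp.tendsto 0
        simpa using this
      have e1 : ∀ᶠ b in nhdsWithin (0:ℝ) (Ioi 0), C * b ^ n < 1/2 :=
        (ht.mono_left nhdsWithin_le_nhds).eventually (eventually_lt_nhds (by norm_num))
      have e2 : ∀ᶠ b in nhdsWithin (0:ℝ) (Ioi 0), b ≤ δ :=
        eventually_nhdsWithin_of_eventually_nhds (eventually_le_nhds hδ0)
      filter_upwards [e1, e2, self_mem_nhdsWithin] with b h1 h2 (h3 : b ∈ Ioi (0:ℝ))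
      exact ⟨h1, h2, h3⟩
    obtain ⟨b, hb1, hb2, hb3⟩ := hbev.exists
    -- MVT bound
    have hMVT : ∀ a ∈ Ioo (0:ℝ) b, ψ b ≤ ψ a + C * b ^ n * b := by
      intro a ha
      obtain ⟨ξ, hξ, hξeq⟩ := exists_hasDerivAt_eq_slope ψ ψ' ha.2
        (hψcont.mono (fun x hx => le_trans ha.1.le hx.1))
        (fun x hx => hψd x (lt_trans ha.1 hx.1))
      have hξδ : ξ ∈ Ioc (0:ℝ) δ := ⟨lt_trans ha.1 hξ.1, le_trans hξ.2.le hb2⟩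
      have hψ'ξ : ψ' ξ ≤ C * ξ ^ n := (hδsub hξδ).1
      have hξb : ξ ^ n ≤ b ^ n := pow_le_pow_left₀ (le_of_lt hξδ.1) hξ.2.le n
      have hba : 0 < b - a := by linarith [ha.2]
      have heq : ψ b - ψ a = ψ' ξ * (b - a) := by
        rw [hξeq]; field_simp
      nlinarith [heq, mul_le_mul_of_nonneg_right hψ'ξ hba.le,
        mul_le_mul_of_nonneg_right (mul_le_mul_of_nonneg_left hξb hCpos.le) hba.le,
        mul_pos hCpos (pow_pos hb3 n), ha.1]
    -- take a → 0
    have hψb : ψ b ≤ C * b ^ n * b := by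
      have htend : Tendsto (fun a => ψ a + C * b ^ n * b)
          (nhdsWithin (0:ℝ) (Ioi 0)) (nhds (0 + C * b ^ n * b)) := by
        refine Tendsto.add ?_ tendsto_const_nhds
        have := (hψcont 0 self_mem_Ici).tendsto
        rw [hψ0] at this
        exact this.mono_left (nhdsWithin_mono _ Ioi_subset_Ici_self)
      have hev : ∀ᶠ a in nhdsWithin (0:ℝ) (Ioi 0), ψ b ≤ ψ a + C * b ^ n * b := by
        filter_upwards [Ioo_mem_nhdsGT_of_mem (Set.left_mem_Ico.2 hb3)] with a ha
        exact hMVT a ha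
      have := ge_of_tendsto htend hev
      linarith
    have hb4 : b/2 ≤ ψ b := (hδsub ⟨hb3, hb2⟩).2
    nlinarith [hb1, hb3, hψb, hb4]
  have hLz : L = 0 := le_antisymm hL1 hL0
  -- conclude
  have hsplit : J = (∫ t in (0:ℝ)..r, ψ t ^ (n-1))
      - (1/(n:ℝ)) * ∫ s in (0:ℝ)..r, ψ s ^ n * ψ'' s / (ψ' s)^2 := by
    rw [hJ, hh]
    rw [intervalIntegral.integral_sub hint1 hint2, intervalIntegral.integral_const_mul]
  have : g r = J := by rw [hL] at hLz; linarith
  rw [hsplit] at this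
  rw [hg] at this
  simp only at this
  linarith

end helper

/-- Pohozaev identity: `P'(r) = K(r) u'(r) v'(r)` along solutions of the radial
Lane-Emden system. -/
theorem pohozaev_derivative
    (n : ℕ) (hn : 3 ≤ n) (ψ ψ' ψ'' : ℝ → ℝ)
    (hψ0 : ψ 0 = 0) (hψ'0 : HasDerivAt ψ 1 0)
    (hψcont : ContinuousOn ψ (Ici 0))
    (T : ℝ≥0∞) (hT : 0 < T)
    (hψpos : ∀ r > (0:ℝ), 0 < ψ r) (hψ'pos : ∀ r > (0:ℝ), 0 < ψ' r)
    (hψd : ∀ r > (0:ℝ), HasDerivAt ψ (ψ' r) r)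
    (hψd' : ∀ r > (0:ℝ), HasDerivAt ψ' (ψ'' r) r)
    (hint : ∀ r > (0:ℝ), IntervalIntegrable
      (fun s => ψ s ^ n * ψ'' s / (ψ' s) ^ 2) volume 0 r)
    (p q : ℝ) (hp : 0 < p) (hq : 0 < q)
    (u v u' v' u'' v'' : ℝ → ℝ)
    (hu'0 : u' 0 = 0) (hv'0 : v' 0 = 0)
    (hud : ∀ r : ℝ, 0 < r → ENNReal.ofReal r < T → HasDerivAt u (u' r) r)
    (hvd : ∀ r : ℝ, 0 < r → ENNReal.ofReal r < T → HasDerivAt v (v' r) r)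
    (hud' : ∀ r : ℝ, 0 < r → ENNReal.ofReal r < T → HasDerivAt u' (u'' r) r)
    (hvd' : ∀ r : ℝ, 0 < r → ENNReal.ofReal r < T → HasDerivAt v' (v'' r) r)
    (hequ : ∀ r : ℝ, 0 < r → ENNReal.ofReal r < T →
      u'' r + (n - 1) * (ψ' r / ψ r) * u' r + |v r| ^ (q - 1) * v r = 0)
    (heqv : ∀ r : ℝ, 0 < r → ENNReal.ofReal r < T →
      v'' r + (n - 1) * (ψ' r / ψ r) * v' r + |u r| ^ (p - 1) * u r = 0) :
    ∀ r : ℝ, 0 < r → ENNReal.ofReal r < T →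
      HasDerivAt
        (fun s => (∫ t in (0:ℝ)..s, ψ t ^ (n-1)) *
            (u' s * v' s + |u s| ^ (p + 1) / (p + 1) + |v s| ^ (q + 1) / (q + 1)) +
          ψ s ^ (n-1) * (u s * v' s / (p + 1) + u' s * v s / (q + 1)))
        (((1 / (p + 1) + 1 / (q + 1) - (n - 2) / n) * ψ r ^ (n-1) -
            (2 * (n - 1) / n) * (∫ s in (0:ℝ)..r, ψ s ^ n * ψ'' s / (ψ' s) ^ 2) *
              (ψ' r / ψ r)) * u' r * v' r) r := by
  intro r hr hrT
  have hkey := key_identity n hn ψ ψ' ψ'' hψ0 hψ'0 hψcont hψpos hψ'pos hψd hψd' hint r hr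
  obtain ⟨m, rfl⟩ : ∃ m, n = m + 3 := ⟨n - 3, by omega⟩
  set n : ℕ := m + 3 with hnn
  -- derivative of the primitive
  have hsub : uIcc (0:ℝ) r ⊆ Ici 0 := by
    rw [uIcc_of_le hr.le]; exact Icc_subset_Ici_self
  have hint1 : IntervalIntegrable (fun s => ψ s ^ (n-1)) volume 0 r :=
    ((hψcont.mono hsub).pow _).intervalIntegrable
  have hψcontIoi : ContinuousOn (fun s => ψ s ^ (n-1)) (Ioi 0) :=
    fun x hx => ((hψd x hx).continuousAt.pow _).continuousWithinAt
  have hA : HasDerivAt (fun s => ∫ t in (0:ℝ)..s, ψ t ^ (n-1)) (ψ r ^ (n-1)) r :=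
    intervalIntegral.integral_hasDerivAt_right hint1
      (hψcontIoi.stronglyMeasurableAtFilter isOpen_Ioi r hr)
      ((hψd r hr).continuousAt.pow _)
  have hF : HasDerivAt
      (fun s => u' s * v' s + |u s| ^ (p + 1) / (p + 1) + |v s| ^ (q + 1) / (q + 1))
      (u'' r * v' r + u' r * v'' r
        + ((p + 1) * |u r| ^ (p - 1) * u r * u' r) / (p + 1)
        + ((q + 1) * |v r| ^ (q - 1) * v r * v' r) / (q + 1)) r := by
    exact (((hud' r hr hrT).mul (hvd' r hr hrT)).add
        (((abs_rpow_hasDerivAt hp (u r)).comp r (hud r hr hrT)).div_const (p+1))).add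
      (((abs_rpow_hasDerivAt hq (v r)).comp r (hvd r hr hrT)).div_const (q+1))
  have hB : HasDerivAt (fun s => ψ s ^ (n-1)) ((↑(n-1) : ℝ) * ψ r ^ (n-1-1) * ψ' r) r :=
    (hψd r hr).pow (n-1)
  have hG : HasDerivAt (fun s => u s * v' s / (p + 1) + u' s * v s / (q + 1))
      ((u' r * v' r + u r * v'' r) / (p + 1) + (u'' r * v r + u' r * v' r) / (q + 1)) r :=
    (((hud r hr hrT).mul (hvd' r hr hrT)).div_const (p+1)).add
      (((hud' r hr hrT).mul (hvd r hr hrT)).div_const (q+1))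
  have hP := (hA.mul hF).add (hB.mul hG)
  refine hP.congr_deriv ?_
  -- now algebra
  have hu'' : u'' r = -((↑n - 1) * (ψ' r / ψ r) * u' r) - |v r| ^ (q - 1) * v r := by
    have := hequ r hr hrT; linarith
  have hv'' : v'' r = -((↑n - 1) * (ψ' r / ψ r) * v' r) - |u r| ^ (p - 1) * u r := by
    have := heqv r hr hrT; linarith
  have hsplitu : |u r| ^ (p + 1) = |u r| ^ (p - 1) * u r * u r := abs_rpow_split hp (u r)
  have hsplitv : |v r| ^ (q + 1) = |v r| ^ (q - 1) * v r * v r := abs_rpow_split hq (v r)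
  rw [hkey, hu'', hv'', hsplitu, hsplitv]
  have hψr : ψ r ≠ 0 := (hψpos r hr).ne'
  have hψ'r : ψ' r ≠ 0 := (hψ'pos r hr).ne'
  have hp1 : p + 1 ≠ 0 := by linarith
  have hq1 : q + 1 ≠ 0 := by linarith
  have e1 : n - 1 = m + 2 := rfl
  have e2 : n - 1 - 1 = m + 1 := rfl
  have hncast : ((n:ℝ)) = (m:ℝ) + 3 := by push_cast [hnn]; ring
  have hn1cast : ((↑(n-1):ℝ)) = (m:ℝ) + 2 := by rw [e1]; push_cast; ring
  have hpn : ψ r ^ n = ψ r ^ (m + 3) := rfl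
  rw [e2, hn1cast]
  simp only [e1, e2, hn1cast, hncast, hpn, Nat.cast_add, Nat.cast_ofNat, pow_succ]
  field_simp
  ring
end

section
/- Let ψ be a Cartan-Hadamard warping function (ψ(0)=0, ψ'(0)=1, ψ'' ≥ 0, ψ > 0 on (0,∞)) and let p,q > 0 satisfy 1/(p+1) + 1/(q+1) ≤ (n-2)/n with n ≥ 3. Then there is no positive solution (u,v) on (0,R) of the radial Lane-Emden system with u'(0)=v'(0)=0, u(0),v(0) > 0, u(R)=v(R)=0 for some R > 0. (Dirichlet nonexistence on balls: if such a solution existed, monotonicity would force u'(R) < 0, v'(R) < 0, and evaluating the Pohozaev function at R yields 0 ≥ P(R) = (∫_0^R ψ^{n-1}) u'(R) v'(R) > 0, a contradiction.) -/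
open Filter MeasureTheory Set
open scoped Topology

set_option maxHeartbeats 4000000

/-- Dirichlet nonexistence on balls: on a Cartan-Hadamard model, in the
critical-supercritical regime, there is no positive radial solution of the
Lane-Emden system on `(0,R)` vanishing (both components) at `r = R`. -/
theorem no_dirichlet_solution_on_ball
    (n : ℕ) (hn : 3 ≤ n) (ψ ψ' : ℝ → ℝ)
    (hψ0 : ψ 0 = 0) (hψ'0 : HasDerivAt ψ 1 0)
    (hψpos : ∀ r > (0:ℝ), 0 < ψ r)
    (hψd : ∀ r > (0:ℝ), HasDerivAt ψ (ψ' r) r)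
    (hψconv : ∀ r > (0:ℝ), ∀ s > (0:ℝ), r ≤ s → ψ' r ≤ ψ' s)
    (hψcont : ContinuousOn ψ (Ici 0))
    (p q : ℝ) (hp : 0 < p) (hq : 0 < q)
    (hcs : 1 / (p + 1) + 1 / (q + 1) ≤ (n - 2) / n)
    (R : ℝ) (hR : 0 < R)
    (u v u' v' : ℝ → ℝ)
    (hucont : ContinuousOn u (Icc 0 R)) (hvcont : ContinuousOn v (Icc 0 R))
    (hu'cont : ContinuousOn u' (Icc 0 R)) (hv'cont : ContinuousOn v' (Icc 0 R))
    (hu'0 : u' 0 = 0) (hv'0 : v' 0 = 0)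
    (hu0 : 0 < u 0) (hv0 : 0 < v 0)
    (hupos : ∀ r ∈ Ioo (0:ℝ) R, 0 < u r) (hvpos : ∀ r ∈ Ioo (0:ℝ) R, 0 < v r)
    (hud : ∀ r ∈ Ioo (0:ℝ) R, HasDerivAt u (u' r) r)
    (hvd : ∀ r ∈ Ioo (0:ℝ) R, HasDerivAt v (v' r) r)
    (hequ : ∀ r ∈ Ioo (0:ℝ) R,
      HasDerivAt (fun s => ψ s ^ (n-1) * u' s) (-(ψ r ^ (n-1) * v r ^ q)) r)
    (heqv : ∀ r ∈ Ioo (0:ℝ) R,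
      HasDerivAt (fun s => ψ s ^ (n-1) * v' s) (-(ψ r ^ (n-1) * u r ^ p)) r)
    (huR : u R = 0) (hvR : v R = 0) :
    False := by
  obtain ⟨k, rfl⟩ : ∃ k, n = k + 2 := ⟨n - 2, by omega⟩
  have hsub : k + 2 - 1 = k + 1 := rfl
  rw [hsub] at hequ heqv
  set K : ℝ := (k : ℝ) with hK
  have hK0 : 0 ≤ K := Nat.cast_nonneg k
  have hp1 : p + 1 ≠ 0 := by positivity
  have hq1 : q + 1 ≠ 0 := by positivity
  -- the weight
  have hψC : ∀ r > (0:ℝ), ContinuousAt ψ r := fun r hr => (hψd r hr).continuousAt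
  have hfcont : ContinuousOn (fun t => ψ t ^ (k+1)) (Icc 0 R) :=
    (hψcont.mono Icc_subset_Ici_self).pow _
  have hfContIoi : ContinuousOn (fun t => ψ t ^ (k+1)) (Ioi (0:ℝ)) := by
    intro x hx
    exact ((hψC x hx).pow _).continuousWithinAt
  have hfint : ∀ r ∈ Icc (0:ℝ) R, IntervalIntegrable (fun t => ψ t ^ (k+1)) volume 0 r := by
    intro r hr
    apply ContinuousOn.intervalIntegrable
    rw [uIcc_of_le hr.1]
    exact hfcont.mono (Icc_subset_Icc le_rfl hr.2)
  set Ψ : ℝ → ℝ := (fun r => ∫ t in (0:ℝ)..r, ψ t ^ (k+1)) with hΨdef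
  have hΨd : ∀ r ∈ Ioo (0:ℝ) R, HasDerivAt Ψ (ψ r ^ (k+1)) r := by
    intro r hr
    exact intervalIntegral.integral_hasDerivAt_right
      (hfint r ⟨hr.1.le, hr.2.le⟩)
      (ContinuousOn.stronglyMeasurableAtFilter isOpen_Ioi hfContIoi r hr.1)
      ((hψC r hr.1).pow _)
  have hΨcont : ContinuousOn Ψ (Icc 0 R) := by
    have := intervalIntegral.continuousOn_primitive_interval
      (f := fun t => ψ t ^ (k+1)) (μ := volume) (a := 0) (b := R)
      (by rw [uIcc_of_le hR.le]; exact hfcont.integrableOn_Icc)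
    rwa [uIcc_of_le hR.le] at this
  have hΨ0 : Ψ 0 = 0 := intervalIntegral.integral_same
  have hΨR : 0 < Ψ R := by
    apply intervalIntegral.intervalIntegral_pos_of_pos_on (hfint R ⟨hR.le, le_rfl⟩) _ hR
    intro x hx
    exact pow_pos (hψpos x hx.1) _
  have hψRpos : 0 < ψ R := hψpos R hR
  -- monotonicity: u' and v' are negative on (0,R]
  have hw : ∀ (w' g : ℝ → ℝ) (e : ℝ), ContinuousOn w' (Icc 0 R) → w' 0 = 0 →
      (∀ r ∈ Ioo (0:ℝ) R, 0 < g r) →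
      (∀ r ∈ Ioo (0:ℝ) R,
        HasDerivAt (fun s => ψ s ^ (k+1) * w' s) (-(ψ r ^ (k+1) * g r ^ e)) r) →
      ∀ r ∈ Ioc (0:ℝ) R, w' r < 0 := by
    intro w' g e hw'cont hw'0 hgpos heq r hr
    have hanti : StrictAntiOn (fun s => ψ s ^ (k+1) * w' s) (Icc 0 R) := by
      apply strictAntiOn_of_deriv_neg (convex_Icc 0 R)
        ((hψcont.mono Icc_subset_Ici_self).pow _ |>.mul hw'cont)
      intro x hx
      rw [interior_Icc] at hx
      rw [show (ψ ^ (k + 1) * w') = (fun s => ψ s ^ (k+1) * w' s) from rfl, (heq x hx).deriv]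
      have h1 : 0 < ψ x ^ (k+1) := pow_pos (hψpos x hx.1) _
      have h2 : 0 < g x ^ e := Real.rpow_pos_of_pos (hgpos x hx) _
      nlinarith
    have := hanti (left_mem_Icc.2 hR.le) ⟨hr.1.le, hr.2⟩ hr.1
    simp only [hψ0, hw'0, zero_pow (Nat.succ_ne_zero k), zero_mul, mul_zero] at this
    have hψr : 0 < ψ r ^ (k+1) := pow_pos (hψpos r hr.1) _
    nlinarith
  have hu'neg : ∀ r ∈ Ioc (0:ℝ) R, u' r < 0 := hw u' v q hu'cont hu'0 hvpos hequ
  have hv'neg : ∀ r ∈ Ioc (0:ℝ) R, v' r < 0 := hw v' u p hv'cont hv'0 hupos heqv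
  -- the key warped-Pohozaev inequality  ψ^(k+2) ≤ (k+2) Ψ ψ'
  have hkey : ∀ r ∈ Ioo (0:ℝ) R, ψ r ^ (k+2) ≤ (K+2) * (Ψ r * ψ' r) := by
    intro r hr
    set H : ℝ → ℝ := fun s => ψ' r * Ψ s - ψ s ^ (k+2) / (K+2) with hHdef
    have hK2 : (0:ℝ) < K + 2 := by positivity
    have hHd : ∀ s ∈ Ioo (0:ℝ) r, HasDerivAt H ((ψ' r - ψ' s) * ψ s ^ (k+1)) s := by
      intro s hs
      have hs' : s ∈ Ioo (0:ℝ) R := ⟨hs.1, hs.2.trans hr.2⟩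
      have h1 := ((hΨd s hs').const_mul (ψ' r)).sub
        (((hψd s hs.1).pow (k+2)).div_const (K+2))
      refine h1.congr_deriv ?_
      have : ((k+2:ℕ):ℝ) = K + 2 := by push_cast [hK]; ring
      rw [this, hsub]
      field_simp
    have hHcont : ContinuousOn H (Icc 0 r) := by
      apply ContinuousOn.sub (hΨcont.mono (Icc_subset_Icc le_rfl hr.2.le) |>.const_smul (ψ' r))
      exact ((hψcont.mono (Icc_subset_Ici_self.trans' (Icc_subset_Icc le_rfl hr.2.le))).pow
        _).div_const _
    have hmono : MonotoneOn H (Icc 0 r) := by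
      apply monotoneOn_of_deriv_nonneg (convex_Icc 0 r) hHcont
      · intro x hx
        rw [interior_Icc] at hx
        exact (hHd x hx).differentiableAt.differentiableWithinAt
      · intro x hx
        rw [interior_Icc] at hx
        rw [(hHd x hx).deriv]
        have h1 : 0 ≤ ψ x ^ (k+1) := (pow_pos (hψpos x hx.1) _).le
        have h2 : ψ' x ≤ ψ' r := hψconv x hx.1 r hr.1 hx.2.le
        nlinarith
    have := hmono (left_mem_Icc.2 hr.1.le) (right_mem_Icc.2 hr.1.le) hr.1.le
    simp only [hHdef, hΨ0, hψ0, mul_zero, zero_pow (Nat.succ_ne_zero (k+1)), zero_div,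
      sub_zero, zero_sub, neg_nonpos] at this
    -- `this : ψ' r * Ψ r - ψ r ^ (k+2) / (K+2) ≥ 0` (in some simp-normalized form)
    rw [sub_nonneg, div_le_iff₀ hK2] at this
    calc ψ r ^ (k+2) ≤ ψ' r * Ψ r * (K+2) := this
      _ = (K+2) * (Ψ r * ψ' r) := by ring
  -- the Pohozaev function
  set P : ℝ → ℝ := fun s => Ψ s * (u' s * v' s + u s ^ (p+1) / (p+1) + v s ^ (q+1) / (q+1))
      + (u s * (ψ s ^ (k+1) * v' s)) / (p+1) + ((ψ s ^ (k+1) * u' s) * v s) / (q+1) with hPdef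
  have hP0 : P 0 = 0 := by
    simp [hPdef, hΨ0, hψ0, hu'0, hv'0]
  have hPR : 0 < P R := by
    have h1 : u' R < 0 := hu'neg R ⟨hR, le_rfl⟩
    have h2 : v' R < 0 := hv'neg R ⟨hR, le_rfl⟩
    have : P R = Ψ R * (u' R * v' R) := by
      simp [hPdef, huR, hvR, Real.zero_rpow hp1, Real.zero_rpow hq1]
    rw [this]
    exact mul_pos hΨR (mul_pos_of_neg_of_neg h1 h2)
  have hPcont : ContinuousOn P (Icc 0 R) := by
    have hurp : ContinuousOn (fun s => u s ^ (p+1)) (Icc 0 R) :=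
      hucont.rpow_const (fun x _ => Or.inr (by positivity))
    have hvrp : ContinuousOn (fun s => v s ^ (q+1)) (Icc 0 R) :=
      hvcont.rpow_const (fun x _ => Or.inr (by positivity))
    exact ((hΨcont.mul (((hu'cont.mul hv'cont).add (hurp.div_const _)).add
      (hvrp.div_const _))).add ((hucont.mul (hfcont.mul hv'cont)).div_const _)).add
      (((hfcont.mul hu'cont).mul hvcont).div_const _)
  have hPd : ∀ r ∈ Ioo (0:ℝ) R, HasDerivAt P
      (u' r * v' r * ((1 + 1/(p+1) + 1/(q+1)) * ψ r ^ (k+1)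
        - 2*(K+1) * Ψ r * ψ' r / ψ r)) r := by
    intro r hr
    have hψr : 0 < ψ r := hψpos r hr.1
    have hψrne : ψ r ≠ 0 := hψr.ne'
    have hfrne : ψ r ^ (k+1) ≠ 0 := pow_ne_zero _ hψrne
    have hU : 0 < u r := hupos r hr
    have hV : 0 < v r := hvpos r hr
    have hcast : ((k+1:ℕ):ℝ) = K+1 := by push_cast [hK]; ring
    have hpowd : HasDerivAt (fun s => ψ s ^ (k+1)) (((k+1:ℕ):ℝ) * ψ r ^ k * ψ' r) r :=
      (hψd r hr.1).pow (k+1)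
    -- second derivative of u
    have hu'' : HasDerivAt u' (-(v r ^ q) - (K+1) * (ψ' r / ψ r) * u' r) r := by
      have hEq : u' =ᶠ[𝓝 r] fun s => (ψ s ^ (k+1) * u' s) / ψ s ^ (k+1) := by
        filter_upwards [isOpen_Ioo.mem_nhds hr] with s hs
        rw [mul_div_cancel_left₀ _ (pow_ne_zero _ (hψpos s hs.1).ne')]
      have hdiv := (hequ r hr).div hpowd hfrne
      have h := hdiv.congr_of_eventuallyEq hEq
      refine h.congr_deriv ?_
      rw [hcast]
      field_simp
      ring
    have hv'' : HasDerivAt v' (-(u r ^ p) - (K+1) * (ψ' r / ψ r) * v' r) r := by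
      have hEq : v' =ᶠ[𝓝 r] fun s => (ψ s ^ (k+1) * v' s) / ψ s ^ (k+1) := by
        filter_upwards [isOpen_Ioo.mem_nhds hr] with s hs
        rw [mul_div_cancel_left₀ _ (pow_ne_zero _ (hψpos s hs.1).ne')]
      have hdiv := (heqv r hr).div hpowd hfrne
      have h := hdiv.congr_of_eventuallyEq hEq
      refine h.congr_deriv ?_
      rw [hcast]
      field_simp
      ring
    have h2 : HasDerivAt (fun s => u s ^ (p+1)) (u' r * (p+1) * u r ^ p) r := by
      have := (hud r hr).rpow_const (p := p+1) (Or.inl hU.ne')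
      rwa [show p+1-1 = p by ring] at this
    have h3 : HasDerivAt (fun s => v s ^ (q+1)) (v' r * (q+1) * v r ^ q) r := by
      have := (hvd r hr).rpow_const (p := q+1) (Or.inl hV.ne')
      rwa [show q+1-1 = q by ring] at this
    have hE : HasDerivAt
        (fun s => u' s * v' s + u s ^ (p+1) / (p+1) + v s ^ (q+1) / (q+1))
        ((-(v r ^ q) - (K+1) * (ψ' r / ψ r) * u' r) * v' r
          + u' r * (-(u r ^ p) - (K+1) * (ψ' r / ψ r) * v' r)
          + u' r * (p+1) * u r ^ p / (p+1) + v' r * (q+1) * v r ^ q / (q+1)) r :=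
      ((hu''.mul hv'').add (h2.div_const _)).add (h3.div_const _)
    have hΨE := (hΨd r hr).mul hE
    have h4 := ((hud r hr).mul (heqv r hr)).div_const (p+1)
    have h5 := ((hequ r hr).mul (hvd r hr)).div_const (q+1)
    have htot := (hΨE.add h4).add h5
    rw [hPdef]
    refine htot.congr_deriv ?_
    rw [Real.rpow_add_one hU.ne' p, Real.rpow_add_one hV.ne' q]
    field_simp
    ring
  have hPd_nonpos : ∀ r ∈ Ioo (0:ℝ) R,
      u' r * v' r * ((1 + 1/(p+1) + 1/(q+1)) * ψ r ^ (k+1)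
        - 2*(K+1) * Ψ r * ψ' r / ψ r) ≤ 0 := by
    intro r hr
    have hψr : 0 < ψ r := hψpos r hr.1
    have hK2 : (0:ℝ) < K + 2 := by positivity
    have hcs' : (1/(p+1) + 1/(q+1)) * (K+2) ≤ K := by
      have h := hcs
      push_cast at h
      rw [hK]
      calc (1/(p+1)+1/(q+1)) * ((k:ℝ)+2)
          ≤ (((k:ℝ)+2-2)/((k:ℝ)+2)) * ((k:ℝ)+2) :=
            mul_le_mul_of_nonneg_right h (by positivity)
        _ = (k:ℝ) := by field_simp; ring
    have hbr : (1 + 1/(p+1) + 1/(q+1)) * ψ r ^ (k+1) - 2*(K+1) * Ψ r * ψ' r / ψ r ≤ 0 := by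
      rw [sub_nonpos, le_div_iff₀ hψr, mul_assoc, ← pow_succ]
      have hk := hkey r hr
      have hX : (0:ℝ) < ψ r ^ (k+2) := pow_pos hψr _
      have hY : 0 < Ψ r * ψ' r := by nlinarith [hX, hk, hK2]
      have hσle : 1/(p+1) + 1/(q+1) ≤ K/(K+2) := by
        rw [le_div_iff₀ hK2]; exact hcs'
      calc (1 + 1/(p+1) + 1/(q+1)) * ψ r ^ (k+1+1)
          = (1 + (1/(p+1) + 1/(q+1))) * ψ r ^ (k+2) := by rw [add_assoc]
        _ ≤ (1 + K/(K+2)) * ψ r ^ (k+2) := by gcongr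
        _ = (2*K+2)/(K+2) * ψ r ^ (k+2) := by field_simp; ring
        _ ≤ (2*K+2)/(K+2) * ((K+2) * (Ψ r * ψ' r)) :=
            mul_le_mul_of_nonneg_left hk (by positivity)
        _ = 2*(K+1) * Ψ r * ψ' r := by field_simp
    have huv : 0 < u' r * v' r :=
      mul_pos_of_neg_of_neg (hu'neg r ⟨hr.1, hr.2.le⟩) (hv'neg r ⟨hr.1, hr.2.le⟩)
    exact mul_nonpos_of_nonneg_of_nonpos huv.le hbr
  have hanti : AntitoneOn P (Icc 0 R) := by
    apply antitoneOn_of_deriv_nonpos (convex_Icc 0 R) hPcont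
    · intro x hx
      rw [interior_Icc] at hx
      exact (hPd x hx).differentiableAt.differentiableWithinAt
    · intro x hx
      rw [interior_Icc] at hx
      rw [(hPd x hx).deriv]
      exact hPd_nonpos x hx
  have := hanti (left_mem_Icc.2 hR.le) (right_mem_Icc.2 hR.le) hR.le
  rw [hP0] at this
  linarith
end

section
/- Let ψ be a warping function with Θ(r) = ψ^{1-n}(r)∫_0^r ψ^{n-1} ∈ L¹(0,∞), and set θ = ∫_0^∞ Θ dr. Let p,q > 0 and let (u,v) be a globally positive solution of the integrated system with u(0)=ξ, v(0)=η. Then the initial data necessarily satisfy ξ ≥ (η - θξ^p)₊^q · θ and η ≥ (ξ - θη^q)₊^p · θ, where x₊ = max(x,0). In particular, for fixed ξ the set of admissible η is bounded and bounded away from zero. -/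
open Filter MeasureTheory Set


private lemma prim_aemeas (f : ℝ → ℝ) (hf : ∀ t ≥ (0:ℝ), 0 ≤ f t)
    (hbdd : ∀ R > (0:ℝ), ∃ C : ℝ, ∀ s ∈ Ioc (0:ℝ) R, (∫ t in (0:ℝ)..s, f t) ≤ C) :
    AEMeasurable (fun s => ∫ t in (0:ℝ)..s, f t) (volume.restrict (Ioi (0:ℝ))) := by
  have key : ∀ R : ℝ, 0 < R → AEMeasurable (fun s => ∫ t in (0:ℝ)..s, f t)
      (volume.restrict (Ioc (0:ℝ) R)) := by
    intro R hR
    obtain ⟨C, hC⟩ := hbdd R hR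
    set H : ℝ → ℝ := fun s => ∫ t in (0:ℝ)..s, f t with hHdef
    set A : Set ℝ := {s | s ∈ Ioc (0:ℝ) R ∧ IntegrableOn f (Ioc 0 s)} with hAdef
    have hAord : A.OrdConnected := by
      refine ⟨fun x hx y hy z hz => ⟨⟨lt_of_lt_of_le hx.1.1 hz.1, le_trans hz.2 hy.1.2⟩, ?_⟩⟩
      exact hy.2.mono_set (Ioc_subset_Ioc_right hz.2)
    have hnn : ∀ s : ℝ, 0 ≤ s → 0 ≤ H s := fun s hs =>
      intervalIntegral.integral_nonneg hs fun t ht => hf t ht.1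
    have hmono : MonotoneOn H A := by
      intro x hx y hy hxy
      rw [hHdef]
      simp only
      rw [intervalIntegral.integral_of_le hx.1.1.le,
        intervalIntegral.integral_of_le (hx.1.1.le.trans hxy)]
      refine setIntegral_mono_set hy.2 ?_
        (HasSubset.Subset.eventuallyLE (Ioc_subset_Ioc_right hxy))
      exact (ae_restrict_iff' measurableSet_Ioc).2
        (Filter.Eventually.of_forall fun t ht => hf t ht.1.le)
    obtain ⟨g, hgmono, hEq⟩ := hmono.exists_monotone_extension
      ⟨0, fun y ⟨s, hs, hsy⟩ => hsy ▸ hnn s hs.1.1.le⟩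
      ⟨C, fun y ⟨s, hs, hsy⟩ => hsy ▸ hC s hs.1⟩
    have heq : ∀ s ∈ Ioc (0:ℝ) R, H s = A.indicator g s := by
      intro s hs
      by_cases hsA : s ∈ A
      · rw [indicator_of_mem hsA, ← hEq hsA]
      · rw [indicator_of_notMem hsA]
        have hni : ¬ IntervalIntegrable f volume 0 s := by
          rw [intervalIntegrable_iff_integrableOn_Ioc_of_le hs.1.le]
          exact fun h => hsA ⟨hs, h⟩
        exact intervalIntegral.integral_undef hni
    exact ((hgmono.measurable.indicator hAord.measurableSet).aemeasurable).congr
      ((ae_restrict_iff' measurableSet_Ioc).2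
        (Filter.Eventually.of_forall fun s hs => (heq s hs).symm))
  have hU : Ioi (0:ℝ) = ⋃ n : ℕ, Ioc (0:ℝ) ((n:ℝ)+1) := by
    ext x
    simp only [mem_Ioi, mem_iUnion, mem_Ioc]
    constructor
    · intro hx; obtain ⟨k, hk⟩ := exists_nat_ge x; exact ⟨k, hx, hk.trans (by linarith)⟩
    · rintro ⟨k, hk, -⟩; exact hk
  rw [hU, aemeasurable_iUnion_iff]
  exact fun k => key _ (by positivity)

/-- Necessary bounds on the initial data of a globally positive solution on a
stochastically incomplete model: `ξ ≥ (η - θξ^p)₊^q θ` and `η ≥ (ξ - θη^q)₊^p θ`. -/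
theorem initial_data_bounds
    (n : ℕ) (hn : 3 ≤ n) (ψ : ℝ → ℝ)
    (hψ0 : ψ 0 = 0) (hψ'0 : HasDerivAt ψ 1 0)
    (hψpos : ∀ r > (0:ℝ), 0 < ψ r)
    (hψcont : ContinuousOn ψ (Ici 0))
    (hΘint : IntegrableOn
      (fun r => (∫ s in (0:ℝ)..r, ψ s ^ (n-1)) / ψ r ^ (n-1)) (Ioi (0:ℝ)))
    (p q : ℝ) (hp : 0 < p) (hq : 0 < q)
    (ξ η : ℝ) (hξ : 0 < ξ) (hη : 0 < η)
    (u v : ℝ → ℝ)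
    (hu : ∀ r ≥ (0:ℝ), 0 < u r) (hv : ∀ r ≥ (0:ℝ), 0 < v r)
    (hequ : ∀ r ≥ (0:ℝ),
      u r = ξ - ∫ s in (0:ℝ)..r, (∫ t in (0:ℝ)..s, v t ^ q * ψ t ^ (n-1)) / ψ s ^ (n-1))
    (heqv : ∀ r ≥ (0:ℝ),
      v r = η - ∫ s in (0:ℝ)..r, (∫ t in (0:ℝ)..s, u t ^ p * ψ t ^ (n-1)) / ψ s ^ (n-1)) :
    ξ ≥ (max (η - (∫ r in Ioi (0:ℝ), (∫ s in (0:ℝ)..r, ψ s ^ (n-1)) / ψ r ^ (n-1)) * ξ ^ p) 0) ^ q *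
          (∫ r in Ioi (0:ℝ), (∫ s in (0:ℝ)..r, ψ s ^ (n-1)) / ψ r ^ (n-1)) ∧
    η ≥ (max (ξ - (∫ r in Ioi (0:ℝ), (∫ s in (0:ℝ)..r, ψ s ^ (n-1)) / ψ r ^ (n-1)) * η ^ q) 0) ^ p *
          (∫ r in Ioi (0:ℝ), (∫ s in (0:ℝ)..r, ψ s ^ (n-1)) / ψ r ^ (n-1)) := by
  set m := n - 1 with hm
  set Θ : ℝ → ℝ := fun r => (∫ s in (0:ℝ)..r, ψ s ^ m) / ψ r ^ m with hΘ
  set θ : ℝ := ∫ r in Ioi (0:ℝ), Θ r with hθ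
  -- basic positivity facts
  have hψnn : ∀ s : ℝ, 0 ≤ s → 0 ≤ ψ s := by
    intro s hs
    rcases eq_or_lt_of_le hs with h | h
    · rw [← h, hψ0]
    · exact (hψpos s h).le
  have hψmnn : ∀ s : ℝ, 0 ≤ s → 0 ≤ ψ s ^ m := fun s hs => pow_nonneg (hψnn s hs) m
  have hψmpos : ∀ s : ℝ, 0 < s → 0 < ψ s ^ m := fun s hs => pow_pos (hψpos s hs) m
  have hψmint : ∀ r : ℝ, IntegrableOn (fun t => ψ t ^ m) (Ioc 0 r) := by
    intro r
    rcases le_or_gt r 0 with h | h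
    · rw [Ioc_eq_empty (fun hlt => absurd (hlt.trans_le h) (lt_irrefl 0))]
      exact integrableOn_empty
    · exact (((hψcont.mono Icc_subset_Ici_self).pow m).integrableOn_Icc).mono_set
        Ioc_subset_Icc_self
  have hIψnn : ∀ r : ℝ, 0 ≤ r → 0 ≤ ∫ s in (0:ℝ)..r, ψ s ^ m := fun r hr =>
    intervalIntegral.integral_nonneg hr fun t ht => hψmnn t ht.1
  have hΘnn : ∀ r : ℝ, 0 ≤ r → 0 ≤ Θ r := fun r hr => div_nonneg (hIψnn r hr) (hψmnn r hr)
  have hθnn : 0 ≤ θ := setIntegral_nonneg measurableSet_Ioi fun r hr => hΘnn r (le_of_lt hr)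
  have hΘae : 0 ≤ᵐ[volume.restrict (Ioi (0:ℝ))] Θ :=
    (ae_restrict_iff' measurableSet_Ioi).2
      (Filter.Eventually.of_forall fun r hr => hΘnn r (le_of_lt hr))
  have hΘint' : ∀ r : ℝ, IntegrableOn Θ (Ioc 0 r) := fun r =>
    hΘint.mono_set Ioc_subset_Ioi_self
  have hΘle : ∀ r : ℝ, (∫ s in Ioc (0:ℝ) r, Θ s) ≤ θ := fun r =>
    setIntegral_mono_set hΘint hΘae (HasSubset.Subset.eventuallyLE Ioc_subset_Ioi_self)
  -- inner integral: nonnegativity and bounds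
  have inner_nn : ∀ (w : ℝ → ℝ), (∀ t ≥ (0:ℝ), 0 ≤ w t) → ∀ s : ℝ, 0 ≤ s →
      0 ≤ ∫ t in (0:ℝ)..s, w t * ψ t ^ m := fun w hw s hs =>
    intervalIntegral.integral_nonneg hs fun t ht => mul_nonneg (hw t ht.1) (hψmnn t ht.1)
  have inner_upper : ∀ (w : ℝ → ℝ) (c : ℝ), 0 ≤ c → (∀ t ≥ (0:ℝ), 0 ≤ w t) →
      (∀ t ≥ (0:ℝ), w t ≤ c) → ∀ s : ℝ, 0 < s →
      (∫ t in (0:ℝ)..s, w t * ψ t ^ m) ≤ c * ∫ t in (0:ℝ)..s, ψ t ^ m := by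
    intro w c hc hw hwc s hs
    rw [intervalIntegral.integral_of_le hs.le, intervalIntegral.integral_of_le hs.le,
      ← MeasureTheory.integral_const_mul]
    refine integral_mono_of_nonneg ?_ ((hψmint s).const_mul c) ?_
    · exact (ae_restrict_iff' measurableSet_Ioc).2 (Filter.Eventually.of_forall
        fun t ht => mul_nonneg (hw t ht.1.le) (hψmnn t ht.1.le))
    · exact (ae_restrict_iff' measurableSet_Ioc).2 (Filter.Eventually.of_forall
        fun t ht => mul_le_mul_of_nonneg_right (hwc t ht.1.le) (hψmnn t ht.1.le))
  -- the slope function g_w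
  have g_nn : ∀ (w : ℝ → ℝ), (∀ t ≥ (0:ℝ), 0 ≤ w t) → ∀ s : ℝ, 0 ≤ s →
      0 ≤ (∫ t in (0:ℝ)..s, w t * ψ t ^ m) / ψ s ^ m := fun w hw s hs =>
    div_nonneg (inner_nn w hw s hs) (hψmnn s hs)
  have g_upper : ∀ (w : ℝ → ℝ) (c : ℝ), 0 ≤ c → (∀ t ≥ (0:ℝ), 0 ≤ w t) →
      (∀ t ≥ (0:ℝ), w t ≤ c) → ∀ s : ℝ, 0 < s →
      (∫ t in (0:ℝ)..s, w t * ψ t ^ m) / ψ s ^ m ≤ c * Θ s := by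
    intro w c hc hw hwc s hs
    have h2 : (0:ℝ) ≤ (ψ s ^ m)⁻¹ := inv_nonneg.2 (hψmnn s hs.le)
    calc (∫ t in (0:ℝ)..s, w t * ψ t ^ m) / ψ s ^ m
        = (∫ t in (0:ℝ)..s, w t * ψ t ^ m) * (ψ s ^ m)⁻¹ := div_eq_mul_inv _ _
      _ ≤ (c * ∫ t in (0:ℝ)..s, ψ t ^ m) * (ψ s ^ m)⁻¹ :=
          mul_le_mul_of_nonneg_right (inner_upper w c hc hw hwc s hs) h2
      _ = c * Θ s := by rw [hΘ]; simp only; rw [mul_assoc, ← div_eq_mul_inv]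
  -- outer integral: nonnegativity and upper bound
  have outer_nn : ∀ (w : ℝ → ℝ), (∀ t ≥ (0:ℝ), 0 ≤ w t) → ∀ r : ℝ, 0 ≤ r →
      0 ≤ ∫ s in (0:ℝ)..r, (∫ t in (0:ℝ)..s, w t * ψ t ^ m) / ψ s ^ m := fun w hw r hr =>
    intervalIntegral.integral_nonneg hr fun s hs => g_nn w hw s hs.1
  have outer_upper : ∀ (w : ℝ → ℝ) (c : ℝ), 0 ≤ c → (∀ t ≥ (0:ℝ), 0 ≤ w t) →
      (∀ t ≥ (0:ℝ), w t ≤ c) → ∀ r : ℝ, 0 ≤ r →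
      (∫ s in (0:ℝ)..r, (∫ t in (0:ℝ)..s, w t * ψ t ^ m) / ψ s ^ m) ≤ c * θ := by
    intro w c hc hw hwc r hr
    rw [intervalIntegral.integral_of_le hr]
    calc (∫ s in Ioc (0:ℝ) r, (∫ t in (0:ℝ)..s, w t * ψ t ^ m) / ψ s ^ m)
        ≤ ∫ s in Ioc (0:ℝ) r, c * Θ s := by
          refine integral_mono_of_nonneg ?_ ((hΘint' r).const_mul c) ?_
          · exact (ae_restrict_iff' measurableSet_Ioc).2 (Filter.Eventually.of_forall
              fun s hs => g_nn w hw s hs.1.le)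
          · exact (ae_restrict_iff' measurableSet_Ioc).2 (Filter.Eventually.of_forall
              fun s hs => g_upper w c hc hw hwc s hs.1)
      _ = c * ∫ s in Ioc (0:ℝ) r, Θ s := MeasureTheory.integral_const_mul c _
      _ ≤ c * θ := mul_le_mul_of_nonneg_left (hΘle r) hc
  -- crude a priori bounds on u and v
  have hup_nn : ∀ t ≥ (0:ℝ), 0 ≤ u t ^ p := fun t ht => Real.rpow_nonneg (hu t ht).le p
  have hvq_nn : ∀ t ≥ (0:ℝ), 0 ≤ v t ^ q := fun t ht => Real.rpow_nonneg (hv t ht).le q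
  have hule : ∀ r ≥ (0:ℝ), u r ≤ ξ := by
    intro r hr
    rw [hequ r hr]
    have := outer_nn (fun t => v t ^ q) hvq_nn r hr
    linarith
  have hvle : ∀ r ≥ (0:ℝ), v r ≤ η := by
    intro r hr
    rw [heqv r hr]
    have := outer_nn (fun t => u t ^ p) hup_nn r hr
    linarith
  have hup_le : ∀ t ≥ (0:ℝ), u t ^ p ≤ ξ ^ p := fun t ht =>
    Real.rpow_le_rpow (hu t ht).le (hule t ht) hp.le
  have hvq_le : ∀ t ≥ (0:ℝ), v t ^ q ≤ η ^ q := fun t ht =>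
    Real.rpow_le_rpow (hv t ht).le (hvle t ht) hq.le
  have hξp : (0:ℝ) ≤ ξ ^ p := Real.rpow_nonneg hξ.le p
  have hηq : (0:ℝ) ≤ η ^ q := Real.rpow_nonneg hη.le q
  -- lower a priori bounds
  set a : ℝ := max (η - θ * ξ ^ p) 0 with ha
  set b : ℝ := max (ξ - θ * η ^ q) 0 with hb
  have hvga : ∀ r ≥ (0:ℝ), a ≤ v r := by
    intro r hr
    refine max_le ?_ (hv r hr).le
    rw [heqv r hr]
    have h1 := outer_upper (fun t => u t ^ p) (ξ ^ p) hξp hup_nn hup_le r hr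
    have h2 : θ * ξ ^ p = ξ ^ p * θ := mul_comm _ _
    linarith
  have hugb : ∀ r ≥ (0:ℝ), b ≤ u r := by
    intro r hr
    refine max_le ?_ (hu r hr).le
    rw [hequ r hr]
    have h1 := outer_upper (fun t => v t ^ q) (η ^ q) hηq hvq_nn hvq_le r hr
    have h2 : θ * η ^ q = η ^ q * θ := mul_comm _ _
    linarith
  have hann : 0 ≤ a := le_max_right _ _
  have hbnn : 0 ≤ b := le_max_right _ _
  -- measurability machinery
  have hψaem : AEMeasurable ψ (volume.restrict (Ioi (0:ℝ))) :=
    ((hψcont.mono Ioi_subset_Ici_self).aemeasurable measurableSet_Ioi)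
  have hbdd_inner : ∀ (w : ℝ → ℝ) (c : ℝ), 0 ≤ c → (∀ t ≥ (0:ℝ), 0 ≤ w t) →
      (∀ t ≥ (0:ℝ), w t ≤ c) → ∀ R > (0:ℝ), ∃ C : ℝ, ∀ s ∈ Ioc (0:ℝ) R,
      (∫ t in (0:ℝ)..s, w t * ψ t ^ m) ≤ C := by
    intro w c hc hw hwc R hR
    refine ⟨c * ∫ t in Ioc (0:ℝ) R, ψ t ^ m, fun s hs => ?_⟩
    have h1 := inner_upper w c hc hw hwc s hs.1
    have h2 : (∫ t in (0:ℝ)..s, ψ t ^ m) ≤ ∫ t in Ioc (0:ℝ) R, ψ t ^ m := by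
      rw [intervalIntegral.integral_of_le hs.1.le]
      refine setIntegral_mono_set (hψmint R) ?_
        (HasSubset.Subset.eventuallyLE (Ioc_subset_Ioc_right hs.2))
      exact (ae_restrict_iff' measurableSet_Ioc).2
        (Filter.Eventually.of_forall fun t ht => hψmnn t ht.1.le)
    calc (∫ t in (0:ℝ)..s, w t * ψ t ^ m) ≤ c * ∫ t in (0:ℝ)..s, ψ t ^ m := h1
      _ ≤ c * ∫ t in Ioc (0:ℝ) R, ψ t ^ m := mul_le_mul_of_nonneg_left h2 hc
  -- a.e. measurability of the slope function g_w
  have g_aem : ∀ (w : ℝ → ℝ) (c : ℝ), 0 ≤ c → (∀ t ≥ (0:ℝ), 0 ≤ w t) →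
      (∀ t ≥ (0:ℝ), w t ≤ c) →
      AEMeasurable (fun s => (∫ t in (0:ℝ)..s, w t * ψ t ^ m) / ψ s ^ m)
        (volume.restrict (Ioi (0:ℝ))) := by
    intro w c hc hw hwc
    have h1 : AEMeasurable (fun s => ∫ t in (0:ℝ)..s, w t * ψ t ^ m)
        (volume.restrict (Ioi (0:ℝ))) :=
      prim_aemeas _ (fun t ht => mul_nonneg (hw t ht) (hψmnn t ht))
        (hbdd_inner w c hc hw hwc)
    exact h1.div (hψaem.pow_const m)
  -- integrability of g_w on Ioc 0 r
  have g_int : ∀ (w : ℝ → ℝ) (c : ℝ), 0 ≤ c → (∀ t ≥ (0:ℝ), 0 ≤ w t) →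
      (∀ t ≥ (0:ℝ), w t ≤ c) → ∀ r : ℝ,
      IntegrableOn (fun s => (∫ t in (0:ℝ)..s, w t * ψ t ^ m) / ψ s ^ m) (Ioc 0 r) := by
    intro w c hc hw hwc r
    have h1 : IntegrableOn (fun s => (∫ t in (0:ℝ)..s, w t * ψ t ^ m) / ψ s ^ m)
        (Ioi (0:ℝ)) := by
      refine Integrable.mono' (hΘint.const_mul c)
        ((g_aem w c hc hw hwc).aestronglyMeasurable) ?_
      refine (ae_restrict_iff' measurableSet_Ioi).2 (Filter.Eventually.of_forall
        fun s hs => ?_)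
      rw [Real.norm_eq_abs, abs_of_nonneg (g_nn w hw s (le_of_lt hs))]
      exact g_upper w c hc hw hwc s hs
    exact h1.mono_set Ioc_subset_Ioi_self
  -- a.e. measurability of primitives r ↦ ∫_0^r g_w
  have F_aem : ∀ (w : ℝ → ℝ) (c : ℝ), 0 ≤ c → (∀ t ≥ (0:ℝ), 0 ≤ w t) →
      (∀ t ≥ (0:ℝ), w t ≤ c) →
      AEMeasurable (fun r => ∫ s in (0:ℝ)..r, (∫ t in (0:ℝ)..s, w t * ψ t ^ m) / ψ s ^ m)
        (volume.restrict (Ioi (0:ℝ))) := by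
    intro w c hc hw hwc
    refine prim_aemeas _ (fun s hs => g_nn w hw s hs) (fun R hR => ⟨c * θ, fun s hs => ?_⟩)
    exact outer_upper w c hc hw hwc s hs.1.le
  -- v is a.e. measurable
  have hv_aem : AEMeasurable v (volume.restrict (Ioi (0:ℝ))) := by
    have h1 := F_aem (fun t => u t ^ p) (ξ ^ p) hξp hup_nn hup_le
    have h2 : AEMeasurable (fun r : ℝ =>
        η - ∫ s in (0:ℝ)..r, (∫ t in (0:ℝ)..s, (fun t => u t ^ p) t * ψ t ^ m) / ψ s ^ m)
        (volume.restrict (Ioi (0:ℝ))) := aemeasurable_const.sub h1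
    refine h2.congr ?_
    refine (ae_restrict_iff' measurableSet_Ioi).2 (Filter.Eventually.of_forall fun r hr => ?_)
    exact (heqv r (le_of_lt hr)).symm
  have hvq_aem : AEMeasurable (fun t => v t ^ q) (volume.restrict (Ioi (0:ℝ))) :=
    (Real.continuous_rpow_const hq.le).measurable.comp_aemeasurable hv_aem
  -- lower bounds for the inner integral with w = v^q
  have inner_lower : ∀ (w : ℝ → ℝ) (c d : ℝ), 0 ≤ c → 0 ≤ d → (∀ t ≥ (0:ℝ), d ≤ w t) →
      (∀ t ≥ (0:ℝ), w t ≤ c) → AEMeasurable w (volume.restrict (Ioi (0:ℝ))) →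
      ∀ s : ℝ, 0 < s →
      d * (∫ t in (0:ℝ)..s, ψ t ^ m) ≤ ∫ t in (0:ℝ)..s, w t * ψ t ^ m := by
    intro w c d hc hd hdw hwc hwaem s hs
    have hint : IntegrableOn (fun t => w t * ψ t ^ m) (Ioc 0 s) := by
      refine Integrable.mono' ((hψmint s).const_mul c)
        (((hwaem.mono_measure (Measure.restrict_mono Ioc_subset_Ioi_self le_rfl)).mul
          ((hψaem.pow_const m).mono_measure
            (Measure.restrict_mono Ioc_subset_Ioi_self le_rfl))).aestronglyMeasurable) ?_
      refine (ae_restrict_iff' measurableSet_Ioc).2 (Filter.Eventually.of_forall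
        fun t ht => ?_)
      rw [Real.norm_eq_abs, abs_of_nonneg (mul_nonneg ((hd.trans (hdw t ht.1.le)))
        (hψmnn t ht.1.le))]
      exact mul_le_mul_of_nonneg_right (hwc t ht.1.le) (hψmnn t ht.1.le)
    rw [intervalIntegral.integral_of_le hs.le, intervalIntegral.integral_of_le hs.le,
      ← MeasureTheory.integral_const_mul]
    refine integral_mono_of_nonneg ?_ hint ?_
    · exact (ae_restrict_iff' measurableSet_Ioc).2 (Filter.Eventually.of_forall
        fun t ht => mul_nonneg hd (hψmnn t ht.1.le))
    · exact (ae_restrict_iff' measurableSet_Ioc).2 (Filter.Eventually.of_forall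
        fun t ht => mul_le_mul_of_nonneg_right (hdw t ht.1.le) (hψmnn t ht.1.le))
  -- lower bound for the outer integral
  have outer_lower : ∀ (w : ℝ → ℝ) (c d : ℝ), 0 ≤ c → 0 ≤ d → (∀ t ≥ (0:ℝ), d ≤ w t) →
      (∀ t ≥ (0:ℝ), w t ≤ c) → AEMeasurable w (volume.restrict (Ioi (0:ℝ))) →
      ∀ r : ℝ, 0 ≤ r →
      d * (∫ s in Ioc (0:ℝ) r, Θ s) ≤
        ∫ s in (0:ℝ)..r, (∫ t in (0:ℝ)..s, w t * ψ t ^ m) / ψ s ^ m := by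
    intro w c d hc hd hdw hwc hwaem r hr
    rw [intervalIntegral.integral_of_le hr, ← MeasureTheory.integral_const_mul]
    refine integral_mono_of_nonneg ?_ (g_int w c hc (fun t ht => hd.trans (hdw t ht)) hwc r) ?_
    · exact (ae_restrict_iff' measurableSet_Ioc).2 (Filter.Eventually.of_forall
        fun s hs => mul_nonneg hd (hΘnn s hs.1.le))
    · refine (ae_restrict_iff' measurableSet_Ioc).2 (Filter.Eventually.of_forall
        fun s hs => ?_)
      have h1 := inner_lower w c d hc hd hdw hwc hwaem s hs.1
      have h2 : (0:ℝ) ≤ (ψ s ^ m)⁻¹ := inv_nonneg.2 (hψmnn s hs.1.le)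
      calc d * Θ s = d * ((∫ t in (0:ℝ)..s, ψ t ^ m) * (ψ s ^ m)⁻¹) := by
            rw [hΘ]; simp only [div_eq_mul_inv]
        _ = (d * ∫ t in (0:ℝ)..s, ψ t ^ m) * (ψ s ^ m)⁻¹ := by ring
        _ ≤ (∫ t in (0:ℝ)..s, w t * ψ t ^ m) * (ψ s ^ m)⁻¹ :=
            mul_le_mul_of_nonneg_right h1 h2
        _ = (∫ t in (0:ℝ)..s, w t * ψ t ^ m) / ψ s ^ m := (div_eq_mul_inv _ _).symm
  -- the limit of ∫_{Ioc 0 n} Θ is θ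
  have hU : (⋃ k : ℕ, Ioc (0:ℝ) (k:ℝ)) = Ioi (0:ℝ) := by
    ext x
    simp only [mem_Ioi, mem_iUnion, mem_Ioc]
    constructor
    · rintro ⟨k, hk, -⟩; exact hk
    · intro hx; obtain ⟨k, hk⟩ := exists_nat_ge x; exact ⟨k, hx, hk⟩
  have hlim : Tendsto (fun k : ℕ => ∫ s in Ioc (0:ℝ) (k:ℝ), Θ s) atTop (nhds θ) := by
    have h1 : Monotone (fun k : ℕ => Ioc (0:ℝ) (k:ℝ)) := fun i j hij =>
      Ioc_subset_Ioc_right (Nat.cast_le.2 hij)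
    have h2 := tendsto_setIntegral_of_monotone (fun k : ℕ => measurableSet_Ioc) h1
      (by rw [hU]; exact hΘint)
    rwa [hU] at h2
  -- first inequality
  have key1 : a ^ q * θ ≤ ξ := by
    have hbound : ∀ k : ℕ, a ^ q * (∫ s in Ioc (0:ℝ) (k:ℝ), Θ s) ≤ ξ := by
      intro k
      have hk : (0:ℝ) ≤ (k:ℝ) := Nat.cast_nonneg k
      have h1 := outer_lower (fun t => v t ^ q) (η ^ q) (a ^ q) hηq
        (Real.rpow_nonneg hann q) (fun t ht => Real.rpow_le_rpow hann (hvga t ht) hq.le)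
        hvq_le hvq_aem (k:ℝ) hk
      have h2 := hequ (k:ℝ) hk
      have h3 := hu (k:ℝ) hk
      linarith
    exact le_of_tendsto' (hlim.const_mul (a ^ q)) hbound
  -- u is a.e. measurable, v^q-primitive version
  have hu_aem : AEMeasurable u (volume.restrict (Ioi (0:ℝ))) := by
    have h1 := F_aem (fun t => v t ^ q) (η ^ q) hηq hvq_nn hvq_le
    have h2 : AEMeasurable (fun r : ℝ =>
        ξ - ∫ s in (0:ℝ)..r, (∫ t in (0:ℝ)..s, (fun t => v t ^ q) t * ψ t ^ m) / ψ s ^ m)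
        (volume.restrict (Ioi (0:ℝ))) := aemeasurable_const.sub h1
    refine h2.congr ?_
    refine (ae_restrict_iff' measurableSet_Ioi).2 (Filter.Eventually.of_forall fun r hr => ?_)
    exact (hequ r (le_of_lt hr)).symm
  have hup_aem : AEMeasurable (fun t => u t ^ p) (volume.restrict (Ioi (0:ℝ))) :=
    (Real.continuous_rpow_const hp.le).measurable.comp_aemeasurable hu_aem
  -- second inequality
  have key2 : b ^ p * θ ≤ η := by
    have hbound : ∀ k : ℕ, b ^ p * (∫ s in Ioc (0:ℝ) (k:ℝ), Θ s) ≤ η := by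
      intro k
      have hk : (0:ℝ) ≤ (k:ℝ) := Nat.cast_nonneg k
      have h1 := outer_lower (fun t => u t ^ p) (ξ ^ p) (b ^ p) hξp
        (Real.rpow_nonneg hbnn p) (fun t ht => Real.rpow_le_rpow hbnn (hugb t ht) hp.le)
        hup_le hup_aem (k:ℝ) hk
      have h2 := heqv (k:ℝ) hk
      have h3 := hv (k:ℝ) hk
      linarith
    exact le_of_tendsto' (hlim.const_mul (b ^ p)) hbound
  exact ⟨key1, key2⟩
end

section
/- Let Θ ∈ L¹(0,∞) be positive with θ = ∫_0^∞ Θ, and p,q > 0 with pq > 1. Let v : [0,∞) → (0,∞) be C¹, decreasing with limit ℓ_v ≥ 0, satisfying the differential inequality v'(r) ≤ -(∫_r^∞ v^q Θ ds)^p Θ(r) for all r > 0. Then ℓ_v ≤ q^{(p+1)/(pq-1)} (p+1)^{(p+2)/(pq-1)} (q+1)^{-1/(pq-1)} (pq-1)^{-(p+1)/(pq-1)} · θ^{-(p+1)/(pq-1)}. -/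
open Filter MeasureTheory Set

open Real in
private lemma alg_aux (p q θ : ℝ) (hp : 0 < p) (hq : 0 < q) (hm : 0 < p*q-1) (hθ : 0 < θ) :
    (q ^ ((p+1)/(p*q-1)) * (p+1) ^ ((p+2)/(p*q-1)) * (q+1) ^ (-(1/(p*q-1))) *
      (p*q-1) ^ (-((p+1)/(p*q-1))) * θ ^ (-((p+1)/(p*q-1)))) ^ (q*((q*(p+1)/(q+1)) - 1))
    = ((q*(p+1)/(q+1) - 1) * ((q+1)/(p+1)) ^ (q/(q+1)) * ((q+1)*θ/(q*(p+1))))⁻¹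
      * ((θ - (q+1)*θ/(q*(p+1))) ^ (q*(p+1)/(q+1) - 1))⁻¹ := by
  have hp1 : (0:ℝ) < p + 1 := by linarith
  have hq1 : (0:ℝ) < q + 1 := by linarith
  have hαeq : q*(p+1)/(q+1) - 1 = (p*q-1)/(q+1) := by field_simp; ring
  have hDeq : θ - (q+1)*θ/(q*(p+1)) = θ * (p*q-1) / (q*(p+1)) := by field_simp; ring
  rw [hαeq, hDeq]
  have hα : (0:ℝ) < (p*q-1)/(q+1) := by positivity
  have hL0 : (0:ℝ) < q ^ ((p+1)/(p*q-1)) * (p+1) ^ ((p+2)/(p*q-1)) * (q+1) ^ (-(1/(p*q-1))) *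
      (p*q-1) ^ (-((p+1)/(p*q-1))) * θ ^ (-((p+1)/(p*q-1))) := by positivity
  have hR10 : (0:ℝ) < (p*q-1)/(q+1) * ((q+1)/(p+1)) ^ (q/(q+1)) * ((q+1)*θ/(q*(p+1))) := by
    positivity
  have hR20 : (0:ℝ) < (θ * (p*q-1) / (q*(p+1))) ^ ((p*q-1)/(q+1)) := by positivity
  have hlogL : log ((q ^ ((p+1)/(p*q-1)) * (p+1) ^ ((p+2)/(p*q-1)) * (q+1) ^ (-(1/(p*q-1))) *
      (p*q-1) ^ (-((p+1)/(p*q-1))) * θ ^ (-((p+1)/(p*q-1)))) ^ (q*((p*q-1)/(q+1))))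
      = (q*((p*q-1)/(q+1))) * ((p+1)/(p*q-1) * log q + (p+2)/(p*q-1) * log (p+1)
        + (-(1/(p*q-1))) * log (q+1) + (-((p+1)/(p*q-1))) * log (p*q-1)
        + (-((p+1)/(p*q-1))) * log θ) := by
    rw [Real.log_rpow hL0, Real.log_mul (by positivity) (by positivity),
      Real.log_mul (by positivity) (by positivity), Real.log_mul (by positivity) (by positivity),
      Real.log_mul (by positivity) (by positivity), Real.log_rpow hq, Real.log_rpow hp1,
      Real.log_rpow hq1, Real.log_rpow hm, Real.log_rpow hθ]
  have hlogR : log (((p*q-1)/(q+1) * ((q+1)/(p+1)) ^ (q/(q+1)) * ((q+1)*θ/(q*(p+1))))⁻¹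
      * ((θ * (p*q-1) / (q*(p+1))) ^ ((p*q-1)/(q+1)))⁻¹)
      = -((log (p*q-1) - log (q+1)) + (q/(q+1)) * (log (q+1) - log (p+1))
          + (log (q+1) + log θ - (log q + log (p+1))))
        - ((p*q-1)/(q+1)) * (log θ + log (p*q-1) - (log q + log (p+1))) := by
    rw [Real.log_mul (by positivity) (by positivity), Real.log_inv, Real.log_inv,
      Real.log_mul (by positivity) (by positivity), Real.log_mul (by positivity) (by positivity),
      Real.log_div (by positivity) (by positivity), Real.log_rpow (by positivity),
      Real.log_div (by positivity) (by positivity), Real.log_div (by positivity) (by positivity),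
      Real.log_mul (by positivity) (by positivity), Real.log_mul (by positivity) (by positivity),
      Real.log_rpow (by positivity), Real.log_div (by positivity) (by positivity),
      Real.log_mul (by positivity) (by positivity), Real.log_mul (by positivity) (by positivity)]
    ring
  refine Real.log_injOn_pos (Set.mem_Ioi.2 (by positivity)) (Set.mem_Ioi.2 (by positivity)) ?_
  rw [hlogL, hlogR]
  have hm' : q*p-1 ≠ 0 := by rw [mul_comm]; exact hm.ne'
  field_simp
  ring

/-- Quantitative bound on the limit at infinity `ℓ_v` of a positive decreasing function `v`
satisfying the integral-differential inequality `v' ≤ -(∫_r^∞ v^q Θ)^p Θ`. -/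
theorem limit_bound_of_integral_inequality
    (Θ : ℝ → ℝ) (hΘpos : ∀ r > (0:ℝ), 0 < Θ r) (hΘcont : Continuous Θ)
    (hΘint : IntegrableOn Θ (Ioi (0:ℝ)))
    (p q : ℝ) (hp : 0 < p) (hq : 0 < q) (hpq : 1 < p * q)
    (v v' : ℝ → ℝ)
    (hvpos : ∀ r ≥ (0:ℝ), 0 < v r)
    (hvd : ∀ r > (0:ℝ), HasDerivAt v (v' r) r)
    (hvanti : AntitoneOn v (Ici 0))
    (hvqint : IntegrableOn (fun s => v s ^ q * Θ s) (Ioi (0:ℝ)))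
    (ℓv : ℝ) (hℓv : 0 ≤ ℓv) (hvlim : Tendsto v atTop (nhds ℓv))
    (hineq : ∀ r > (0:ℝ), v' r ≤ -((∫ s in Ioi r, v s ^ q * Θ s) ^ p) * Θ r) :
    ℓv ≤ q ^ ((p + 1) / (p * q - 1)) * (p + 1) ^ ((p + 2) / (p * q - 1)) *
          (q + 1) ^ (-(1 / (p * q - 1))) * (p * q - 1) ^ (-((p + 1) / (p * q - 1))) *
          (∫ r in Ioi (0:ℝ), Θ r) ^ (-((p + 1) / (p * q - 1))) := by
  have hm : (0:ℝ) < p * q - 1 := by linarith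
  have hp1 : (0:ℝ) < p + 1 := by linarith
  have hq1 : (0:ℝ) < q + 1 := by linarith
  set θ : ℝ := ∫ r in Ioi (0:ℝ), Θ r with hθdef
  -- positivity of integrals of Θ over tails
  have hHpos : ∀ r ≥ (0:ℝ), 0 < ∫ s in Ioi r, Θ s := by
    intro r hr
    rw [setIntegral_pos_iff_support_of_nonneg_ae]
    · refine lt_of_lt_of_le ?_ (measure_mono (show Ioi r ⊆ Function.support Θ ∩ Ioi r from
        fun s hs => ⟨(hΘpos s (lt_of_le_of_lt hr hs)).ne', hs⟩))
      simp [Real.volume_Ioi]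
    · exact (ae_restrict_iff' measurableSet_Ioi).2 (ae_of_all _ fun s hs =>
        (hΘpos s (lt_of_le_of_lt hr hs)).le)
    · exact hΘint.mono_set (Ioi_subset_Ioi hr)
  have hθpos : 0 < θ := hHpos 0 le_rfl
  -- the target RHS is positive
  have hRHSpos : 0 < q ^ ((p + 1) / (p * q - 1)) * (p + 1) ^ ((p + 2) / (p * q - 1)) *
          (q + 1) ^ (-(1 / (p * q - 1))) * (p * q - 1) ^ (-((p + 1) / (p * q - 1))) *
          θ ^ (-((p + 1) / (p * q - 1))) := by positivity
  rcases eq_or_lt_of_le hℓv with hl | hl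
  · exact le_of_lt (hl ▸ hRHSpos)
  clear hℓv
  -- notation
  set f : ℝ → ℝ := fun s => v s ^ q * Θ s with hfdef
  set G : ℝ → ℝ := fun r => ∫ s in Ioi r, f s with hGdef
  set I : ℝ → ℝ := fun r => ∫ s in (0:ℝ)..r, Θ s with hIdef
  set J : ℝ → ℝ := fun r => ∫ s in (0:ℝ)..r, f s with hJdef
  set α : ℝ := q * (p + 1) / (q + 1) with hαdef
  set K : ℝ := ((q + 1) / (p + 1)) ^ (q / (q + 1)) with hKdef
  have hα1 : 1 < α := by
    rw [hαdef, lt_div_iff₀ hq1]; nlinarith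
  have hKpos : 0 < K := Real.rpow_pos_of_pos (by positivity) _
  -- continuity of f on Ioi 0
  have hvcont : ∀ r > (0:ℝ), ContinuousAt v r := fun r hr => (hvd r hr).continuousAt
  have hfcont : ∀ r > (0:ℝ), ContinuousAt f r := by
    intro r hr
    exact (((hvcont r hr).rpow_const (Or.inl (hvpos r hr.le).ne')).mul hΘcont.continuousAt)
  have hfcontOn : ContinuousOn f (Ioi 0) := fun r hr => (hfcont r hr).continuousWithinAt
  -- integrability
  have hfint : ∀ r ≥ (0:ℝ), IntegrableOn f (Ioi r) :=
    fun r hr => hvqint.mono_set (Ioi_subset_Ioi hr)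
  have hΘint' : ∀ r ≥ (0:ℝ), IntegrableOn Θ (Ioi r) :=
    fun r hr => hΘint.mono_set (Ioi_subset_Ioi hr)
  have hfii : ∀ r > (0:ℝ), IntervalIntegrable f volume 0 r := by
    intro r hr
    exact (intervalIntegrable_iff_integrableOn_Ioc_of_le hr.le).2
      (hvqint.mono_set Ioc_subset_Ioi_self)
  -- splitting identities
  have hsplitf : ∀ r > (0:ℝ), G r = (∫ s in Ioi (0:ℝ), f s) - J r := by
    intro r hr
    have hu : Ioc (0:ℝ) r ∪ Ioi r = Ioi 0 := Ioc_union_Ioi_eq_Ioi hr.le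
    have := MeasureTheory.setIntegral_union (Ioc_disjoint_Ioi le_rfl) measurableSet_Ioi
      (hvqint.mono_set Ioc_subset_Ioi_self) (hfint r hr.le) (f := f) (μ := volume)
    rw [hu] at this
    rw [hJdef]
    simp only [intervalIntegral.integral_of_le hr.le]
    rw [hGdef]
    rw [this]
    ring
  have hsplitΘ : ∀ r > (0:ℝ), (∫ s in Ioi r, Θ s) = θ - I r := by
    intro r hr
    have hu : Ioc (0:ℝ) r ∪ Ioi r = Ioi 0 := Ioc_union_Ioi_eq_Ioi hr.le
    have := MeasureTheory.setIntegral_union (Ioc_disjoint_Ioi le_rfl) measurableSet_Ioi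
      (hΘint.mono_set Ioc_subset_Ioi_self) (hΘint' r hr.le) (f := Θ) (μ := volume)
    rw [hu] at this
    rw [hIdef]
    simp only [intervalIntegral.integral_of_le hr.le]
    rw [hθdef, this]
    ring
  -- derivatives
  have hGderiv : ∀ r > (0:ℝ), HasDerivAt G (-(f r)) r := by
    intro r hr
    have hJd : HasDerivAt J (f r) r :=
      intervalIntegral.integral_hasDerivAt_right (hfii r hr)
        (hfcontOn.stronglyMeasurableAtFilter isOpen_Ioi r hr) (hfcont r hr)
    have : HasDerivAt (fun s => (∫ s in Ioi (0:ℝ), f s) - J s) (0 - f r) r :=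
      (hasDerivAt_const r _).sub hJd
    refine HasDerivAt.congr_of_eventuallyEq (by simpa using this) ?_
    exact Filter.eventuallyEq_of_mem (Ioi_mem_nhds hr) fun s hs => hsplitf s hs
  have hIderiv : ∀ r > (0:ℝ), HasDerivAt I (Θ r) r := by
    intro r hr
    exact intervalIntegral.integral_hasDerivAt_right (hΘcont.intervalIntegrable 0 r)
      (hΘcont.stronglyMeasurable.stronglyMeasurableAtFilter) hΘcont.continuousAt
  have hIcont : Continuous I :=
    intervalIntegral.continuous_primitive (fun a b => hΘcont.intervalIntegrable a b) 0
  -- lower bounds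
  have hvge : ∀ r ≥ (0:ℝ), ℓv ≤ v r := by
    intro r hr
    refine le_of_tendsto hvlim ?_
    filter_upwards [eventually_ge_atTop r] with s hs
    exact hvanti hr (le_trans hr hs) hs
  have hGlb : ∀ r ≥ (0:ℝ), ℓv ^ q * (∫ s in Ioi r, Θ s) ≤ G r := by
    intro r hr
    rw [← MeasureTheory.integral_const_mul]
    refine setIntegral_mono_on ((hΘint' r hr).const_mul _) (hfint r hr)
      measurableSet_Ioi ?_
    intro s hs
    have hs0 : (0:ℝ) ≤ s := le_trans hr (le_of_lt hs)
    exact mul_le_mul_of_nonneg_right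
      (Real.rpow_le_rpow hl.le (hvge s hs0) hq.le)
      (hΘpos s (lt_of_le_of_lt hr hs)).le
  have hGpos : ∀ r ≥ (0:ℝ), 0 < G r := fun r hr =>
    lt_of_lt_of_le (mul_pos (Real.rpow_pos_of_pos hl q) (hHpos r hr)) (hGlb r hr)
  -- limits at infinity
  have hGtend : Tendsto G atTop (nhds 0) := by
    have h1 : Tendsto J atTop (nhds (∫ s in Ioi (0:ℝ), f s)) :=
      MeasureTheory.intervalIntegral_tendsto_integral_Ioi 0 hvqint tendsto_id
    have h2 : Tendsto (fun r => (∫ s in Ioi (0:ℝ), f s) - J r) atTop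
        (nhds ((∫ s in Ioi (0:ℝ), f s) - (∫ s in Ioi (0:ℝ), f s))) :=
      tendsto_const_nhds.sub h1
    rw [sub_self] at h2
    refine h2.congr' ?_
    filter_upwards [eventually_gt_atTop 0] with r hr
    exact (hsplitf r hr).symm
  have hItend : Tendsto I atTop (nhds θ) :=
    MeasureTheory.intervalIntegral_tendsto_integral_Ioi 0 hΘint tendsto_id
  -- the function Φ and its monotonicity
  set Φ : ℝ → ℝ := fun r => v r ^ (q+1) / (q+1) - G r ^ (p+1) / (p+1) with hΦdef
  have hΦd : ∀ r > (0:ℝ), HasDerivAt Φ (v r ^ q * (v' r + G r ^ p * Θ r)) r := by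
    intro r hr
    have hv1 : HasDerivAt (fun s => v s ^ (q+1)) (v' r * (q+1) * v r ^ q) r := by
      have := (hvd r hr).rpow_const (p := q+1) (Or.inl (hvpos r hr.le).ne')
      simpa using this
    have hg1 : HasDerivAt (fun s => G s ^ (p+1)) (-(f r) * (p+1) * G r ^ p) r := by
      have := (hGderiv r hr).rpow_const (p := p+1) (Or.inl (hGpos r hr.le).ne')
      simpa using this
    have := (hv1.div_const (q+1)).sub (hg1.div_const (p+1))
    refine this.congr_deriv ?_
    rw [hfdef]
    field_simp
    ring
  have hΦanti : AntitoneOn Φ (Ioi (0:ℝ)) := by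
    refine antitoneOn_of_deriv_nonpos (convex_Ioi 0)
      (fun r hr => (hΦd r hr).continuousAt.continuousWithinAt) ?_ ?_
    · rw [interior_Ioi]
      exact fun r hr => (hΦd r hr).differentiableAt.differentiableWithinAt
    · rw [interior_Ioi]
      intro r hr
      rw [(hΦd r hr).deriv]
      refine mul_nonpos_of_nonneg_of_nonpos (Real.rpow_nonneg (hvpos r (le_of_lt hr)).le q) ?_
      have := hineq r hr
      nlinarith [this]
  have hΦlim : Tendsto Φ atTop (nhds (ℓv ^ (q+1) / (q+1))) := by
    have hv2 : Tendsto (fun r => v r ^ (q+1)) atTop (nhds (ℓv ^ (q+1))) :=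
      ((Real.continuousAt_rpow_const ℓv (q+1) (Or.inr (by positivity))).tendsto).comp hvlim
    have hg2 : Tendsto (fun r => G r ^ (p+1)) atTop (nhds ((0:ℝ) ^ (p+1))) :=
      ((Real.continuousAt_rpow_const 0 (p+1) (Or.inr (by positivity))).tendsto).comp hGtend
    rw [Real.zero_rpow (by positivity)] at hg2
    have := (hv2.div_const (q+1)).sub (hg2.div_const (p+1))
    simpa using this
  have hΦkey : ∀ r > (0:ℝ), G r ^ (p+1) / (p+1) ≤ v r ^ (q+1) / (q+1) := by
    intro r hr
    have h1 : ℓv ^ (q+1) / (q+1) ≤ Φ r := by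
      refine le_of_tendsto hΦlim ?_
      filter_upwards [eventually_ge_atTop r] with s hs
      exact hΦanti hr (lt_of_lt_of_le hr hs) hs
    have h2 : (0:ℝ) ≤ ℓv ^ (q+1) / (q+1) := by positivity
    rw [hΦdef] at h1
    simp only [sub_nonneg] at h1 ⊢
    linarith
  -- consequence: v^q ≥ K G^α
  have hvqK : ∀ r > (0:ℝ), K * G r ^ α ≤ v r ^ q := by
    intro r hr
    have h1 : G r ^ (p+1) ≤ ((p+1)/(q+1)) * v r ^ (q+1) := by
      have := hΦkey r hr
      rw [div_le_div_iff₀ (by positivity) (by positivity)] at this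
      rw [div_mul_eq_mul_div, le_div_iff₀ hq1]
      linarith
    have h2 : (G r ^ (p+1)) ^ (q/(q+1)) ≤ (((p+1)/(q+1)) * v r ^ (q+1)) ^ (q/(q+1)) :=
      Real.rpow_le_rpow (Real.rpow_nonneg (hGpos r hr.le).le _) h1 (by positivity)
    rw [← Real.rpow_mul (hGpos r hr.le).le,
        Real.mul_rpow (by positivity) (Real.rpow_nonneg (hvpos r hr.le).le _),
        ← Real.rpow_mul (hvpos r hr.le).le] at h2
    have e1 : (p+1) * (q/(q+1)) = α := by rw [hαdef]; ring
    have e2 : (q+1) * (q/(q+1)) = q := by field_simp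
    rw [e1, e2] at h2
    calc K * G r ^ α ≤ K * (((p+1)/(q+1)) ^ (q/(q+1)) * v r ^ q) :=
          mul_le_mul_of_nonneg_left h2 hKpos.le
      _ = (K * ((p+1)/(q+1)) ^ (q/(q+1))) * v r ^ q := by ring
      _ = v r ^ q := by
          rw [hKdef, ← Real.mul_rpow (by positivity) (by positivity)]
          rw [div_mul_div_comm]
          rw [show (q+1) * (p+1) / ((p+1) * (q+1)) = 1 by field_simp]
          simp
  -- the function Ψ and its monotonicity
  set Ψ : ℝ → ℝ := fun r => G r ^ (1-α) - (α-1) * K * I r with hΨdef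
  have hΨd : ∀ r > (0:ℝ), HasDerivAt Ψ
      ((α-1) * (v r ^ q * Θ r * G r ^ (-α) - K * Θ r)) r := by
    intro r hr
    have hg2 : HasDerivAt (fun s => G s ^ (1-α)) (-(f r) * (1-α) * G r ^ (-α)) r := by
      have := (hGderiv r hr).rpow_const (p := 1-α) (Or.inl (hGpos r hr.le).ne')
      simpa [show (1:ℝ)-α-1 = -α by ring] using this
    have hI2 : HasDerivAt (fun s => (α-1) * K * I s) ((α-1) * K * Θ r) r :=
      (hIderiv r hr).const_mul _
    have := hg2.sub hI2
    refine this.congr_deriv ?_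
    rw [hfdef]; ring
  have hΨmono : MonotoneOn Ψ (Ioi (0:ℝ)) := by
    refine monotoneOn_of_deriv_nonneg (convex_Ioi 0)
      (fun r hr => (hΨd r hr).continuousAt.continuousWithinAt) ?_ ?_
    · rw [interior_Ioi]
      exact fun r hr => (hΨd r hr).differentiableAt.differentiableWithinAt
    · rw [interior_Ioi]
      intro r hr
      rw [(hΨd r hr).deriv]
      have hGinv : 0 < G r ^ (-α) := Real.rpow_pos_of_pos (hGpos r hr.le) _
      have h3 : K ≤ v r ^ q * G r ^ (-α) := by
        have := mul_le_mul_of_nonneg_right (hvqK r hr) hGinv.le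
        rwa [mul_assoc, ← Real.rpow_add (hGpos r hr.le), add_neg_cancel,
          Real.rpow_zero, mul_one] at this
      have hΘr : 0 < Θ r := hΘpos r hr
      have key : (α-1) * (v r ^ q * Θ r * G r ^ (-α) - K * Θ r)
          = (α-1) * Θ r * (v r ^ q * G r ^ (-α) - K) := by ring
      rw [key]
      exact mul_nonneg (mul_nonneg (by linarith) hΘr.le) (by linarith)
  have hΨkey : ∀ r > (0:ℝ), (α-1) * K * I r ≤ G r ^ (1-α) := by
    intro r hr
    have h0 : Tendsto (fun a => -((α-1) * K * I a)) (nhdsWithin 0 (Ioi 0)) (nhds 0) := by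
      have h1 : Tendsto I (nhds 0) (nhds (I 0)) := hIcont.continuousAt
      rw [show I 0 = 0 from intervalIntegral.integral_same] at h1
      have h2 := (h1.const_mul ((α-1)*K)).neg
      rw [mul_zero, neg_zero] at h2
      exact tendsto_nhdsWithin_of_tendsto_nhds h2
    have hΨr : (0:ℝ) ≤ Ψ r := by
      refine le_of_tendsto h0 ?_
      filter_upwards [Ioc_mem_nhdsGT_of_mem (Set.left_mem_Ico.2 hr)] with a ha
      have h4 : Ψ a ≤ Ψ r := hΨmono ha.1 hr ha.2
      have h5 : (0:ℝ) ≤ G a ^ (1-α) := Real.rpow_nonneg (hGpos a ha.1.le).le _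
      have h6 : Ψ a = G a ^ (1-α) - (α-1) * K * I a := rfl
      have h7 : Ψ r = G r ^ (1-α) - (α-1) * K * I r := rfl
      linarith
    have h8 : Ψ r = G r ^ (1-α) - (α-1) * K * I r := rfl
    linarith
  -- choice of the optimizing point r₀
  set I₀ : ℝ := (q+1)*θ/(q*(p+1)) with hI₀def
  have hI₀pos : 0 < I₀ := by positivity
  have hI₀lt : I₀ < θ := by
    rw [hI₀def, div_lt_iff₀ (by positivity)]
    nlinarith
  obtain ⟨a, ha⟩ := eventually_atTop.1 (hItend.eventually (eventually_gt_nhds hI₀lt))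
  set R : ℝ := max a 0 with hRdef
  have hR0 : (0:ℝ) ≤ R := le_max_right a 0
  have hIR : I₀ < I R := ha R (le_max_left a 0)
  have hmem : I₀ ∈ Icc (I 0) (I R) := by
    rw [show I 0 = 0 from intervalIntegral.integral_same]
    exact ⟨hI₀pos.le, hIR.le⟩
  obtain ⟨r₀, hr₀mem, hr₀⟩ := intermediate_value_Icc hR0 hIcont.continuousOn hmem
  have hr₀pos : 0 < r₀ := by
    rcases hr₀mem.1.lt_or_eq with h | h
    · exact h
    · exfalso
      rw [← h] at hr₀
      rw [show I 0 = 0 from intervalIntegral.integral_same] at hr₀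
      exact absurd hr₀.symm hI₀pos.ne'
  -- main chain of inequalities
  have h1 : (α-1) * K * I₀ ≤ G r₀ ^ (1-α) := hr₀ ▸ hΨkey r₀ hr₀pos
  have hD : (0:ℝ) < θ - I₀ := sub_pos.2 hI₀lt
  have h2 : ℓv ^ q * (θ - I₀) ≤ G r₀ := by
    have := hGlb r₀ hr₀pos.le
    rwa [hsplitΘ r₀ hr₀pos, hr₀] at this
  have hXpos : 0 < ℓv ^ q * (θ - I₀) := mul_pos (Real.rpow_pos_of_pos hl q) hD
  have h4 : (α-1) * K * I₀ ≤ (ℓv ^ q * (θ - I₀)) ^ (1-α) :=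
    h1.trans (Real.rpow_le_rpow_of_nonpos hXpos h2 (by linarith))
  have hc₀pos : 0 < (α-1) * K * I₀ :=
    mul_pos (mul_pos (sub_pos.2 hα1) hKpos) hI₀pos
  have h5 : (ℓv ^ q * (θ - I₀)) ^ (α-1) ≤ ((α-1)*K*I₀)⁻¹ := by
    rw [show (1:ℝ)-α = -(α-1) by ring, Real.rpow_neg hXpos.le] at h4
    have := inv_anti₀ hc₀pos h4
    rwa [inv_inv] at this
  have h6 : ℓv ^ (q*(α-1)) * (θ-I₀) ^ (α-1) ≤ ((α-1)*K*I₀)⁻¹ := by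
    rw [Real.mul_rpow (Real.rpow_nonneg hl.le q) hD.le, ← Real.rpow_mul hl.le] at h5
    exact h5
  have hDp : 0 < (θ-I₀) ^ (α-1) := Real.rpow_pos_of_pos hD _
  have h7 : ℓv ^ (q*(α-1)) ≤ ((α-1)*K*I₀)⁻¹ * ((θ-I₀) ^ (α-1))⁻¹ := by
    rw [← div_eq_mul_inv, le_div_iff₀ hDp]
    exact h6
  -- identify the right-hand side
  have halg := alg_aux p q θ hp hq hm hθpos
  rw [← hαdef, ← hKdef, ← hI₀def] at halg
  have hN : 0 < q * (α - 1) := mul_pos hq (sub_pos.2 hα1)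
  have hfin : ℓv ^ (q*(α-1)) ≤ (q ^ ((p + 1) / (p * q - 1)) * (p + 1) ^ ((p + 2) / (p * q - 1)) *
      (q + 1) ^ (-(1 / (p * q - 1))) * (p * q - 1) ^ (-((p + 1) / (p * q - 1))) *
      θ ^ (-((p + 1) / (p * q - 1)))) ^ (q*(α-1)) := by
    rw [halg]
    exact h7
  by_contra hcon
  push_neg at hcon
  have := Real.rpow_lt_rpow hRHSpos.le hcon hN
  exact absurd hfin (not_le.2 this)
end

section
/- Let f : [1,∞) → (0,∞) be C¹, increasing to infinity with f' > 0. Then ∫_1^∞ f(s)²/f'(s) ds = +∞. More precisely, for all r ≥ 1, ∫_r^∞ f²/f' ds ≥ f(r) ∫_r^∞ f/f' ds, and limsup_{r→∞} f(r)∫_r^∞ f/f' ds = +∞. -/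
open Filter MeasureTheory Set

/-- Elementary Cauchy–Schwarz-type inequality:
`(b-a)^2 ≤ (∫ g)(∫ g⁻¹)` for positive continuous `g` on `[a,b]`. -/
lemma cs_aux (g : ℝ → ℝ) (a b : ℝ) (hab : a < b) (hg : ContinuousOn g (Icc a b))
    (hpos : ∀ x ∈ Icc a b, 0 < g x) :
    (b - a) ^ 2 ≤ (∫ x in a..b, g x) * (∫ x in a..b, (g x)⁻¹) := by
  have huIcc : uIcc a b = Icc a b := uIcc_of_le hab.le
  have hgi : IntervalIntegrable g volume a b :=
    (hg.mono (by rw [huIcc])).intervalIntegrable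
  have hginv : ContinuousOn (fun x => (g x)⁻¹) (Icc a b) :=
    hg.inv₀ (fun x hx => (hpos x hx).ne')
  have hgii : IntervalIntegrable (fun x => (g x)⁻¹) volume a b :=
    (hginv.mono (by rw [huIcc])).intervalIntegrable
  set A := ∫ x in a..b, g x with hA
  set B := ∫ x in a..b, (g x)⁻¹ with hB
  have hApos : 0 < A :=
    intervalIntegral.intervalIntegral_pos_of_pos_on hgi
      (fun x hx => hpos x (Ioo_subset_Icc_self hx)) hab
  set t := (b - a) / A with ht
  have htpos : 0 < t := div_pos (by linarith) hApos
  have hpt : ∀ x ∈ Icc a b, (2:ℝ) ≤ t * g x + t⁻¹ * (g x)⁻¹ := by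
    intro x hx
    have hgx := hpos x hx
    have h1 : t⁻¹ * (g x)⁻¹ = (t * g x)⁻¹ := by rw [mul_inv]
    rw [h1]
    have htg : 0 < t * g x := mul_pos htpos hgx
    have := sq_nonneg (t * g x - 1)
    have h2 : (t * g x)⁻¹ * (t * g x) = 1 := inv_mul_cancel₀ htg.ne'
    nlinarith
  have hint : ∫ x in a..b, (2:ℝ) ≤ ∫ x in a..b, (t * g x + t⁻¹ * (g x)⁻¹) := by
    apply intervalIntegral.integral_mono_on hab.le intervalIntegrable_const _ hpt
    exact (hgi.const_mul t).add (hgii.const_mul t⁻¹)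
  rw [intervalIntegral.integral_const, intervalIntegral.integral_add (hgi.const_mul t)
    (hgii.const_mul t⁻¹), intervalIntegral.integral_const_mul,
    intervalIntegral.integral_const_mul] at hint
  have h2 : 2 * (b - a) ≤ t * A + t⁻¹ * B := by
    rw [hA, hB]; simpa [smul_eq_mul, mul_comm] using hint
  have htinv : t⁻¹ = A / (b - a) := by rw [ht, inv_div]
  rw [ht, htinv] at h2
  have hba : 0 < b - a := by linarith
  have h3 : (b - a) / A * A = b - a := div_mul_cancel₀ _ hApos.ne'
  rw [h3] at h2
  have h4 : (b - a) ≤ A / (b - a) * B := by linarith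
  calc (b - a)^2 = (b-a) * (b-a) := sq (b-a) ▸ by ring
    _ ≤ (A / (b-a) * B) * (b - a) := by nlinarith
    _ = A * B := by field_simp

/-- Blow-up sequence used in the proof below. -/
noncomputable def blowSeq (C : ℝ) (f : ℝ → ℝ) (R : ℝ) : ℕ → ℝ
  | 0 => R
  | n + 1 => blowSeq C f R n + Real.sqrt (2 * C / f (blowSeq C f R n))

lemma blowSeq_zero (C : ℝ) (f : ℝ → ℝ) (R : ℝ) : blowSeq C f R 0 = R := rfl

lemma blowSeq_succ (C : ℝ) (f : ℝ → ℝ) (R : ℝ) (n : ℕ) :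
    blowSeq C f R (n + 1) = blowSeq C f R n + Real.sqrt (2 * C / f (blowSeq C f R n)) := rfl

lemma blowup_contradiction (f : ℝ → ℝ) (R C : ℝ) (hR1 : (1:ℝ) ≤ R) (hCpos : (0:ℝ) < C)
    (hfpos : ∀ x ∈ Ici (1:ℝ), 0 < f x)
    (hmono : MonotoneOn f (Ici (1:ℝ)))
    (hkey : ∀ r ≥ R, ∀ δ > (0:ℝ),
      Real.log (f r) + δ ^ 2 * f r / C ≤ Real.log (f (r + δ))) :
    False := by
  -- blow-up sequence
  set seq : ℕ → ℝ := blowSeq C f R with hseqdef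
  have hseq0 : seq 0 = R := blowSeq_zero C f R
  have hseqS : ∀ n, seq (n + 1) = seq n + Real.sqrt (2 * C / f (seq n)) :=
    blowSeq_succ C f R
  set K := Real.sqrt (2 * C / f R) with hK
  have hKnn : 0 ≤ K := Real.sqrt_nonneg _
  have hfR : 0 < f R := hfpos R hR1
  have hinvar : ∀ n : ℕ, R ≤ seq n ∧ f R * 4 ^ n ≤ f (seq n) ∧
      seq n + 2 * K * (1/2 : ℝ) ^ n ≤ R + 2 * K := by
    intro n
    induction n with
    | zero => refine ⟨le_rfl, by simp [hseq0], by simp [hseq0]⟩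
    | succ n ih =>
      obtain ⟨h1, h2, h3⟩ := ih
      have hs1 : (1:ℝ) ≤ seq n := le_trans hR1 h1
      have hfs : 0 < f (seq n) := hfpos _ hs1
      set δ := Real.sqrt (2 * C / f (seq n)) with hδ
      have hargpos : 0 < 2 * C / f (seq n) := div_pos (by linarith) hfs
      have hδpos : 0 < δ := Real.sqrt_pos.2 hargpos
      have hδsq : δ ^ 2 = 2 * C / f (seq n) := Real.sq_sqrt hargpos.le
      have hk := hkey (seq n) h1 δ hδpos
      have h2C : δ ^ 2 * f (seq n) / C = 2 := by
        rw [hδsq]; field_simp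
      rw [h2C] at hk
      have hs1' : (1:ℝ) ≤ seq n + δ := by linarith
      have hf' : 0 < f (seq n + δ) := hfpos _ hs1'
      have hexp2 : (4:ℝ) ≤ Real.exp 2 := by
        have he := Real.exp_one_gt_d9
        have h2e : Real.exp 2 = Real.exp 1 * Real.exp 1 := by
          rw [← Real.exp_add]; norm_num
        nlinarith
      have hgrow : f (seq n) * Real.exp 2 ≤ f (seq n + δ) := by
        calc f (seq n) * Real.exp 2 = Real.exp (Real.log (f (seq n)) + 2) := by
              rw [Real.exp_add, Real.exp_log hfs]
          _ ≤ Real.exp (Real.log (f (seq n + δ))) := Real.exp_le_exp.2 hk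
          _ = f (seq n + δ) := Real.exp_log hf'
      have hgrow4 : f R * 4 ^ (n + 1) ≤ f (seq n + δ) := by
        have h4n : (0:ℝ) < 4 ^ n := by positivity
        calc f R * 4 ^ (n + 1) = (f R * 4 ^ n) * 4 := by ring
          _ ≤ f (seq n) * 4 := by nlinarith
          _ ≤ f (seq n) * Real.exp 2 := by nlinarith
          _ ≤ f (seq n + δ) := hgrow
      have hδle : δ ≤ K * (1/2 : ℝ) ^ n := by
        have hpow : (0:ℝ) < 4 ^ n := by positivity
        have hdenpos : 0 < f R * 4 ^ n := by positivity
        have harg : 2 * C / f (seq n) ≤ (2 * C / f R) * ((1/2 : ℝ) ^ n) ^ 2 := by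
          have heq : (2 * C / f R) * ((1/2 : ℝ) ^ n) ^ 2 = 2 * C / (f R * 4 ^ n) := by
            rw [div_mul_eq_mul_div, div_eq_div_iff hfR.ne' hdenpos.ne']
            have : ((1/2 : ℝ) ^ n) ^ 2 * 4 ^ n = 1 := by
              rw [← pow_mul, mul_comm n 2, pow_mul, ← mul_pow]
              norm_num
            linear_combination (2 * C * f R) * this
          rw [heq]
          exact div_le_div_of_nonneg_left (by linarith) hdenpos (by nlinarith)
        calc δ ≤ Real.sqrt ((2 * C / f R) * ((1/2 : ℝ) ^ n) ^ 2) :=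
              Real.sqrt_le_sqrt harg
          _ = K * (1/2 : ℝ) ^ n := by
              rw [Real.sqrt_mul (by positivity), Real.sqrt_sq (by positivity)]
      refine ⟨by rw [hseqS]; linarith, by rw [hseqS]; exact hgrow4, ?_⟩
      rw [hseqS]
      have hhalf : (2 : ℝ) * K * (1/2 : ℝ) ^ (n + 1) = K * (1/2 : ℝ) ^ n := by
        rw [pow_succ]; ring
      rw [hhalf]
      have : 2 * K * (1/2 : ℝ) ^ n = K * (1/2:ℝ)^n + K * (1/2:ℝ)^n := by ring
      linarith [h3, hδle]
  -- contradiction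
  set M := R + 2 * K with hM
  have hM1 : (1:ℝ) ≤ M := by rw [hM]; linarith
  have hub : ∀ n : ℕ, f R * 4 ^ n ≤ f M := by
    intro n
    obtain ⟨h1, h2, h3⟩ := hinvar n
    have hs1 : (1:ℝ) ≤ seq n := le_trans hR1 h1
    have hpow : (0:ℝ) ≤ 2 * K * (1/2 : ℝ) ^ n := by positivity
    exact le_trans h2 (hmono hs1 hM1 (by linarith))
  obtain ⟨n, hn⟩ := exists_nat_gt (f M / f R)
  have h4n : (n:ℝ) < 4 ^ n := by
    exact_mod_cast Nat.lt_pow_self (n := n) (a := 4) (by norm_num)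
  have hcontra : f M < f R * 4 ^ n := by
    calc f M = f R * (f M / f R) := by field_simp
      _ < f R * n := by exact mul_lt_mul_of_pos_left hn hfR
      _ < f R * 4 ^ n := mul_lt_mul_of_pos_left h4n hfR
  linarith [hub n]

/-- For `f` C¹, positive, increasing to infinity with `f' > 0` on `[1,∞)`:
`∫_1^∞ f²/f' = ∞`, the pointwise bound `∫_r^∞ f²/f' ≥ f(r) ∫_r^∞ f/f'`, and
`limsup_{r→∞} f(r) ∫_r^∞ f/f' = ∞`. -/
theorem divergence_of_volume_integral
    (f f' : ℝ → ℝ)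
    (hderiv : ∀ x ∈ Ici (1:ℝ), HasDerivAt f (f' x) x)
    (hf'cont : ContinuousOn f' (Ici (1:ℝ)))
    (hfpos : ∀ x ∈ Ici (1:ℝ), 0 < f x)
    (hf'pos : ∀ x ∈ Ici (1:ℝ), 0 < f' x)
    (htop : Tendsto f atTop atTop) :
    (∫⁻ s in Ioi (1:ℝ), ENNReal.ofReal (f s ^ 2 / f' s)) = ⊤ ∧
    (∀ r ≥ (1:ℝ),
      ENNReal.ofReal (f r) * ∫⁻ s in Ioi r, ENNReal.ofReal (f s / f' s) ≤
        ∫⁻ s in Ioi r, ENNReal.ofReal (f s ^ 2 / f' s)) ∧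
    Filter.limsup
      (fun r : ℝ => ENNReal.ofReal (f r) * ∫⁻ s in Ioi r, ENNReal.ofReal (f s / f' s))
      atTop = ⊤ := by
  have hfc : ContinuousOn f (Ici (1:ℝ)) :=
    fun x hx => (hderiv x hx).continuousAt.continuousWithinAt
  have hmono : MonotoneOn f (Ici (1:ℝ)) := by
    apply (strictMonoOn_of_deriv_pos (convex_Ici 1) hfc ?_).monotoneOn
    intro x hx
    rw [interior_Ici] at hx
    rw [(hderiv x (mem_Ici.2 (le_of_lt hx))).deriv]
    exact hf'pos x (mem_Ici.2 (le_of_lt hx))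
  set u : ℝ → ENNReal :=
    fun r => ENNReal.ofReal (f r) * ∫⁻ s in Ioi r, ENNReal.ofReal (f s / f' s) with hu
  -- Claim 2
  have hclaim2 : ∀ r ≥ (1:ℝ),
      ENNReal.ofReal (f r) * ∫⁻ s in Ioi r, ENNReal.ofReal (f s / f' s) ≤
        ∫⁻ s in Ioi r, ENNReal.ofReal (f s ^ 2 / f' s) := by
    intro r hr
    rw [← lintegral_const_mul' _ _ ENNReal.ofReal_ne_top]
    refine lintegral_mono_ae ((ae_restrict_iff' measurableSet_Ioi).2 ?_)
    filter_upwards with s hs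
    have hs1 : (1:ℝ) ≤ s := le_trans hr hs.le
    rw [← ENNReal.ofReal_mul (hfpos r hr).le]
    apply ENNReal.ofReal_le_ofReal
    have hfr : f r ≤ f s := hmono hr hs1 hs.le
    have h0 : 0 ≤ f s / f' s := div_nonneg (hfpos s hs1).le (hf'pos s hs1).le
    calc f r * (f s / f' s) ≤ f s * (f s / f' s) := mul_le_mul_of_nonneg_right hfr h0
      _ = f s ^ 2 / f' s := by rw [mul_div_assoc', ← sq]
  -- Claim 3
  have hclaim3 : Filter.limsup u atTop = ⊤ := by
    by_contra hne
    have hCtopne : limsup u atTop + 1 ≠ ⊤ := ENNReal.add_ne_top.2 ⟨hne, ENNReal.one_ne_top⟩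
    have hlt : limsup u atTop < limsup u atTop + 1 :=
      ENNReal.lt_add_right hne one_ne_zero
    obtain ⟨R₀, hR₀⟩ := Filter.eventually_atTop.1 (Filter.eventually_lt_of_limsup_lt hlt)
    set Ctop := limsup u atTop + 1 with hCtop
    set R := max R₀ 1 with hRdef
    have hR1 : (1:ℝ) ≤ R := le_max_right _ _
    have hbound : ∀ r ≥ R, u r < Ctop := fun r hr => hR₀ r (le_trans (le_max_left _ _) hr)
    set C := max Ctop.toReal 1 with hCdef
    have hCpos : (0:ℝ) < C := lt_of_lt_of_le one_pos (le_max_right _ _)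
    have hHfin : ∀ r ≥ R, (∫⁻ s in Ioi r, ENNReal.ofReal (f s / f' s)) ≠ ⊤ := by
      intro r hr
      intro htopH
      have hr1 : (1:ℝ) ≤ r := le_trans hR1 hr
      have : u r = ⊤ := by
        rw [hu]
        simp only []
        rw [htopH, ENNReal.mul_top]
        simp [ENNReal.ofReal_eq_zero, not_le, hfpos r hr1]
      exact (lt_irrefl ⊤) (this ▸ lt_of_lt_of_le (hbound r hr) le_top)
    set H : ℝ → ℝ := fun r => (∫⁻ s in Ioi r, ENNReal.ofReal (f s / f' s)).toReal with hH
    have hbound' : ∀ r ≥ R, f r * H r ≤ C := by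
      intro r hr
      have hr1 : (1:ℝ) ≤ r := le_trans hR1 hr
      have h1 : ENNReal.ofReal (f r * H r) ≤ Ctop := by
        rw [ENNReal.ofReal_mul (hfpos r hr1).le, hH]
        rw [ENNReal.ofReal_toReal (hHfin r hr)]
        exact (hbound r hr).le
      calc f r * H r = (ENNReal.ofReal (f r * H r)).toReal :=
            (ENNReal.toReal_ofReal (mul_nonneg (hfpos r hr1).le ENNReal.toReal_nonneg)).symm
        _ ≤ Ctop.toReal := ENNReal.toReal_mono hCtopne h1
        _ ≤ C := le_max_left _ _
    -- key increment inequality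
    have hkey : ∀ r ≥ R, ∀ δ > (0:ℝ),
        Real.log (f r) + δ ^ 2 * f r / C ≤ Real.log (f (r + δ)) := by
      intro r hr δ hδ
      have hr1 : (1:ℝ) ≤ r := le_trans hR1 hr
      have hsub : Icc r (r + δ) ⊆ Ici (1:ℝ) := fun x hx => le_trans hr1 hx.1
      set g : ℝ → ℝ := fun s => f' s / f s with hg
      have hgc : ContinuousOn g (Icc r (r + δ)) :=
        (hf'cont.mono hsub).div (hfc.mono hsub) (fun x hx => (hfpos x (hsub hx)).ne')
      have hgpos : ∀ x ∈ Icc r (r + δ), 0 < g x :=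
        fun x hx => div_pos (hf'pos x (hsub hx)) (hfpos x (hsub hx))
      have hcs := cs_aux g r (r + δ) (by linarith) hgc hgpos
      have huIcc : uIcc r (r + δ) = Icc r (r + δ) := uIcc_of_le (by linarith)
      have hftc : ∫ x in r..(r + δ), g x = Real.log (f (r + δ)) - Real.log (f r) :=
        intervalIntegral.integral_eq_sub_of_hasDerivAt
          (f := fun y => Real.log (f y)) (f' := g)
          (fun x hx => by
            rw [huIcc] at hx
            exact (hderiv x (hsub hx)).log (hfpos x (hsub hx)).ne')
          ((hgc.mono (by rw [huIcc])).intervalIntegrable)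
      have hinv : ∫ x in r..(r + δ), (g x)⁻¹ = ∫ x in r..(r + δ), f x / f' x := by
        apply intervalIntegral.integral_congr
        intro x _
        simp [hg, inv_div]
      have hffc : ContinuousOn (fun x => f x / f' x) (Icc r (r + δ)) :=
        (hfc.mono hsub).div (hf'cont.mono hsub) (fun x hx => (hf'pos x (hsub hx)).ne')
      have hle : ∫ x in r..(r + δ), f x / f' x ≤ H r := by
        have hInt : IntegrableOn (fun x => f x / f' x) (Ioc r (r + δ)) :=
          (hffc.integrableOn_compact isCompact_Icc).mono_set Ioc_subset_Icc_self
        have hofReal : ENNReal.ofReal (∫ x in Ioc r (r + δ), f x / f' x) =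
            ∫⁻ x in Ioc r (r + δ), ENNReal.ofReal (f x / f' x) := by
          apply ofReal_integral_eq_lintegral_ofReal hInt
          refine (ae_restrict_iff' measurableSet_Ioc).2 ?_
          filter_upwards with x hx
          have hx1 : (1:ℝ) ≤ x := le_trans hr1 hx.1.le
          exact div_nonneg (hfpos x hx1).le (hf'pos x hx1).le
        have h2 : (∫⁻ x in Ioc r (r + δ), ENNReal.ofReal (f x / f' x)) ≤
            ∫⁻ x in Ioi r, ENNReal.ofReal (f x / f' x) :=
          lintegral_mono_set Ioc_subset_Ioi_self
        have h3 : ENNReal.ofReal (∫ x in Ioc r (r + δ), f x / f' x) ≤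
            ENNReal.ofReal (H r) := by
          rw [hofReal, hH, ENNReal.ofReal_toReal (hHfin r hr)]
          exact h2
        have h4 := (ENNReal.ofReal_le_ofReal_iff ENNReal.toReal_nonneg).1 h3
        rw [intervalIntegral.integral_of_le (by linarith : r ≤ r + δ)]
        exact h4
      rw [hftc, hinv] at hcs
      have hrmem : r ∈ Ici (1:ℝ) := hr1
      have hrdmem : r + δ ∈ Ici (1:ℝ) := by simp only [mem_Ici]; linarith
      have hfmono : f r ≤ f (r + δ) := hmono hrmem hrdmem (by linarith)
      have hlogpos : 0 ≤ Real.log (f (r + δ)) - Real.log (f r) := by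
        have := Real.log_le_log (hfpos r hr1) hfmono
        linarith
      have hc2 : δ ^ 2 ≤ (Real.log (f (r + δ)) - Real.log (f r)) * H r := by
        calc δ ^ 2 = (r + δ - r) ^ 2 := by ring_nf
          _ ≤ (Real.log (f (r + δ)) - Real.log (f r)) * ∫ x in r..(r + δ), f x / f' x := hcs
          _ ≤ (Real.log (f (r + δ)) - Real.log (f r)) * H r :=
              mul_le_mul_of_nonneg_left hle hlogpos
      have hfr : 0 < f r := hfpos r hr1
      have hHle : H r ≤ C / f r := by
        rw [le_div_iff₀ hfr]
        calc H r * f r = f r * H r := mul_comm _ _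
          _ ≤ C := hbound' r hr
      have hc3 : δ ^ 2 ≤ (Real.log (f (r + δ)) - Real.log (f r)) * (C / f r) :=
        le_trans hc2 (mul_le_mul_of_nonneg_left hHle hlogpos)
      have h5 : (Real.log (f (r + δ)) - Real.log (f r)) * (C / f r) * f r =
          (Real.log (f (r + δ)) - Real.log (f r)) * C := by field_simp
      have h6 : δ ^ 2 * f r / C ≤ Real.log (f (r + δ)) - Real.log (f r) := by
        rw [div_le_iff₀ hCpos]
        nlinarith [mul_le_mul_of_nonneg_right hc3 hfr.le]
      linarith
    exact blowup_contradiction f R C hR1 hCpos hfpos hmono hkey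
  refine ⟨?_, hclaim2, hclaim3⟩
  -- Claim 1 from claims 2 and 3
  have hle : ∀ᶠ r in atTop, u r ≤ ∫⁻ s in Ioi (1:ℝ), ENNReal.ofReal (f s ^ 2 / f' s) := by
    rw [eventually_atTop]
    refine ⟨1, fun r hr => ?_⟩
    exact le_trans (hclaim2 r hr) (lintegral_mono_set (Ioi_subset_Ioi hr))
  have := Filter.limsup_le_of_le (by isBoundedDefault) hle
  rw [hclaim3] at this
  exact top_le_iff.1 this
end

section
/- Let ψ, u, v be as in the radial Lane-Emden system with u > 0 decreasing and lim_{r→∞} u(r) = 0. Suppose ∫_0^∞ u'v' ψ^{n-1} dr < ∞ and that there exist r₁, K₁ > 0 with ψ^{n-1}(r)u(r)v'(r) ≤ -K₁ for all r ≥ r₁. Then a contradiction follows: dividing gives ψ^{n-1}u'v' ≥ -K₁ u'/u on [r₁,∞), and integrating yields ∫_{r₁}^r u'v' ψ^{n-1} ds ≥ K₁ log(u(r₁)/u(r)) → +∞ as r → ∞. Hence if ψ^{n-1}uv' ≤ -K₁ eventually and u → 0, then ∫_0^∞ u'v' ψ^{n-1} dr = +∞. -/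
open Filter MeasureTheory Set

/-- Logarithmic divergence: if `ψ^{n-1} u v' ≤ -K₁` eventually and `u → 0` at infinity,
then the energy `∫_0^∞ u'v' ψ^{n-1}` is infinite. -/
theorem energy_infinite_of_log_divergence
    (n : ℕ) (hn : 3 ≤ n) (ψ : ℝ → ℝ)
    (hψpos : ∀ r > (0:ℝ), 0 < ψ r)
    (u v u' v' : ℝ → ℝ)
    (hupos : ∀ r ≥ (0:ℝ), 0 < u r) (hvpos : ∀ r ≥ (0:ℝ), 0 < v r)
    (hu'neg : ∀ r > (0:ℝ), u' r < 0) (hv'neg : ∀ r > (0:ℝ), v' r < 0)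
    (hud : ∀ r > (0:ℝ), HasDerivAt u (u' r) r)
    (hvd : ∀ r > (0:ℝ), HasDerivAt v (v' r) r)
    (huanti : AntitoneOn u (Ici 0))
    (hulim : Tendsto u atTop (nhds 0))
    (r₁ K₁ : ℝ) (hr₁ : 0 < r₁) (hK₁ : 0 < K₁)
    (hbound : ∀ r ≥ r₁, ψ r ^ (n-1) * u r * v' r ≤ -K₁) :
    (∫⁻ r in Ioi (0:ℝ), ENNReal.ofReal (u' r * v' r * ψ r ^ (n-1))) = ⊤ := by
  by_contra htop
  -- the measurable minorant
  set g : ℝ → ℝ := fun r => K₁ * (-(deriv u r) / u r) with hg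
  have hderiv_eq : ∀ r > (0:ℝ), deriv u r = u' r := fun r hr => (hud r hr).deriv
  -- pointwise bound on Ioi r₁ : g ≤ u'v'ψ^{n-1}
  have hpt : ∀ r ∈ Ioi r₁, g r ≤ u' r * v' r * ψ r ^ (n-1) := by
    intro r hr
    have hrr₁ : r₁ ≤ r := le_of_lt hr
    have hr0 : 0 < r := lt_trans hr₁ hr
    have hu : 0 < u r := hupos r hr0.le
    have hu' : u' r < 0 := hu'neg r hr0
    have hb := hbound r hrr₁
    -- ψ^{n-1} v' ≤ -K₁ / u
    have h1 : ψ r ^ (n-1) * v' r ≤ -K₁ / u r := by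
      rw [le_div_iff₀ hu]
      nlinarith [hb]
    -- multiply by u' < 0
    have h2 : u' r * (-K₁ / u r) ≤ u' r * (ψ r ^ (n-1) * v' r) :=
      mul_le_mul_of_nonpos_left h1 hu'.le
    have : g r = u' r * (-K₁ / u r) := by
      simp only [hg, hderiv_eq r hr0]; ring
    rw [this]
    calc u' r * (-K₁ / u r) ≤ u' r * (ψ r ^ (n-1) * v' r) := h2
      _ = u' r * v' r * ψ r ^ (n-1) := by ring
  have hg_nonneg : ∀ r ∈ Ioi r₁, 0 ≤ g r := by
    intro r hr
    have hr0 : 0 < r := lt_trans hr₁ hr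
    have : deriv u r = u' r := hderiv_eq r hr0
    have hu' : u' r < 0 := hu'neg r hr0
    have hu : 0 < u r := hupos r hr0.le
    rw [hg]; simp only [this]
    exact mul_nonneg hK₁.le (div_nonneg (neg_nonneg.2 hu'.le) hu.le)
  -- lintegral of g over Ioi r₁ is finite
  have hsub : Ioi r₁ ⊆ Ioi (0:ℝ) := Ioi_subset_Ioi hr₁.le
  have hmono : (∫⁻ r in Ioi r₁, ENNReal.ofReal (g r)) ≤
      ∫⁻ r in Ioi (0:ℝ), ENNReal.ofReal (u' r * v' r * ψ r ^ (n-1)) := by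
    refine le_trans ?_ (lintegral_mono_set hsub)
    refine lintegral_mono_ae ?_
    filter_upwards [ae_restrict_mem measurableSet_Ioi] with r hr
    exact ENNReal.ofReal_le_ofReal (hpt r hr)
  have hfin : (∫⁻ r in Ioi r₁, ENNReal.ofReal (g r)) < ⊤ :=
    lt_of_le_of_lt hmono (lt_top_iff_ne_top.2 htop)
  -- measurability of g on Ioi r₁
  have hu_cont : ContinuousOn u (Ioi (0:ℝ)) := fun r hr =>
    ((hud r hr).continuousAt).continuousWithinAt
  have hg_meas : AEMeasurable g (volume.restrict (Ioi r₁)) := by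
    have h1 : AEMeasurable (deriv u) (volume.restrict (Ioi r₁)) :=
      (measurable_deriv u).aemeasurable
    have h2 : AEMeasurable u (volume.restrict (Ioi r₁)) :=
      ((hu_cont.mono hsub).aemeasurable measurableSet_Ioi)
    exact (aemeasurable_const.mul (h1.neg.div h2))
  -- g is integrable on Ioi r₁
  have hg_nonneg_ae : 0 ≤ᵐ[volume.restrict (Ioi r₁)] g := by
    filter_upwards [ae_restrict_mem measurableSet_Ioi] with r hr
    exact hg_nonneg r hr
  have hg_int : IntegrableOn g (Ioi r₁) := by
    refine ⟨hg_meas.aestronglyMeasurable, ?_⟩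
    rw [hasFiniteIntegral_iff_ofReal hg_nonneg_ae]
    exact hfin
  set C : ℝ := ∫ r in Ioi r₁, g r with hC
  -- FTC on [r₁, R]
  have hftc : ∀ R ≥ r₁, K₁ * (Real.log (u r₁) - Real.log (u R)) ≤ C := by
    intro R hR
    have hii : IntervalIntegrable g volume r₁ R := by
      rw [intervalIntegrable_iff_integrableOn_Ioc_of_le hR]
      exact hg_int.mono_set Ioc_subset_Ioi_self
    have hF : ∀ x ∈ uIcc r₁ R, HasDerivAt (fun r => K₁ * (-Real.log (u r))) (g x) x := by
      intro x hx
      rw [uIcc_of_le hR] at hx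
      have hx0 : 0 < x := lt_of_lt_of_le hr₁ hx.1
      have hux : 0 < u x := hupos x hx0.le
      have hlog : HasDerivAt (fun r => Real.log (u r)) ((u x)⁻¹ * u' x) x :=
        (Real.hasDerivAt_log (ne_of_gt hux)).comp x (hud x hx0)
      have : HasDerivAt (fun r => K₁ * (-Real.log (u r))) (K₁ * -((u x)⁻¹ * u' x)) x :=
        (hlog.neg).const_mul K₁
      convert this using 1
      show K₁ * (-(deriv u x) / u x) = _
      rw [hderiv_eq x hx0]
      ring
    have heq : ∫ r in r₁..R, g r = K₁ * (-Real.log (u R)) - K₁ * (-Real.log (u r₁)) :=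
      intervalIntegral.integral_eq_sub_of_hasDerivAt hF hii
    have hle : ∫ r in r₁..R, g r ≤ C := by
      rw [intervalIntegral.integral_of_le hR]
      exact setIntegral_mono_set hg_int hg_nonneg_ae
        (HasSubset.Subset.eventuallyLE Ioc_subset_Ioi_self)
    rw [heq] at hle
    linarith
  -- log (u R) → -∞, contradiction
  have hlogtop : Tendsto (fun R => Real.log (u R)) atTop atBot := by
    have h1 : Tendsto u atTop (nhdsWithin 0 (Ioi 0)) := by
      refine tendsto_nhdsWithin_iff.2 ⟨hulim, ?_⟩
      filter_upwards [eventually_ge_atTop (0:ℝ)] with r hr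
      exact hupos r hr
    exact Real.tendsto_log_nhdsGT_zero.comp h1
  obtain ⟨R, hR1, hR2⟩ := ((hlogtop.eventually
    (eventually_lt_atBot (Real.log (u r₁) - C / K₁))).and
    (eventually_ge_atTop r₁)).exists
  have h1 := hftc R hR2
  have h3 : C / K₁ < Real.log (u r₁) - Real.log (u R) := by linarith
  have h4 : C < K₁ * (Real.log (u r₁) - Real.log (u R)) := (div_lt_iff₀' hK₁).mp h3
  linarith
end
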